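/- arXiv:0811.3975 — 2 statements merged into one kernel-verified Lean document; each statement's English description precedes it below -/
import Mathlib

section
/- Let 𝓛 be an upward-closed collection of subsets of K (L ∈ 𝓛 and L ⊆ L' ⊆ K imply L' ∈ 𝓛) such that every support in 𝓛 is positively winning for player 2 in the original game. Then every support that is positively winning for player 2 in the 𝓛-game is positively winning for player 2 in the original game as well. -/
open scoped Classical

noncomputable section

/-- A probability distribution on a finite type, given by a nonnegative
real-valued density summing to `1`. -/
structure FDist (X : Type*) [Fintype X] where
  f : X → ℝ
  nonneg : ∀ x, 0 ≤ f x
  sum_one : ∑ x, f x = 1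

/-- The support of a distribution: the set of points with positive probability. -/
def FDist.support {X : Type*} [Fintype X] (δ : FDist X) : Finset X :=
  Finset.univ.filter fun x => 0 < δ.f x

/-- The uniform distribution on a nonempty finite set. -/
def uniform {X : Type*} [Fintype X] (L : Finset X) (hL : L.Nonempty) : FDist X where
  f x := if x ∈ L then (L.card : ℝ)⁻¹ else 0
  nonneg x := by split_ifs <;> positivity
  sum_one := by
    rw [Finset.sum_ite_mem, Finset.univ_inter, Finset.sum_const, nsmul_eq_mul,
      mul_inv_cancel₀]
    exact_mod_cast (Finset.card_pos.mpr hL).ne'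

/-- Uniform distribution on `L`, defaulting to the uniform distribution on the
whole type when `L` is empty. -/
def uniformD {X : Type*} [Fintype X] [Nonempty X] (L : Finset X) : FDist X :=
  if h : L.Nonempty then uniform L h else uniform Finset.univ Finset.univ_nonempty

/-- The Dirac distribution on a point. -/
def dirac {X : Type*} [Fintype X] (x : X) : FDist X where
  f y := if y = x then 1 else 0
  nonneg y := by by_cases h : y = x <;> simp [h]
  sum_one := by simp

/-- A stochastic game with partial observation on both sides and a reachability
objective for player 1: states `K`, actions `I`, `J`, signals `C`, `D`, target
states `T`, transition probabilities `p`, and actions encoded in signals via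
`act₁`, `act₂`. -/
structure Game (K I J C D : Type*) [Fintype K] [Fintype I] [Fintype J] [Fintype C] [Fintype D] where
  T : Finset K
  p : K → I → J → C × D × K → ℝ
  p_nonneg : ∀ k i j x, 0 ≤ p k i j x
  p_sum : ∀ k i j, ∑ x : C × D × K, p k i j x = 1
  act₁ : C → I
  act₂ : D → J
  act_compat : ∀ k i j c d l, 0 < p k i j (c, d, l) → i = act₁ c ∧ j = act₂ d

/-- A (behavioral) strategy of player 1: a distribution on actions for each
finite sequence of received signals. -/
abbrev Strategy1 (I C : Type*) [Fintype I] : Type _ := List C → FDist I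

/-- A (behavioral) strategy of player 2. -/
abbrev Strategy2 (J D : Type*) [Fintype J] : Type _ := List D → FDist J

/-- A play with `n+1` states: the initial state followed by `n` steps, each
consisting of a signal for player 1, a signal for player 2 and the next state. -/
structure Hist (K C D : Type*) (n : ℕ) where
  first : K
  steps : Fin n → C × D × K

instance (K C D : Type*) [Fintype K] [Fintype C] [Fintype D] (n : ℕ) :
    Fintype (Hist K C D n) :=
  Fintype.ofEquiv (K × (Fin n → C × D × K))
    { toFun := fun x => ⟨x.1, x.2⟩
      invFun := fun h => (h.first, h.steps)
      left_inv := fun _ => rfl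
      right_inv := fun _ => rfl }

namespace Hist

variable {K C D : Type*}

/-- The last state of a play. -/
def last : ∀ {n : ℕ}, Hist K C D n → K
  | 0, h => h.first
  | n + 1, h => (h.steps (Fin.last n)).2.2

/-- The play obtained by removing the last step. -/
def init {n : ℕ} (h : Hist K C D (n + 1)) : Hist K C D n :=
  ⟨h.first, fun m => h.steps m.castSucc⟩

/-- The `m`-th state of a play, `0`-indexed: `state h 0` is the initial state
(called `k₁` in `1`-indexed notation). -/
def state {n : ℕ} (h : Hist K C D n) (m : Fin (n + 1)) : K :=
  if hm : m.val = 0 then h.first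
  else (h.steps ⟨m.val - 1, by have := m.isLt; omega⟩).2.2

/-- The sequence of signals received by player 1 along the play. -/
def sig1 {n : ℕ} (h : Hist K C D n) : List C := List.ofFn fun m => (h.steps m).1

/-- The sequence of signals received by player 2 along the play. -/
def sig2 {n : ℕ} (h : Hist K C D n) : List D := List.ofFn fun m => (h.steps m).2.1

/-- The play visits the target set `T`. -/
def visits (T : Finset K) {n : ℕ} (h : Hist K C D n) : Prop :=
  ∃ m : Fin (n + 1), h.state m ∈ T

end Hist

namespace Game

variable {K I J C D : Type*} [Fintype K] [Fintype I] [Fintype J] [Fintype C] [Fintype D]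

/-- The probability of a given play of `n` steps, under initial distribution `δ`
and strategies `σ`, `τ`. -/
def playProb (G : Game K I J C D) (δ : FDist K) (σ : Strategy1 I C) (τ : Strategy2 J D) :
    ∀ n : ℕ, Hist K C D n → ℝ
  | 0, h => δ.f h.first
  | n + 1, h =>
      G.playProb δ σ τ n h.init *
        ∑ i : I, ∑ j : J,
          (σ h.init.sig1).f i * (τ h.init.sig2).f j *
            G.p h.init.last i j (h.steps (Fin.last n))

/-- The probability that a play with `n+1` states visits the target set. -/
def reachProb (G : Game K I J C D) (δ : FDist K) (σ : Strategy1 I C)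
    (τ : Strategy2 J D) (n : ℕ) : ℝ :=
  ∑ h : Hist K C D n, if h.visits G.T then G.playProb δ σ τ n h else 0

/-- The reachability probability `γ₁(δ,σ,τ)`: the supremum over horizons of the
probability that the play visits the target set. -/
def val (G : Game K I J C D) (δ : FDist K) (σ : Strategy1 I C) (τ : Strategy2 J D) : ℝ :=
  ⨆ n : ℕ, G.reachProb δ σ τ n

/-- `δ` is almost-surely winning for player 1. -/
def AlmostSureWin1 (G : Game K I J C D) (δ : FDist K) : Prop :=
  ∃ σ, ∀ τ, G.val δ σ τ = 1

/-- `δ` is positively winning for player 1. -/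
def PositiveWin1 (G : Game K I J C D) (δ : FDist K) : Prop :=
  ∃ σ, ∀ τ, 0 < G.val δ σ τ

/-- `δ` is positively winning for player 2. -/
def PositiveWin2 (G : Game K I J C D) (δ : FDist K) : Prop :=
  ∃ τ, ∀ σ, G.val δ σ τ < 1

/-- `δ` is surely (equivalently here, almost-surely) winning for player 2. -/
def SureWin2 (G : Game K I J C D) (δ : FDist K) : Prop :=
  ∃ τ, ∀ σ, G.val δ σ τ = 0

/-- One-step belief operator of player 1. -/
def B1 (G : Game K I J C D) (L : Finset K) (c : C) : Finset K :=
  Finset.univ.filter fun k => ∃ l ∈ L, ∃ d : D, 0 < G.p l (G.act₁ c) (G.act₂ d) (c, d, k)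

/-- One-step belief operator of player 2. -/
def B2 (G : Game K I J C D) (L : Finset K) (d : D) : Finset K :=
  Finset.univ.filter fun k => ∃ l ∈ L, ∃ c : C, 0 < G.p l (G.act₁ c) (G.act₂ d) (c, d, k)

/-- Belief of player 1 after a sequence of signals. -/
def B1seq (G : Game K I J C D) (L : Finset K) (cs : List C) : Finset K := cs.foldl G.B1 L

/-- Belief of player 2 after a sequence of signals. -/
def B2seq (G : Game K I J C D) (L : Finset K) (ds : List D) : Finset K := ds.foldl G.B2 L

/-- One-step pessimistic belief operator of player 1. -/
def B1p (G : Game K I J C D) (L : Finset K) (c : C) : Finset K := G.B1 (L \ G.T) c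

/-- One-step pessimistic belief operator of player 2. -/
def B2p (G : Game K I J C D) (L : Finset K) (d : D) : Finset K := G.B2 (L \ G.T) d

/-- Pessimistic belief of player 1 after a sequence of signals. -/
def B1pseq (G : Game K I J C D) (L : Finset K) (cs : List C) : Finset K := cs.foldl G.B1p L

/-- Pessimistic belief of player 2 after a sequence of signals. -/
def B2pseq (G : Game K I J C D) (L : Finset K) (ds : List D) : Finset K := ds.foldl G.B2p L

/-- The operator `Φ` on collections of subsets of `K ∖ T`. -/
def Phi (G : Game K I J C D) (𝓛 : Set (Finset K)) : Set (Finset K) :=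
  {L | L ∈ 𝓛 ∧ L ∩ G.T = ∅ ∧ ∃ j : J, ∀ d : D, G.act₂ d = j → G.B2 L d ∈ 𝓛}

theorem Phi_mono (G : Game K I J C D) : Monotone G.Phi := by
  intro A B hAB L hL
  obtain ⟨h1, h2, j, hj⟩ := hL
  exact ⟨hAB h1, h2, j, fun d hd => hAB (hj d hd)⟩

/-- `𝓛_∞`, the greatest fixpoint of `Φ`. -/
def Linf (G : Game K I J C D) : Set (Finset K) :=
  OrderHom.gfp ⟨G.Phi, G.Phi_mono⟩

/-- The winning condition of the `𝓛`-game for player 1, on a play with initial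
support `L`: some state `k_m` is a target state and all earlier pessimistic
beliefs of player 1 avoid `𝓛`. -/
def LWin (G : Game K I J C D) (𝓛 : Set (Finset K)) (L : Finset K) {n : ℕ}
    (h : Hist K C D n) : Prop :=
  ∃ m : Fin (n + 1), h.state m ∈ G.T ∧
    ∀ r : ℕ, 1 ≤ r → r ≤ m.val → G.B1pseq L (h.sig1.take r) ∉ 𝓛

/-- The payoff `γ₁^𝓛(δ,σ,τ)` of player 1 in the `𝓛`-game, for an initial
distribution `δ` with support `L`. -/
def Lval (G : Game K I J C D) (𝓛 : Set (Finset K)) (L : Finset K) (δ : FDist K)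
    (σ : Strategy1 I C) (τ : Strategy2 J D) : ℝ :=
  ⨆ n : ℕ, ∑ h : Hist K C D n, if G.LWin 𝓛 L h then G.playProb δ σ τ n h else 0

end Game

/-- The uniformly random strategy `σ_R` of player 1. -/
def randomStrat (I C : Type*) [Fintype I] [Nonempty I] : Strategy1 I C :=
  fun _ => uniform Finset.univ Finset.univ_nonempty
variable {K I J C D : Type*} [Fintype K] [Fintype I] [Fintype J] [Fintype C] [Fintype D]
  [Nonempty K] [Nonempty I] [Nonempty J] [Nonempty C] [Nonempty D]

set_option linter.unusedSectionVars false
set_option linter.unusedVariables false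
section AuxFDist

variable {X : Type*} [Fintype X]

theorem FDist.f_le_one (δ : FDist X) (x : X) : δ.f x ≤ 1 := by
  calc δ.f x ≤ ∑ y, δ.f y :=
        Finset.single_le_sum (fun y _ => δ.nonneg y) (Finset.mem_univ x)
    _ = 1 := δ.sum_one

theorem uniform_f (L : Finset X) (hL : L.Nonempty) (x : X) :
    (uniform L hL).f x = if x ∈ L then (L.card : ℝ)⁻¹ else 0 := rfl

theorem uniform_pos (L : Finset X) (hL : L.Nonempty) {x : X} (hx : x ∈ L) :
    0 < (uniform L hL).f x := by
  rw [uniform_f, if_pos hx]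
  have : (0:ℝ) < L.card := by exact_mod_cast Finset.card_pos.mpr hL
  positivity

theorem uniform_zero (L : Finset X) (hL : L.Nonempty) {x : X} (hx : x ∉ L) :
    (uniform L hL).f x = 0 := by rw [uniform_f, if_neg hx]

theorem dirac_f (x y : X) : (dirac x).f y = if y = x then 1 else 0 := rfl

end AuxFDist

namespace Hist

variable {K C D : Type*} {n : ℕ}

theorem sig1_length (h : Hist K C D n) : h.sig1.length = n := by simp [sig1]
theorem sig2_length (h : Hist K C D n) : h.sig2.length = n := by simp [sig2]

/-- Append one step at the end of a play. -/
def snocH (w : Hist K C D n) (x : C × D × K) : Hist K C D (n + 1) :=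
  ⟨w.first, Fin.snoc w.steps x⟩

@[simp] theorem snocH_first (w : Hist K C D n) (x : C × D × K) :
    (snocH w x).first = w.first := rfl

@[simp] theorem init_snocH (w : Hist K C D n) (x : C × D × K) : (snocH w x).init = w := by
  cases w with
  | mk f s =>
    unfold Hist.init snocH
    congr 1
    funext m
    simp

@[simp] theorem snocH_steps_last (w : Hist K C D n) (x : C × D × K) :
    (snocH w x).steps (Fin.last n) = x := by simp [snocH]

@[simp] theorem snocH_last (w : Hist K C D n) (x : C × D × K) :
    (snocH w x).last = x.2.2 := by
  show ((snocH w x).steps (Fin.last n)).2.2 = x.2.2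
  rw [snocH_steps_last]

theorem snocH_init_self (h : Hist K C D (n + 1)) :
    snocH h.init (h.steps (Fin.last n)) = h := by
  cases h with
  | mk f s =>
    unfold snocH Hist.init
    congr 1
    exact Fin.snoc_init_self s

theorem sig1_snocH (w : Hist K C D n) (x : C × D × K) :
    (snocH w x).sig1 = w.sig1 ++ [x.1] := by
  unfold sig1
  rw [List.ofFn_succ']
  simp [snocH, List.concat_eq_append]

theorem sig2_snocH (w : Hist K C D n) (x : C × D × K) :
    (snocH w x).sig2 = w.sig2 ++ [x.2.1] := by
  unfold sig2
  rw [List.ofFn_succ']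
  simp [snocH, List.concat_eq_append]

@[simp] theorem state_zero (h : Hist K C D n) : h.state 0 = h.first := by
  simp [state]

theorem state_snocH_castSucc (w : Hist K C D n) (x : C × D × K) (m : Fin (n + 1)) :
    (snocH w x).state m.castSucc = w.state m := by
  by_cases h0 : m.val = 0
  · have h0' : (m.castSucc : Fin (n + 2)).val = 0 := h0
    rw [state, state, dif_pos h0, dif_pos h0']
    rfl
  · have h0' : (m.castSucc : Fin (n + 2)).val ≠ 0 := h0
    rw [state, state, dif_neg h0, dif_neg h0']
    have hlt : m.val - 1 < n := by have := m.isLt; omega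
    have he : (⟨(m.castSucc : Fin (n+2)).val - 1, by have := m.isLt; omega⟩ : Fin (n + 1))
        = Fin.castSucc (⟨m.val - 1, hlt⟩ : Fin n) := by
      apply Fin.ext; rfl
    rw [he]
    simp only [snocH, Fin.snoc_castSucc]

theorem state_snocH_last (w : Hist K C D n) (x : C × D × K) :
    (snocH w x).state (Fin.last (n + 1)) = x.2.2 := by
  rw [state, dif_neg (by simp [Fin.last])]
  have he : (⟨(Fin.last (n+1)).val - 1, by omega⟩ : Fin (n + 1)) = Fin.last n := by
    apply Fin.ext; rfl
  rw [he]
  simp only [snocH, Fin.snoc_last]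

theorem state_last_eq (h : Hist K C D n) : h.state (Fin.last n) = h.last := by
  cases n with
  | zero => rw [show (Fin.last 0) = 0 from rfl, state_zero]; rfl
  | succ n =>
    rw [state, dif_neg (by simp [Fin.last])]
    show _ = (h.steps (Fin.last n)).2.2
    congr 1

theorem visits_snocH (T : Finset K) (w : Hist K C D n) (x : C × D × K) :
    (snocH w x).visits T ↔ w.visits T ∨ x.2.2 ∈ T := by
  constructor
  · rintro ⟨m, hm⟩
    induction m using Fin.lastCases with
    | last => right; rwa [state_snocH_last] at hm
    | cast m => left; exact ⟨m, by rwa [state_snocH_castSucc] at hm⟩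
  · rintro (⟨m, hm⟩ | hx)
    · exact ⟨m.castSucc, by rwa [state_snocH_castSucc]⟩
    · exact ⟨Fin.last (n + 1), by rwa [state_snocH_last]⟩

theorem visits_of_last_mem {T : Finset K} (h : Hist K C D n) (hf : h.last ∈ T) :
    h.visits T := ⟨Fin.last n, by rw [state_last_eq]; exact hf⟩

theorem visits_of_first_mem {T : Finset K} (h : Hist K C D n) (hf : h.first ∈ T) :
    h.visits T := ⟨0, by rwa [state_zero]⟩

/-- The play extended by `s` further steps. -/
def extendH {t s : ℕ} (w : Hist K C D t) (v : Fin s → C × D × K) : Hist K C D (t + s) :=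
  ⟨w.first, Fin.append w.steps v⟩

/-- The continuation play given by `s` further steps. -/
def contH {t s : ℕ} (w : Hist K C D t) (v : Fin s → C × D × K) : Hist K C D s :=
  ⟨w.last, v⟩

@[simp] theorem extendH_zero {t : ℕ} (w : Hist K C D t) (v : Fin 0 → C × D × K) :
    extendH w v = w := by
  cases w with
  | mk f s =>
    unfold extendH
    congr 1
    rw [Subsingleton.elim v Fin.elim0, Fin.append_elim0]
    funext i
    exact congrArg _ (Fin.ext rfl)

theorem extendH_snoc {t s : ℕ} (w : Hist K C D t) (v : Fin s → C × D × K)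
    (x : C × D × K) : extendH w (Fin.snoc v x) = snocH (extendH w v) x := by
  cases w with
  | mk f st =>
    unfold extendH snocH
    congr 1
    exact Fin.append_snoc ..

theorem sig1_extendH {t s : ℕ} (w : Hist K C D t) (v : Fin s → C × D × K) :
    (extendH w v).sig1 = w.sig1 ++ (contH w v).sig1 := by
  unfold sig1
  rw [List.ofFn_add]
  congr 1
  · congr 1; funext i; simp [extendH, Fin.append_left]
  · congr 1; funext i; simp [extendH, contH, Fin.append_right]

theorem sig2_extendH {t s : ℕ} (w : Hist K C D t) (v : Fin s → C × D × K) :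
    (extendH w v).sig2 = w.sig2 ++ (contH w v).sig2 := by
  unfold sig2
  rw [List.ofFn_add]
  congr 1
  · congr 1; funext i; simp [extendH, Fin.append_left]
  · congr 1; funext i; simp [extendH, contH, Fin.append_right]

theorem last_extendH {t s : ℕ} (w : Hist K C D t) (v : Fin s → C × D × K) :
    (extendH w v).last = (contH w v).last := by
  cases s with
  | zero => rw [extendH_zero]; rfl
  | succ s =>
    show (Fin.append w.steps v (Fin.last (t + s))).2.2 = (v (Fin.last s)).2.2
    rw [show (Fin.last (t + s)) = Fin.natAdd t (Fin.last s) from Fin.ext rfl,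
      Fin.append_right]

theorem state_extendH_le {t : ℕ} (w : Hist K C D t) (i : Fin (t + 1)) :
    ∀ {s : ℕ} (v : Fin s → C × D × K),
      (extendH w v).state (Fin.castLE (by omega) i) = w.state i := by
  intro s
  induction s with
  | zero =>
    intro v
    rw [extendH_zero]
    exact congrArg _ (Fin.ext rfl)
  | succ s IH =>
    intro v
    have hv : v = Fin.snoc (fun m => v m.castSucc) (v (Fin.last s)) := by
      exact (Fin.snoc_init_self v).symm
    rw [hv, extendH_snoc]
    have he : (Fin.castLE (by omega : t + 1 ≤ t + (s + 1) + 1) i)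
        = Fin.castSucc (Fin.castLE (by omega : t + 1 ≤ t + s + 1) i) := Fin.ext rfl
    rw [he, state_snocH_castSucc]
    exact IH _

end Hist


namespace Hist

variable {K C D : Type*} {n : ℕ}

/-- Plays of length `0` are just states. -/
def hist0Equiv (K C D : Type*) : Hist K C D 0 ≃ K where
  toFun h := h.first
  invFun k := ⟨k, Fin.elim0⟩
  left_inv h := by
    cases h with
    | mk f s =>
      show ({ first := f, steps := Fin.elim0 } : Hist K C D 0) = ⟨f, s⟩
      congr 1
      funext i
      exact i.elim0
  right_inv k := rfl

def histSnocEquiv (K C D : Type*) (n : ℕ) :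
    Hist K C D (n + 1) ≃ Hist K C D n × (C × D × K) where
  toFun h := (h.init, h.steps (Fin.last n))
  invFun wx := snocH wx.1 wx.2
  left_inv h := snocH_init_self h
  right_inv wx := by
    cases wx with
    | mk w x => simp only [init_snocH, snocH_steps_last]

end Hist

theorem sum_hist0 {K C D : Type*} [Fintype K] [Fintype C] [Fintype D]
    (f : Hist K C D 0 → ℝ) : ∑ h, f h = ∑ k : K, f ⟨k, Fin.elim0⟩ := by
  rw [← Equiv.sum_comp (Hist.hist0Equiv K C D).symm f]
  rfl

theorem sum_hist_succ {K C D : Type*} [Fintype K] [Fintype C] [Fintype D] {n : ℕ}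
    (f : Hist K C D (n + 1) → ℝ) :
    ∑ h, f h = ∑ w : Hist K C D n, ∑ x : C × D × K, f (Hist.snocH w x) := by
  rw [← Equiv.sum_comp (Hist.histSnocEquiv K C D n).symm f, Fintype.sum_prod_type]
  rfl

namespace Game

variable {K I J C D : Type*} [Fintype K] [Fintype I] [Fintype J] [Fintype C] [Fintype D]
variable (G : Game K I J C D)

theorem p_eq_zero {k : K} {i : I} {j : J} {c : C} {d : D} {l : K}
    (hij : i ≠ G.act₁ c ∨ j ≠ G.act₂ d) : G.p k i j (c, d, l) = 0 := by
  rcases (G.p_nonneg k i j (c, d, l)).eq_or_lt with h | h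
  · exact h.symm
  · obtain ⟨h1, h2⟩ := G.act_compat k i j c d l h
    rcases hij with h' | h'
    · exact absurd h1 h'
    · exact absurd h2 h'

theorem stepsum (k : K) (σd : FDist I) (τd : FDist J) (x : C × D × K) :
    ∑ i : I, ∑ j : J, σd.f i * τd.f j * G.p k i j x
      = σd.f (G.act₁ x.1) * τd.f (G.act₂ x.2.1) * G.p k (G.act₁ x.1) (G.act₂ x.2.1) x := by
  obtain ⟨c, d, l⟩ := x
  rw [Finset.sum_eq_single (G.act₁ c)]
  · rw [Finset.sum_eq_single (G.act₂ d)]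
    · intro j _ hj
      rw [G.p_eq_zero (Or.inr hj), mul_zero]
    · intro h; exact absurd (Finset.mem_univ _) h
  · intro i _ hi
    apply Finset.sum_eq_zero
    intro j _
    rw [G.p_eq_zero (Or.inl hi), mul_zero]
  · intro h; exact absurd (Finset.mem_univ _) h

theorem stepsum_total (k : K) (σd : FDist I) (τd : FDist J) :
    ∑ x : C × D × K, ∑ i : I, ∑ j : J, σd.f i * τd.f j * G.p k i j x = 1 := by
  rw [Finset.sum_comm]
  have h1 : ∀ i ∈ Finset.univ (α := I),
      ∑ x : C × D × K, ∑ j : J, σd.f i * τd.f j * G.p k i j x = σd.f i := by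
    intro i _
    rw [Finset.sum_comm]
    have h2 : ∀ j ∈ Finset.univ (α := J),
        ∑ x : C × D × K, σd.f i * τd.f j * G.p k i j x = σd.f i * τd.f j := by
      intro j _
      rw [← Finset.mul_sum, G.p_sum, mul_one]
    rw [Finset.sum_congr rfl h2, ← Finset.mul_sum, τd.sum_one, mul_one]
  rw [Finset.sum_congr rfl h1, σd.sum_one]

theorem playProb_zero (δ : FDist K) (σ : Strategy1 I C) (τ : Strategy2 J D)
    (h : Hist K C D 0) : G.playProb δ σ τ 0 h = δ.f h.first := rfl

theorem playProb_succ (δ : FDist K) (σ : Strategy1 I C) (τ : Strategy2 J D) {n : ℕ}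
    (h : Hist K C D (n + 1)) :
    G.playProb δ σ τ (n + 1) h = G.playProb δ σ τ n h.init *
        ∑ i : I, ∑ j : J, (σ h.init.sig1).f i * (τ h.init.sig2).f j *
          G.p h.init.last i j (h.steps (Fin.last n)) := rfl

theorem playProb_snocH (δ : FDist K) (σ : Strategy1 I C) (τ : Strategy2 J D) {n : ℕ}
    (w : Hist K C D n) (x : C × D × K) :
    G.playProb δ σ τ (n + 1) (w.snocH x)
      = G.playProb δ σ τ n w *
        ((σ w.sig1).f (G.act₁ x.1) * (τ w.sig2).f (G.act₂ x.2.1) *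
          G.p w.last (G.act₁ x.1) (G.act₂ x.2.1) x) := by
  rw [playProb_succ, Hist.init_snocH, Hist.snocH_steps_last, G.stepsum]

theorem playProb_nonneg (δ : FDist K) (σ : Strategy1 I C) (τ : Strategy2 J D) :
    ∀ (n : ℕ) (h : Hist K C D n), 0 ≤ G.playProb δ σ τ n h := by
  intro n
  induction n with
  | zero => intro h; exact δ.nonneg _
  | succ n IH =>
    intro h
    rw [playProb_succ]
    refine mul_nonneg (IH _) (Finset.sum_nonneg fun i _ => Finset.sum_nonneg fun j _ => ?_)
    exact mul_nonneg (mul_nonneg ((σ _).nonneg _) ((τ _).nonneg _)) (G.p_nonneg _ _ _ _)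

theorem playProb_marg (δ : FDist K) (σ : Strategy1 I C) (τ : Strategy2 J D) {n : ℕ}
    (w : Hist K C D n) :
    ∑ x : C × D × K, G.playProb δ σ τ (n + 1) (w.snocH x) = G.playProb δ σ τ n w := by
  have : ∀ x ∈ Finset.univ (α := C × D × K), G.playProb δ σ τ (n + 1) (w.snocH x)
      = G.playProb δ σ τ n w *
        ∑ i : I, ∑ j : J, (σ w.sig1).f i * (τ w.sig2).f j * G.p w.last i j x := by
    intro x _
    rw [playProb_succ, Hist.init_snocH, Hist.snocH_steps_last]
  rw [Finset.sum_congr rfl this, ← Finset.mul_sum, G.stepsum_total, mul_one]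

theorem playProb_total (δ : FDist K) (σ : Strategy1 I C) (τ : Strategy2 J D) :
    ∀ n : ℕ, ∑ h : Hist K C D n, G.playProb δ σ τ n h = 1 := by
  intro n
  induction n with
  | zero => rw [sum_hist0]; exact δ.sum_one
  | succ n IH =>
    rw [sum_hist_succ]
    calc ∑ w : Hist K C D n, ∑ x : C × D × K, G.playProb δ σ τ (n+1) (w.snocH x)
        = ∑ w : Hist K C D n, G.playProb δ σ τ n w :=
          Finset.sum_congr rfl fun w _ => G.playProb_marg δ σ τ w
      _ = 1 := IH

/-- The probability of the set of plays satisfying `P`. -/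
def massOf (δ : FDist K) (σ : Strategy1 I C) (τ : Strategy2 J D) (n : ℕ)
    (P : Hist K C D n → Prop) : ℝ :=
  ∑ h : Hist K C D n, if P h then G.playProb δ σ τ n h else 0

theorem massOf_nonneg (δ : FDist K) (σ : Strategy1 I C) (τ : Strategy2 J D) (n : ℕ)
    (P : Hist K C D n → Prop) : 0 ≤ G.massOf δ σ τ n P :=
  Finset.sum_nonneg fun h _ => by
    by_cases hP : P h
    · rw [if_pos hP]; exact G.playProb_nonneg δ σ τ n h
    · rw [if_neg hP]

theorem massOf_le_one (δ : FDist K) (σ : Strategy1 I C) (τ : Strategy2 J D) (n : ℕ)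
    (P : Hist K C D n → Prop) : G.massOf δ σ τ n P ≤ 1 := by
  rw [← G.playProb_total δ σ τ n]
  refine Finset.sum_le_sum fun h _ => ?_
  by_cases hP : P h
  · rw [if_pos hP]
  · rw [if_neg hP]; exact G.playProb_nonneg δ σ τ n h

theorem massOf_mono (δ : FDist K) (σ : Strategy1 I C) (τ : Strategy2 J D) (n : ℕ)
    (P Q : Hist K C D n → Prop)
    (hPQ : ∀ h, 0 < G.playProb δ σ τ n h → P h → Q h) :
    G.massOf δ σ τ n P ≤ G.massOf δ σ τ n Q := by
  refine Finset.sum_le_sum fun h _ => ?_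
  by_cases hP : P h
  · rw [if_pos hP]
    rcases (G.playProb_nonneg δ σ τ n h).eq_or_lt with h0 | h0
    · by_cases hQ : Q h
      · rw [if_pos hQ]
      · rw [if_neg hQ, ← h0]
    · rw [if_pos (hPQ h h0 hP)]
  · rw [if_neg hP]
    by_cases hQ : Q h
    · rw [if_pos hQ]; exact G.playProb_nonneg δ σ τ n h
    · rw [if_neg hQ]

theorem massOf_add_not (δ : FDist K) (σ : Strategy1 I C) (τ : Strategy2 J D) (n : ℕ)
    (P : Hist K C D n → Prop) :
    G.massOf δ σ τ n P + G.massOf δ σ τ n (fun h => ¬ P h) = 1 := by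
  rw [massOf, massOf, ← Finset.sum_add_distrib, ← G.playProb_total δ σ τ n]
  refine Finset.sum_congr rfl fun h _ => ?_
  by_cases hP : P h
  · rw [if_pos hP, if_neg (not_not_intro hP), add_zero]
  · rw [if_neg hP, if_pos hP, zero_add]

theorem reachProb_eq_massOf (δ : FDist K) (σ : Strategy1 I C) (τ : Strategy2 J D) (n : ℕ) :
    G.reachProb δ σ τ n = G.massOf δ σ τ n (fun h => h.visits G.T) := rfl

theorem reachProb_nonneg (δ : FDist K) (σ : Strategy1 I C) (τ : Strategy2 J D) (n : ℕ) :
    0 ≤ G.reachProb δ σ τ n := G.massOf_nonneg δ σ τ n _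

theorem reachProb_le_one (δ : FDist K) (σ : Strategy1 I C) (τ : Strategy2 J D) (n : ℕ) :
    G.reachProb δ σ τ n ≤ 1 := G.massOf_le_one δ σ τ n _

theorem reachProb_mono (δ : FDist K) (σ : Strategy1 I C) (τ : Strategy2 J D) (n : ℕ) :
    G.reachProb δ σ τ n ≤ G.reachProb δ σ τ (n + 1) := by
  rw [reachProb_eq_massOf, reachProb_eq_massOf, massOf, massOf, sum_hist_succ]
  refine Finset.sum_le_sum fun w _ => ?_
  by_cases hv : w.visits G.T
  · rw [if_pos hv]
    have : ∀ x ∈ Finset.univ (α := C × D × K),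
        (if (Hist.snocH w x).visits G.T then G.playProb δ σ τ (n+1) (w.snocH x) else 0)
          = G.playProb δ σ τ (n+1) (w.snocH x) := by
      intro x _
      rw [if_pos ((Hist.visits_snocH G.T w x).mpr (Or.inl hv))]
    rw [Finset.sum_congr rfl this, G.playProb_marg]
  · rw [if_neg hv]
    refine Finset.sum_nonneg fun x _ => ?_
    by_cases hv' : (Hist.snocH w x).visits G.T
    · rw [if_pos hv']; exact G.playProb_nonneg δ σ τ _ _
    · rw [if_neg hv']

theorem reachProb_mono_le (δ : FDist K) (σ : Strategy1 I C) (τ : Strategy2 J D)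
    {n m : ℕ} (hnm : n ≤ m) : G.reachProb δ σ τ n ≤ G.reachProb δ σ τ m := by
  induction m with
  | zero => cases Nat.le_zero.mp hnm; exact le_rfl
  | succ m IH =>
    rcases Nat.lt_or_ge n (m + 1) with h | h
    · exact le_trans (IH (by omega)) (G.reachProb_mono δ σ τ m)
    · cases Nat.le_antisymm hnm h; exact le_rfl

theorem val_le_of_forall (δ : FDist K) (σ : Strategy1 I C) (τ : Strategy2 J D) {a : ℝ}
    (ha : ∀ n, G.reachProb δ σ τ n ≤ a) : G.val δ σ τ ≤ a :=
  ciSup_le ha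

theorem reachProb_le_val (δ : FDist K) (σ : Strategy1 I C) (τ : Strategy2 J D) (n : ℕ) :
    G.reachProb δ σ τ n ≤ G.val δ σ τ :=
  le_ciSup ⟨1, by rintro x ⟨m, rfl⟩; exact G.reachProb_le_one δ σ τ m⟩ n

theorem playProb_dirac_first (δ : FDist K) (σ : Strategy1 I C) (τ : Strategy2 J D) :
    ∀ (n : ℕ) (h : Hist K C D n),
      G.playProb δ σ τ n h = δ.f h.first * G.playProb (dirac h.first) σ τ n h := by
  intro n
  induction n with
  | zero =>
    intro h
    rw [playProb_zero, playProb_zero, dirac_f, if_pos rfl, mul_one]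
  | succ n IH =>
    intro h
    rw [playProb_succ, playProb_succ, IH h.init]
    have : h.init.first = h.first := rfl
    rw [this, mul_assoc]

theorem playProb_dirac_ne (σ : Strategy1 I C) (τ : Strategy2 J D) {k : K} :
    ∀ (n : ℕ) (h : Hist K C D n), h.first ≠ k → G.playProb (dirac k) σ τ n h = 0 := by
  intro n
  induction n with
  | zero => intro h hne; rw [playProb_zero, dirac_f, if_neg hne]
  | succ n IH =>
    intro h hne
    rw [playProb_succ, IH h.init hne, zero_mul]

theorem reachProb_dirac_sum (δ : FDist K) (σ : Strategy1 I C) (τ : Strategy2 J D) (n : ℕ) :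
    G.reachProb δ σ τ n = ∑ k : K, δ.f k * G.reachProb (dirac k) σ τ n := by
  have h1 : ∀ k ∈ Finset.univ (α := K), δ.f k * G.reachProb (dirac k) σ τ n
      = ∑ h : Hist K C D n, if h.visits G.T then δ.f k * G.playProb (dirac k) σ τ n h else 0 := by
    intro k _
    rw [reachProb, Finset.mul_sum]
    refine Finset.sum_congr rfl fun h _ => ?_
    by_cases hv : h.visits G.T
    · rw [if_pos hv, if_pos hv]
    · rw [if_neg hv, if_neg hv, mul_zero]
  rw [Finset.sum_congr rfl h1, Finset.sum_comm, reachProb]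
  refine Finset.sum_congr rfl fun h _ => ?_
  by_cases hv : h.visits G.T
  · simp only [if_pos hv]
    rw [Finset.sum_eq_single h.first]
    · exact G.playProb_dirac_first δ σ τ n h
    · intro k _ hk
      rw [G.playProb_dirac_ne σ τ n h (fun he => hk he.symm), mul_zero]
    · intro hmem; exact absurd (Finset.mem_univ _) hmem
  · simp only [if_neg hv]
    simp

theorem reachProb_dirac_mem (σ : Strategy1 I C) (τ : Strategy2 J D) {k : K}
    (hk : k ∈ G.T) (n : ℕ) : G.reachProb (dirac k) σ τ n = 1 := by
  have h0 : G.massOf (dirac k) σ τ n (fun h => ¬ h.visits G.T) = 0 := by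
    rw [massOf]
    refine Finset.sum_eq_zero fun h _ => ?_
    by_cases hv : h.visits G.T
    · rw [if_neg (not_not_intro hv)]
    · rw [if_pos hv]
      rcases eq_or_ne h.first k with he | he
      · exact absurd (Hist.visits_of_first_mem h (he ▸ hk)) hv
      · exact G.playProb_dirac_ne σ τ n h he
  have := G.massOf_add_not (dirac k) σ τ n (fun h => h.visits G.T)
  rw [h0, add_zero] at this
  exact this

end Game


theorem pos_factors {a b : ℝ} (ha : 0 ≤ a) (hb : 0 ≤ b) (h : 0 < a * b) :
    0 < a ∧ 0 < b := by
  rcases ha.eq_or_lt with h1 | h1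
  · rw [← h1, zero_mul] at h; exact absurd h (lt_irrefl 0)
  · rcases hb.eq_or_lt with h2 | h2
    · rw [← h2, mul_zero] at h; exact absurd h (lt_irrefl 0)
    · exact ⟨h1, h2⟩

section Wt

variable {J D : Type*} [Fintype J]

/-- Product of the weights given by player 2's strategy to its own actions along
a sequence of signals. -/
def Wt (act2 : D → J) : (List D → FDist J) → List D → ℝ
  | _, [] => 1
  | τ, d :: ds => (τ []).f (act2 d) * Wt act2 (fun l => τ (d :: l)) ds

@[simp] theorem Wt_nil (act2 : D → J) (τ : List D → FDist J) : Wt act2 τ [] = 1 := rfl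

theorem Wt_nonneg (act2 : D → J) : ∀ (ds : List D) (τ : List D → FDist J), 0 ≤ Wt act2 τ ds
  | [], _ => by rw [Wt_nil]; exact zero_le_one
  | d :: ds, τ => mul_nonneg ((τ []).nonneg _) (Wt_nonneg act2 ds _)

theorem Wt_append (act2 : D → J) :
    ∀ (ds : List D) (τ : List D → FDist J) (d : D),
      Wt act2 τ (ds ++ [d]) = Wt act2 τ ds * (τ ds).f (act2 d)
  | [], τ, d => by
    show (τ []).f (act2 d) * 1 = 1 * (τ []).f (act2 d)
    ring
  | e :: ds, τ, d => by
    show (τ []).f (act2 e) * Wt act2 (fun l => τ (e :: l)) (ds ++ [d]) = _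
    rw [Wt_append act2 ds (fun l => τ (e :: l)) d]
    show _ = (τ []).f (act2 e) * Wt act2 (fun l => τ (e :: l)) ds * (τ (e :: ds)).f (act2 d)
    ring

end Wt

/-- The part of the probability of a play that does not depend on player 2's
strategy. -/
def Game.baseP {K I J C D : Type*} [Fintype K] [Fintype I] [Fintype J] [Fintype C]
    [Fintype D] (G : Game K I J C D) (δ : FDist K) (σ : Strategy1 I C) :
    ∀ n : ℕ, Hist K C D n → ℝ
  | 0, h => δ.f h.first
  | n + 1, h =>
      G.baseP δ σ n h.init *
        ((σ h.init.sig1).f (G.act₁ (h.steps (Fin.last n)).1) *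
          G.p h.init.last (G.act₁ (h.steps (Fin.last n)).1)
            (G.act₂ (h.steps (Fin.last n)).2.1) (h.steps (Fin.last n)))

namespace Game

variable {K I J C D : Type*} [Fintype K] [Fintype I] [Fintype J] [Fintype C] [Fintype D]
variable (G : Game K I J C D)

theorem baseP_succ (δ : FDist K) (σ : Strategy1 I C) {n : ℕ} (h : Hist K C D (n + 1)) :
    G.baseP δ σ (n + 1) h = G.baseP δ σ n h.init *
        ((σ h.init.sig1).f (G.act₁ (h.steps (Fin.last n)).1) *
          G.p h.init.last (G.act₁ (h.steps (Fin.last n)).1)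
            (G.act₂ (h.steps (Fin.last n)).2.1) (h.steps (Fin.last n))) := rfl

theorem baseP_snocH (δ : FDist K) (σ : Strategy1 I C) {n : ℕ} (w : Hist K C D n)
    (x : C × D × K) :
    G.baseP δ σ (n + 1) (w.snocH x)
      = G.baseP δ σ n w *
        ((σ w.sig1).f (G.act₁ x.1) * G.p w.last (G.act₁ x.1) (G.act₂ x.2.1) x) := by
  show G.baseP δ σ n (w.snocH x).init * _ = _
  rw [Hist.init_snocH, Hist.snocH_steps_last]

theorem baseP_nonneg (δ : FDist K) (σ : Strategy1 I C) :
    ∀ (n : ℕ) (h : Hist K C D n), 0 ≤ G.baseP δ σ n h := by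
  intro n
  induction n with
  | zero => intro h; exact δ.nonneg _
  | succ n IH =>
    intro h
    exact mul_nonneg (IH _) (mul_nonneg ((σ _).nonneg _) (G.p_nonneg _ _ _ _))

theorem playProb_eq_baseP_mul_Wt (δ : FDist K) (σ : Strategy1 I C) (τ : Strategy2 J D) :
    ∀ (n : ℕ) (h : Hist K C D n),
      G.playProb δ σ τ n h = G.baseP δ σ n h * Wt G.act₂ τ h.sig2 := by
  intro n
  induction n with
  | zero =>
    intro h
    have : h.sig2 = [] := by
      have := h.sig2_length
      exact List.length_eq_zero_iff.mp this
    rw [this, Wt_nil, mul_one, playProb_zero]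
    rfl
  | succ n IH =>
    intro h
    rw [← Hist.snocH_init_self h, playProb_snocH, baseP_snocH, Hist.sig2_snocH, Wt_append, IH]
    ring

/-- Player 1's strategy after an initial signal sequence. -/
def shiftStrat1 (σ : Strategy1 I C) (cs : List C) : Strategy1 I C := fun l => σ (cs ++ l)

/-- Player 2's strategy after an initial signal sequence. -/
def shiftStrat2 (τ : Strategy2 J D) (ds : List D) : Strategy2 J D := fun l => τ (ds ++ l)

theorem playProb_extendH (δ : FDist K) (σ : Strategy1 I C) (τ : Strategy2 J D) {t : ℕ}
    (w : Hist K C D t) :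
    ∀ {s : ℕ} (v : Fin s → C × D × K),
      G.playProb δ σ τ (t + s) (Hist.extendH w v)
        = G.playProb δ σ τ t w *
          G.playProb (dirac w.last) (shiftStrat1 σ w.sig1) (shiftStrat2 τ w.sig2) s
            (Hist.contH w v) := by
  intro s
  induction s with
  | zero =>
    intro v
    rw [Hist.extendH_zero]
    have h1 : G.playProb (dirac w.last) (shiftStrat1 σ w.sig1) (shiftStrat2 τ w.sig2) 0
        (Hist.contH w v) = 1 := by
      rw [playProb_zero]
      show (dirac w.last).f w.last = 1
      rw [dirac_f, if_pos rfl]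
    rw [h1, mul_one]
    rfl
  | succ s IH =>
    intro v
    rw [← Fin.snoc_init_self v, Hist.extendH_snoc]
    show G.playProb δ σ τ ((t + s) + 1)
        (Hist.snocH (Hist.extendH w (Fin.init v)) (v (Fin.last s))) = _
    rw [playProb_snocH]
    have hc : Hist.contH w (Fin.snoc (Fin.init v) (v (Fin.last s)))
        = Hist.snocH (Hist.contH w (Fin.init v)) (v (Fin.last s)) := rfl
    rw [hc, playProb_snocH, IH (Fin.init v)]
    rw [Hist.sig1_extendH, Hist.sig2_extendH, Hist.last_extendH]
    have e1 : (shiftStrat1 σ w.sig1) (Hist.contH w (Fin.init v)).sig1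
        = σ (w.sig1 ++ (Hist.contH w (Fin.init v)).sig1) := rfl
    have e2 : (shiftStrat2 τ w.sig2) (Hist.contH w (Fin.init v)).sig2
        = τ (w.sig2 ++ (Hist.contH w (Fin.init v)).sig2) := rfl
    rw [e1, e2]
    ring

end Game

namespace Hist

variable {K C D : Type*} [Fintype K] [Fintype C] [Fintype D]

def histExtendEquiv (K C D : Type*) (t s : ℕ) :
    Hist K C D (t + s) ≃ Hist K C D t × (Fin s → C × D × K) where
  toFun h := (⟨h.first, fun i => h.steps (Fin.castAdd s i)⟩, fun i => h.steps (Fin.natAdd t i))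
  invFun wv := extendH wv.1 wv.2
  left_inv h := by
    cases h with
    | mk f st =>
      show Hist.mk f (Fin.append _ _) = Hist.mk f st
      congr 1
      funext i
      refine Fin.addCases (fun l => ?_) (fun r => ?_) i
      · rw [Fin.append_left]
      · rw [Fin.append_right]
  right_inv wv := by
    obtain ⟨⟨f, st⟩, v⟩ := wv
    have h1 : (⟨(extendH (⟨f, st⟩ : Hist K C D t) v).first,
        fun i => (extendH (⟨f, st⟩ : Hist K C D t) v).steps (Fin.castAdd s i)⟩ : Hist K C D t)
        = ⟨f, st⟩ := by
      unfold extendH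
      congr 1
      funext i
      exact Fin.append_left ..
    have h2 : (fun i => (extendH (⟨f, st⟩ : Hist K C D t) v).steps (Fin.natAdd t i)) = v := by
      unfold extendH
      funext i
      exact Fin.append_right ..
    show (_, _) = (_, _)
    rw [h1, h2]

theorem contH_visits_zero (T : Finset K) {t : ℕ} (w : Hist K C D t) (v : Fin 0 → C × D × K) :
    (contH w v).visits T ↔ w.last ∈ T := by
  constructor
  · rintro ⟨m, hm⟩
    have hm0 : m = 0 := by
      apply Fin.ext
      have := m.isLt
      simp only [Fin.val_zero]
      omega
    rw [hm0, state_zero] at hm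
    exact hm
  · intro h
    exact ⟨0, by rwa [state_zero]⟩

theorem visits_extendH (T : Finset K) {t : ℕ} (w : Hist K C D t) :
    ∀ {s : ℕ} (v : Fin s → C × D × K),
      (extendH w v).visits T ↔ w.visits T ∨ (contH w v).visits T := by
  intro s
  induction s with
  | zero =>
    intro v
    rw [extendH_zero, contH_visits_zero]
    constructor
    · exact Or.inl
    · rintro (h | h)
      · exact h
      · exact visits_of_last_mem w h
  | succ s IH =>
    intro v
    rw [← Fin.snoc_init_self v, extendH_snoc, visits_snocH, IH]
    have hc : contH w (Fin.snoc (Fin.init v) (v (Fin.last s)))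
        = snocH (contH w (Fin.init v)) (v (Fin.last s)) := rfl
    rw [hc, visits_snocH]
    tauto

end Hist

theorem sum_hist_split {K C D : Type*} [Fintype K] [Fintype C] [Fintype D] (t s : ℕ)
    (f : Hist K C D (t + s) → ℝ) :
    ∑ h, f h = ∑ w : Hist K C D t, ∑ v : Fin s → C × D × K, f (Hist.extendH w v) := by
  rw [← Equiv.sum_comp (Hist.histExtendEquiv K C D t s).symm f, Fintype.sum_prod_type]
  rfl


set_option linter.unusedSectionVars false

theorem sum_halfpow (m : ℕ) :
    ∑ t ∈ Finset.range m, ((1 : ℝ) / 2) ^ (t + 1) = 1 - (1 / 2) ^ m := by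
  induction m with
  | zero => simp
  | succ m IH =>
    rw [Finset.sum_range_succ, IH, pow_succ]
    ring

section Mix

variable {K J D : Type*} [Fintype K] [Fintype J] [Fintype D] [Nonempty J]

/-- Probability of a single action under the uniform distribution. -/
def uJ (J : Type*) [Fintype J] : ℝ := (Fintype.card J : ℝ)⁻¹

theorem uJ_pos : 0 < uJ J := by
  rw [uJ]
  have : (0:ℝ) < (Fintype.card J : ℝ) := by exact_mod_cast Fintype.card_pos
  positivity

theorem unifJf (j : J) : (uniform (Finset.univ : Finset J) Finset.univ_nonempty).f j = uJ J := by
  rw [uniform_f, if_pos (Finset.mem_univ _), Finset.card_univ, uJ]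

/-- Play uniformly at random for `t` steps, then switch to `θL` reading only
the signals received after the switch. -/
def compStrat (θL : Strategy2 J D) (t : ℕ) : Strategy2 J D :=
  fun ds => if ds.length < t then uniform Finset.univ Finset.univ_nonempty else θL (ds.drop t)

theorem compStrat_zero (θL : Strategy2 J D) : compStrat θL 0 = θL := by
  funext ds
  simp [compStrat]

theorem compStrat_shift (θL : Strategy2 J D) (t : ℕ) (d : D) :
    (fun l => compStrat θL (t + 1) (d :: l)) = compStrat θL t := by
  funext l
  simp [compStrat, Nat.succ_lt_succ_iff]

theorem compStrat_apply_lt (θL : Strategy2 J D) {t : ℕ} {ds : List D} (h : ds.length < t) :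
    compStrat θL t ds = uniform Finset.univ Finset.univ_nonempty := if_pos h

variable (act2 : D → J)

theorem Wt_compStrat_of_le (θL : Strategy2 J D) :
    ∀ (ds : List D) (t : ℕ), ds.length ≤ t →
      Wt act2 (compStrat θL t) ds = uJ J ^ ds.length := by
  intro ds
  induction ds with
  | nil => intro t _; rw [Wt_nil, List.length_nil, pow_zero]
  | cons d ds IH =>
    intro t ht
    match t, ht with
    | t + 1, ht =>
      show (compStrat θL (t+1) []).f (act2 d) *
        Wt act2 (fun l => compStrat θL (t+1) (d :: l)) ds = _
      rw [compStrat_shift, compStrat_apply_lt θL (by simp), unifJf,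
        IH t (by simpa using ht), List.length_cons, pow_succ]
      ring

theorem compStrat_drop (θL : Strategy2 J D) (ds0 : List D) :
    (fun l => compStrat θL ds0.length (ds0 ++ l)) = θL := by
  funext l
  have h1 : ¬ (ds0 ++ l).length < ds0.length := by simp
  rw [compStrat, if_neg h1, List.drop_left]

variable (τ0 : Strategy2 J D) (𝓕 : Finset (Finset K)) (θ : Finset K → Strategy2 J D)

/-- Total realization weight of the mixture strategy on a signal sequence. -/
def mixS (ds : List D) : ℝ :=
  (1/2) * Wt act2 τ0 ds
    + (1/(2 * 𝓕.card)) * ∑ L' ∈ 𝓕,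
        ((∑ t ∈ Finset.range (ds.length + 1),
            ((1:ℝ)/2) ^ (t+1) * Wt act2 (compStrat (θ L') t) ds)
          + ((1:ℝ)/2) ^ (ds.length + 1) * uJ J ^ ds.length)

/-- Realization weight of the mixture strategy times an action probability. -/
def mixT (ds : List D) (j : J) : ℝ :=
  (1/2) * Wt act2 τ0 ds * (τ0 ds).f j
    + (1/(2 * 𝓕.card)) * ∑ L' ∈ 𝓕,
        ((∑ t ∈ Finset.range (ds.length + 2),
            ((1:ℝ)/2) ^ (t+1) * Wt act2 (compStrat (θ L') t) ds * ((compStrat (θ L') t) ds).f j)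
          + ((1:ℝ)/2) ^ (ds.length + 2) * uJ J ^ (ds.length + 1))

variable {𝓕 : Finset (Finset K)}

theorem mixT_nonneg (ds : List D) (j : J) : 0 ≤ mixT act2 τ0 𝓕 θ ds j := by
  have hN : (0:ℝ) ≤ 𝓕.card := by positivity
  have hu := uJ_pos (J := J)
  refine add_nonneg (mul_nonneg (mul_nonneg (by norm_num) (Wt_nonneg _ _ _)) ((τ0 ds).nonneg _))
    (mul_nonneg (by positivity) (Finset.sum_nonneg fun L' _ => ?_))
  refine add_nonneg (Finset.sum_nonneg fun t _ => ?_) (by positivity)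
  exact mul_nonneg (mul_nonneg (by positivity) (Wt_nonneg _ _ _)) ((_ : FDist J).nonneg _)

theorem mixS_pos (hF : 𝓕.Nonempty) (ds : List D) : 0 < mixS act2 τ0 𝓕 θ ds := by
  have hN : (0:ℝ) < 𝓕.card := by exact_mod_cast Finset.card_pos.mpr hF
  have hu := uJ_pos (J := J)
  have h1 : 0 ≤ (1/2) * Wt act2 τ0 ds := mul_nonneg (by norm_num) (Wt_nonneg _ _ _)
  have h2 : ∀ L' ∈ 𝓕, ((1:ℝ)/2) ^ (ds.length + 1) * uJ J ^ ds.length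
      ≤ ((∑ t ∈ Finset.range (ds.length + 1),
            ((1:ℝ)/2) ^ (t+1) * Wt act2 (compStrat (θ L') t) ds)
          + ((1:ℝ)/2) ^ (ds.length + 1) * uJ J ^ ds.length) := by
    intro L' _
    have h0 : 0 ≤ ∑ t ∈ Finset.range (ds.length + 1),
        ((1:ℝ)/2) ^ (t+1) * Wt act2 (compStrat (θ L') t) ds :=
      Finset.sum_nonneg fun t _ => mul_nonneg (by positivity) (Wt_nonneg _ _ _)
    linarith
  have h3 : (𝓕.card : ℝ) * (((1:ℝ)/2) ^ (ds.length + 1) * uJ J ^ ds.length)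
      ≤ ∑ L' ∈ 𝓕, ((∑ t ∈ Finset.range (ds.length + 1),
            ((1:ℝ)/2) ^ (t+1) * Wt act2 (compStrat (θ L') t) ds)
          + ((1:ℝ)/2) ^ (ds.length + 1) * uJ J ^ ds.length) := by
    calc (𝓕.card : ℝ) * (((1:ℝ)/2) ^ (ds.length + 1) * uJ J ^ ds.length)
        = ∑ _L' ∈ 𝓕, ((1:ℝ)/2) ^ (ds.length + 1) * uJ J ^ ds.length := by
          rw [Finset.sum_const, nsmul_eq_mul]
      _ ≤ _ := Finset.sum_le_sum h2
  have h4 : 0 < (𝓕.card : ℝ) * (((1:ℝ)/2) ^ (ds.length + 1) * uJ J ^ ds.length) := by positivity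
  have h5 : (0:ℝ) < (1/(2 * (𝓕.card:ℝ))) := by positivity
  rw [mixS]
  nlinarith [mul_le_mul_of_nonneg_left h3 (le_of_lt h5)]

theorem sum_mixT (hF : 𝓕.Nonempty) (ds : List D) :
    ∑ j : J, mixT act2 τ0 𝓕 θ ds j = mixS act2 τ0 𝓕 θ ds := by
  have hcard : (Fintype.card J : ℝ) * uJ J = 1 := by
    rw [uJ]
    have h0 : (0:ℝ) < (Fintype.card J : ℝ) := by exact_mod_cast Fintype.card_pos
    field_simp
  have key : ∀ L' ∈ 𝓕,
      ∑ j : J, ((∑ t ∈ Finset.range (ds.length + 2),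
            ((1:ℝ)/2) ^ (t+1) * Wt act2 (compStrat (θ L') t) ds * ((compStrat (θ L') t) ds).f j)
          + ((1:ℝ)/2) ^ (ds.length + 2) * uJ J ^ (ds.length + 1))
      = ((∑ t ∈ Finset.range (ds.length + 1),
            ((1:ℝ)/2) ^ (t+1) * Wt act2 (compStrat (θ L') t) ds)
          + ((1:ℝ)/2) ^ (ds.length + 1) * uJ J ^ ds.length) := by
    intro L' _
    rw [Finset.sum_add_distrib, Finset.sum_const, Finset.sum_comm, nsmul_eq_mul,
      Finset.card_univ]
    have h1 : ∀ t ∈ Finset.range (ds.length + 2),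
        ∑ j : J, ((1:ℝ)/2) ^ (t+1) * Wt act2 (compStrat (θ L') t) ds
            * ((compStrat (θ L') t) ds).f j
          = ((1:ℝ)/2) ^ (t+1) * Wt act2 (compStrat (θ L') t) ds := by
      intro t _
      rw [← Finset.mul_sum, ((compStrat (θ L') t) ds).sum_one, mul_one]
    rw [Finset.sum_congr rfl h1, Finset.sum_range_succ,
      Wt_compStrat_of_le act2 (θ L') ds (ds.length + 1) (by omega)]
    linear_combination (((1:ℝ)/2) ^ (ds.length + 2) * uJ J ^ ds.length) * hcard
  simp only [mixT, mixS]
  rw [Finset.sum_add_distrib, ← Finset.mul_sum, (τ0 ds).sum_one, mul_one, ← Finset.mul_sum,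
    Finset.sum_comm, Finset.sum_congr rfl key]

theorem mixS_append (hF : 𝓕.Nonempty) (ds : List D) (d : D) :
    mixS act2 τ0 𝓕 θ (ds ++ [d]) = mixT act2 τ0 𝓕 θ ds (act2 d) := by
  have hlen : (ds ++ [d]).length = ds.length + 1 := by simp
  have hin : ∀ L' ∈ 𝓕,
      ((∑ t ∈ Finset.range ((ds ++ [d]).length + 1),
          ((1:ℝ)/2) ^ (t+1) * Wt act2 (compStrat (θ L') t) (ds ++ [d]))
        + ((1:ℝ)/2) ^ ((ds ++ [d]).length + 1) * uJ J ^ (ds ++ [d]).length)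
      = ((∑ t ∈ Finset.range (ds.length + 2),
          ((1:ℝ)/2) ^ (t+1) * Wt act2 (compStrat (θ L') t) ds
            * ((compStrat (θ L') t) ds).f (act2 d))
        + ((1:ℝ)/2) ^ (ds.length + 2) * uJ J ^ (ds.length + 1)) := by
    intro L' _
    rw [hlen]
    congr 1
    refine Finset.sum_congr rfl fun t _ => ?_
    rw [Wt_append, mul_assoc]
  rw [mixS, mixT, Finset.sum_congr rfl hin, Wt_append, mul_assoc]

/-- The mixture behavioral strategy of player 2. -/
def mixStrat (hF : 𝓕.Nonempty) : Strategy2 J D := fun ds =>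
  { f := fun j => mixT act2 τ0 𝓕 θ ds j / mixS act2 τ0 𝓕 θ ds
    nonneg := fun j => div_nonneg (mixT_nonneg act2 τ0 θ ds j) (le_of_lt (mixS_pos act2 τ0 θ hF ds))
    sum_one := by
      rw [← Finset.sum_div, sum_mixT act2 τ0 θ hF ds,
        div_self (ne_of_gt (mixS_pos act2 τ0 θ hF ds))] }

theorem mixS_nil (hF : 𝓕.Nonempty) : mixS act2 τ0 𝓕 θ ([] : List D) = 1 := by
  have hN : (0:ℝ) < 𝓕.card := by exact_mod_cast Finset.card_pos.mpr hF
  have hin : ∀ L' ∈ 𝓕,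
      ((∑ t ∈ Finset.range (([]:List D).length + 1),
          ((1:ℝ)/2) ^ (t+1) * Wt act2 (compStrat (θ L') t) ([]:List D))
        + ((1:ℝ)/2) ^ (([]:List D).length + 1) * uJ J ^ ([]:List D).length) = 1 := by
    intro L' _
    simp only [List.length_nil]
    rw [Finset.sum_range_one, Wt_nil]
    norm_num
  rw [mixS, Finset.sum_congr rfl hin, Finset.sum_const, nsmul_eq_mul, mul_one, Wt_nil]
  field_simp
  ring

theorem Wt_mixStrat (hF : 𝓕.Nonempty) (ds : List D) :
    Wt act2 (mixStrat act2 τ0 θ hF) ds = mixS act2 τ0 𝓕 θ ds := by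
  induction ds using List.reverseRecOn with
  | nil => rw [Wt_nil, mixS_nil act2 τ0 θ hF]
  | append_singleton ds d IH =>
    rw [Wt_append, IH]
    have happ : (mixStrat act2 τ0 θ hF ds).f (act2 d)
        = mixT act2 τ0 𝓕 θ ds (act2 d) / mixS act2 τ0 𝓕 θ ds := rfl
    rw [happ, mixS_append act2 τ0 θ hF,
      mul_div_cancel₀ _ (ne_of_gt (mixS_pos act2 τ0 θ hF ds))]

theorem mixS_ge_base (ds : List D) : (1/2) * Wt act2 τ0 ds ≤ mixS act2 τ0 𝓕 θ ds := by
  have hN : (0:ℝ) ≤ 𝓕.card := by positivity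
  have hu := uJ_pos (J := J)
  have h0 : 0 ≤ ∑ L' ∈ 𝓕,
      ((∑ t ∈ Finset.range (ds.length + 1),
          ((1:ℝ)/2) ^ (t+1) * Wt act2 (compStrat (θ L') t) ds)
        + ((1:ℝ)/2) ^ (ds.length + 1) * uJ J ^ ds.length) := by
    refine Finset.sum_nonneg fun L' _ => add_nonneg
      (Finset.sum_nonneg fun t _ => mul_nonneg (by positivity) (Wt_nonneg _ _ _)) (by positivity)
  have h5 : (0:ℝ) ≤ (1/(2 * (𝓕.card:ℝ))) := by positivity
  rw [mixS]
  nlinarith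

theorem mixS_ge_comp (hF : 𝓕.Nonempty) {L' : Finset K} (hL' : L' ∈ 𝓕) (t : ℕ) (ds : List D) :
    (1/(2 * 𝓕.card)) * (((1:ℝ)/2) ^ (t+1) * Wt act2 (compStrat (θ L') t) ds)
      ≤ mixS act2 τ0 𝓕 θ ds := by
  have hN : (0:ℝ) < 𝓕.card := by exact_mod_cast Finset.card_pos.mpr hF
  have hu := uJ_pos (J := J)
  have h1 : 0 ≤ (1/2) * Wt act2 τ0 ds := mul_nonneg (by norm_num) (Wt_nonneg _ _ _)
  have h5 : (0:ℝ) ≤ (1/(2 * (𝓕.card:ℝ))) := by positivity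
  have hterm : ((1:ℝ)/2) ^ (t+1) * Wt act2 (compStrat (θ L') t) ds
      ≤ ((∑ s ∈ Finset.range (ds.length + 1),
          ((1:ℝ)/2) ^ (s+1) * Wt act2 (compStrat (θ L') s) ds)
        + ((1:ℝ)/2) ^ (ds.length + 1) * uJ J ^ ds.length) := by
    rcases Nat.lt_or_ge t (ds.length + 1) with hlt | hge
    · have hmem : t ∈ Finset.range (ds.length + 1) := Finset.mem_range.mpr hlt
      have h6 : ((1:ℝ)/2) ^ (t+1) * Wt act2 (compStrat (θ L') t) ds
          ≤ ∑ s ∈ Finset.range (ds.length + 1),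
              ((1:ℝ)/2) ^ (s+1) * Wt act2 (compStrat (θ L') s) ds := by
        exact Finset.single_le_sum
          (f := fun s => ((1:ℝ)/2) ^ (s+1) * Wt act2 (compStrat (θ L') s) ds)
          (fun s _ => mul_nonneg (by positivity) (Wt_nonneg _ _ _)) hmem
      have htail : (0:ℝ) ≤ ((1:ℝ)/2) ^ (ds.length + 1) * uJ J ^ ds.length := by positivity
      linarith
    · have hWt : Wt act2 (compStrat (θ L') t) ds = uJ J ^ ds.length :=
        Wt_compStrat_of_le act2 (θ L') ds t (by omega)
      have hpow : ((1:ℝ)/2) ^ (t+1) ≤ ((1:ℝ)/2) ^ (ds.length + 1) :=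
        pow_le_pow_of_le_one (by norm_num) (by norm_num) (by omega)
      have hs : 0 ≤ ∑ s ∈ Finset.range (ds.length + 1),
          ((1:ℝ)/2) ^ (s+1) * Wt act2 (compStrat (θ L') s) ds :=
        Finset.sum_nonneg fun s _ => mul_nonneg (by positivity) (Wt_nonneg _ _ _)
      rw [hWt]
      nlinarith [pow_nonneg (le_of_lt hu) ds.length]
  have hsum : ((1:ℝ)/2) ^ (t+1) * Wt act2 (compStrat (θ L') t) ds
      ≤ ∑ L'' ∈ 𝓕, ((∑ s ∈ Finset.range (ds.length + 1),
          ((1:ℝ)/2) ^ (s+1) * Wt act2 (compStrat (θ L'') s) ds)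
        + ((1:ℝ)/2) ^ (ds.length + 1) * uJ J ^ ds.length) := by
    refine le_trans hterm (Finset.single_le_sum
      (f := fun L'' => ((∑ s ∈ Finset.range (ds.length + 1),
          ((1:ℝ)/2) ^ (s+1) * Wt act2 (compStrat (θ L'') s) ds)
        + ((1:ℝ)/2) ^ (ds.length + 1) * uJ J ^ ds.length)) (fun L'' _ => ?_) hL')
    refine add_nonneg
      (Finset.sum_nonneg fun s _ => mul_nonneg (by positivity) (Wt_nonneg _ _ _)) (by positivity)
  rw [mixS]
  nlinarith [mul_le_mul_of_nonneg_left hsum h5]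

end Mix


theorem exists_pos_of_sum_pos {α : Type*} [Fintype α] {f : α → ℝ}
    (h : 0 < ∑ a : α, f a) : ∃ a : α, 0 < f a := by
  by_contra hc
  push_neg at hc
  have : ∑ a : α, f a ≤ 0 := Finset.sum_nonpos fun a _ => hc a
  linarith

namespace Game

variable {K I J C D : Type*} [Fintype K] [Fintype I] [Fintype J] [Fintype C] [Fintype D]
variable (G : Game K I J C D)

theorem mem_B1 {L : Finset K} {c : C} {k : K} :
    k ∈ G.B1 L c ↔ ∃ l ∈ L, ∃ d : D, 0 < G.p l (G.act₁ c) (G.act₂ d) (c, d, k) := by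
  rw [B1, Finset.mem_filter]
  simp

theorem B1pseq_nil (L : Finset K) : G.B1pseq L [] = L := rfl

theorem B1pseq_append (L : Finset K) (cs : List C) (c : C) :
    G.B1pseq L (cs ++ [c]) = G.B1p (G.B1pseq L cs) c := by
  rw [B1pseq, List.foldl_append]
  rfl

/-- Sum of probabilities of plays with a given sequence of signals for player 1,
no target state before the last step, and a given last state. -/
def coefW (δ : FDist K) (σ : Strategy1 I C) (ρ : Strategy2 J D) (r : ℕ)
    (h₁ : List C) (k : K) : ℝ :=
  ∑ w : Hist K C D r,
    if w.sig1 = h₁ ∧ (∀ i : Fin (r + 1), i.val < r → w.state i ∉ G.T) ∧ w.last = k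
    then G.playProb δ σ ρ r w else 0

theorem coefW_nonneg (δ : FDist K) (σ : Strategy1 I C) (ρ : Strategy2 J D) (r : ℕ)
    (h₁ : List C) (k : K) : 0 ≤ G.coefW δ σ ρ r h₁ k :=
  Finset.sum_nonneg fun w _ => by
    by_cases h : w.sig1 = h₁ ∧ (∀ i : Fin (r + 1), i.val < r → w.state i ∉ G.T) ∧ w.last = k
    · rw [if_pos h]; exact G.playProb_nonneg δ σ ρ r w
    · rw [if_neg h]

theorem sig1_hist0 (w : Hist K C D 0) : w.sig1 = [] := by
  have := w.sig1_length
  exact List.length_eq_zero_iff.mp this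

/-- Exactness: under a strategy of player 2 that plays every action with positive
probability before time `t`, every state of the pessimistic belief of player 1 is
reached with positive probability together with the observed signals. -/
theorem coef_pos (δ : FDist K) (σ : Strategy1 I C) (ρ : Strategy2 J D) {L : Finset K}
    (hδ : ∀ k ∈ L, 0 < δ.f k) {t : ℕ}
    (hρ : ∀ ds : List D, ds.length < t → ∀ j : J, 0 < (ρ ds).f j) :
    ∀ r, r ≤ t → ∀ wst : Hist K C D r,
      0 < G.playProb δ σ ρ r wst →
      (∀ i : Fin (r + 1), i.val < r → wst.state i ∉ G.T) →
      ∀ k ∈ G.B1pseq L wst.sig1, 0 < G.coefW δ σ ρ r wst.sig1 k := by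
  intro r
  induction r with
  | zero =>
    intro _ wst _ _ k hk
    rw [sig1_hist0 wst] at hk ⊢
    rw [B1pseq_nil] at hk
    have hterm : (0:ℝ) < (if (Hist.mk k (Fin.elim0) : Hist K C D 0).sig1 = ([] : List C)
        ∧ (∀ i : Fin 1, i.val < 0 → (Hist.mk k (Fin.elim0) : Hist K C D 0).state i ∉ G.T)
        ∧ (Hist.mk k (Fin.elim0) : Hist K C D 0).last = k
        then G.playProb δ σ ρ 0 ⟨k, Fin.elim0⟩ else 0) := by
      rw [if_pos ⟨sig1_hist0 _, fun i hi => absurd hi (by omega), rfl⟩, playProb_zero]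
      exact hδ k hk
    calc (0:ℝ) < _ := hterm
      _ ≤ G.coefW δ σ ρ 0 [] k := by
        refine Finset.single_le_sum (f := fun w : Hist K C D 0 =>
          if w.sig1 = ([] : List C) ∧ (∀ i : Fin 1, i.val < 0 → w.state i ∉ G.T) ∧ w.last = k
          then G.playProb δ σ ρ 0 w else 0) (fun w _ => ?_) (Finset.mem_univ _)
        by_cases h : w.sig1 = ([] : List C)
            ∧ (∀ i : Fin 1, i.val < 0 → w.state i ∉ G.T) ∧ w.last = k
        · rw [if_pos h]; exact G.playProb_nonneg δ σ ρ 0 w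
        · rw [if_neg h]
  | succ r IH =>
    intro hrt wst hpos hnoT k hk
    -- decompose wst
    have hwst : Hist.snocH wst.init (wst.steps (Fin.last r)) = wst := Hist.snocH_init_self wst
    set wi := wst.init with hwi
    set x := wst.steps (Fin.last r) with hx
    obtain ⟨c, d, k₁⟩ := x
    -- positivity of the pieces
    rw [← hwst, playProb_snocH] at hpos
    obtain ⟨hPwi, hfac⟩ := pos_factors (G.playProb_nonneg δ σ ρ r wi)
      (mul_nonneg (mul_nonneg ((σ wi.sig1).nonneg _) ((ρ wi.sig2).nonneg _))
        (G.p_nonneg _ _ _ _)) hpos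
    obtain ⟨hσρ, hpf⟩ := pos_factors (mul_nonneg ((σ wi.sig1).nonneg _)
      ((ρ wi.sig2).nonneg _)) (G.p_nonneg _ _ _ _) hfac
    have hσf : 0 < (σ wi.sig1).f (G.act₁ c) :=
      (pos_factors ((σ wi.sig1).nonneg _) ((ρ wi.sig2).nonneg _) hσρ).1
    -- signals of wst
    have hsig : wst.sig1 = wi.sig1 ++ [c] := by
      rw [← hwst, Hist.sig1_snocH]
    -- no-T for wi
    have hnoTwi : ∀ i : Fin (r + 1), i.val < r → wi.state i ∉ G.T := by
      intro i hi
      have h3 := hnoT i.castSucc (show (i.castSucc).val < r + 1 by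
        simp only [Fin.coe_castSucc]; omega)
      rw [← hwst, Hist.state_snocH_castSucc] at h3
      exact h3
    -- IH gives positivity of all coefficients at time r
    have hIH := IH (by omega) wi hPwi hnoTwi
    -- unfold membership of k
    rw [hsig, B1pseq_append, B1p, mem_B1] at hk
    obtain ⟨l, hl, d', hp'⟩ := hk
    have hlmem : l ∈ G.B1pseq L wi.sig1 := (Finset.mem_sdiff.mp hl).1
    have hlT : l ∉ G.T := (Finset.mem_sdiff.mp hl).2
    have hcoefl := hIH l hlmem
    obtain ⟨w', hw'⟩ := exists_pos_of_sum_pos (by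
      rw [coefW] at hcoefl
      exact hcoefl)
    have hw'cond : w'.sig1 = wi.sig1 ∧ (∀ i : Fin (r + 1), i.val < r → w'.state i ∉ G.T)
        ∧ w'.last = l := by
      by_contra hcond
      rw [if_neg hcond] at hw'
      exact absurd hw' (lt_irrefl 0)
    rw [if_pos hw'cond] at hw'
    -- the extended play
    set wnew := Hist.snocH w' (c, d', k) with hwnew
    have hsig' : wnew.sig1 = wst.sig1 := by
      rw [hwnew, Hist.sig1_snocH, hw'cond.1, hsig]
    have hnoTnew : ∀ i : Fin (r + 2), i.val < r + 1 → wnew.state i ∉ G.T := by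
      intro i hi
      have hieq : i = (⟨i.val, hi⟩ : Fin (r + 1)).castSucc := Fin.ext rfl
      rw [hieq, hwnew, Hist.state_snocH_castSucc]
      rcases Nat.lt_or_ge i.val r with hir | hir
      · exact hw'cond.2.1 ⟨i.val, hi⟩ hir
      · have : (⟨i.val, hi⟩ : Fin (r + 1)) = Fin.last r := Fin.ext (by simp; omega)
        rw [this, Hist.state_last_eq, hw'cond.2.2]
        exact hlT
    have hlastnew : wnew.last = k := Hist.snocH_last _ _
    have hPnew : 0 < G.playProb δ σ ρ (r + 1) wnew := by
      rw [hwnew, playProb_snocH, hw'cond.1]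
      have hρf : 0 < (ρ w'.sig2).f (G.act₂ d') := by
        refine hρ w'.sig2 ?_ _
        rw [Hist.sig2_length]
        omega
      have hplast : 0 < G.p w'.last (G.act₁ c) (G.act₂ d') (c, d', k) := by
        rw [hw'cond.2.2]
        exact hp'
      positivity
    -- conclude
    have hterm : (0:ℝ) < (if wnew.sig1 = wst.sig1
        ∧ (∀ i : Fin (r + 2), i.val < r + 1 → wnew.state i ∉ G.T) ∧ wnew.last = k
        then G.playProb δ σ ρ (r+1) wnew else 0) := by
      rw [if_pos ⟨hsig', hnoTnew, hlastnew⟩]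
      exact hPnew
    calc (0:ℝ) < _ := hterm
      _ ≤ G.coefW δ σ ρ (r+1) wst.sig1 k := by
        refine Finset.single_le_sum (f := fun w : Hist K C D (r+1) =>
          if w.sig1 = wst.sig1 ∧ (∀ i : Fin (r + 2), i.val < r + 1 → w.state i ∉ G.T) ∧ w.last = k
          then G.playProb δ σ ρ (r+1) w else 0) (fun w _ => ?_) (Finset.mem_univ wnew)
        by_cases h : w.sig1 = wst.sig1
            ∧ (∀ i : Fin (r + 2), i.val < r + 1 → w.state i ∉ G.T) ∧ w.last = k
        · rw [if_pos h]; exact G.playProb_nonneg δ σ ρ _ w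
        · rw [if_neg h]

end Game


namespace Hist

def histKVEquiv (K C D : Type*) (s : ℕ) : Hist K C D s ≃ K × (Fin s → C × D × K) where
  toFun h := (h.first, h.steps)
  invFun p := ⟨p.1, p.2⟩
  left_inv h := rfl
  right_inv p := rfl

end Hist

namespace Game

variable {K I J C D : Type*} [Fintype K] [Fintype I] [Fintype J] [Fintype C] [Fintype D]
variable (G : Game K I J C D)

theorem massOf_dirac (k0 : K) (σ' : Strategy1 I C) (ρ' : Strategy2 J D) (s : ℕ)
    (P : Hist K C D s → Prop) :
    G.massOf (dirac k0) σ' ρ' s P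
      = ∑ v : Fin s → C × D × K,
          if P ⟨k0, v⟩ then G.playProb (dirac k0) σ' ρ' s ⟨k0, v⟩ else 0 := by
  rw [massOf, ← Equiv.sum_comp (Hist.histKVEquiv K C D s).symm
      (fun h => if P h then G.playProb (dirac k0) σ' ρ' s h else 0), Fintype.sum_prod_type]
  rw [Finset.sum_eq_single k0]
  · rfl
  · intro k _ hk
    refine Finset.sum_eq_zero fun v _ => ?_
    have h0 : G.playProb (dirac k0) σ' ρ' s (⟨k, v⟩ : Hist K C D s) = 0 :=
      G.playProb_dirac_ne σ' ρ' s _ hk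
    have hid : (Hist.histKVEquiv K C D s).symm (k, v) = (⟨k, v⟩ : Hist K C D s) := rfl
    rw [hid]
    by_cases hP : P ⟨k, v⟩
    · rw [if_pos hP]
      exact h0
    · rw [if_neg hP]
  · intro hmem; exact absurd (Finset.mem_univ _) hmem

theorem massOf_avoid_split (δ : FDist K) (σ : Strategy1 I C) (ρ : Strategy2 J D) (t s : ℕ) :
    G.massOf δ σ ρ (t + s) (fun h => ¬ h.visits G.T)
      = ∑ w : Hist K C D t,
          if ¬ w.visits G.T then
            G.playProb δ σ ρ t w *
              G.massOf (dirac w.last) (shiftStrat1 σ w.sig1) (shiftStrat2 ρ w.sig2) s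
                (fun h => ¬ h.visits G.T)
          else 0 := by
  rw [massOf, sum_hist_split]
  refine Finset.sum_congr rfl fun w _ => ?_
  by_cases hv : w.visits G.T
  · rw [if_neg (not_not_intro hv)]
    refine Finset.sum_eq_zero fun v _ => ?_
    rw [if_neg (not_not_intro ((Hist.visits_extendH G.T w v).mpr (Or.inl hv)))]
  · rw [if_pos hv, massOf_dirac, Finset.mul_sum]
    refine Finset.sum_congr rfl fun v _ => ?_
    have hcont : (⟨w.last, v⟩ : Hist K C D s) = Hist.contH w v := rfl
    by_cases hvc : (Hist.contH w v).visits G.T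
    · rw [if_neg, hcont, if_neg (not_not_intro hvc), mul_zero]
      intro hcon
      exact hcon ((Hist.visits_extendH G.T w v).mpr (Or.inr hvc))
    · rw [if_pos, hcont, if_pos hvc, G.playProb_extendH]
      intro hcon
      rcases (Hist.visits_extendH G.T w v).mp hcon with h | h
      · exact hv h
      · exact hvc h

theorem massOf_scaled (δ : FDist K) (σ : Strategy1 I C) (ρ ρ' : Strategy2 J D) {c : ℝ}
    (hc : 0 ≤ c) (hW : ∀ ds : List D, c * Wt G.act₂ ρ ds ≤ Wt G.act₂ ρ' ds) (n : ℕ)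
    (P : Hist K C D n → Prop) :
    c * G.massOf δ σ ρ n P ≤ G.massOf δ σ ρ' n P := by
  rw [massOf, massOf, Finset.mul_sum]
  refine Finset.sum_le_sum fun h _ => ?_
  by_cases hP : P h
  · rw [if_pos hP, if_pos hP, playProb_eq_baseP_mul_Wt, playProb_eq_baseP_mul_Wt]
    calc c * (G.baseP δ σ n h * Wt G.act₂ ρ h.sig2)
        = G.baseP δ σ n h * (c * Wt G.act₂ ρ h.sig2) := by ring
      _ ≤ G.baseP δ σ n h * Wt G.act₂ ρ' h.sig2 :=
          mul_le_mul_of_nonneg_left (hW _) (G.baseP_nonneg δ σ n h)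
  · rw [if_neg hP, if_neg hP, mul_zero]

variable [Nonempty J]

theorem massOf_mixStrat_le (δ : FDist K) (σ : Strategy1 I C) (τ0 : Strategy2 J D)
    {𝓕 : Finset (Finset K)} (θ : Finset K → Strategy2 J D) (hF : 𝓕.Nonempty) (n : ℕ)
    (P : Hist K C D n → Prop) :
    G.massOf δ σ (mixStrat G.act₂ τ0 θ hF) n P ≤ (1/2) * G.massOf δ σ τ0 n P + 1/2 := by
  set ρ := mixStrat G.act₂ τ0 θ hF with hρ
  have hRge : ∀ ds : List D, 0 ≤ mixS G.act₂ τ0 𝓕 θ ds - (1/2) * Wt G.act₂ τ0 ds := by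
    intro ds
    have := mixS_ge_base (K := K) G.act₂ τ0 θ (𝓕 := 𝓕) ds
    linarith
  have hRsum : ∑ h : Hist K C D n,
      G.baseP δ σ n h * (mixS G.act₂ τ0 𝓕 θ h.sig2 - (1/2) * Wt G.act₂ τ0 h.sig2) = 1/2 := by
    have h1 : ∀ h ∈ Finset.univ (α := Hist K C D n),
        G.baseP δ σ n h * (mixS G.act₂ τ0 𝓕 θ h.sig2 - (1/2) * Wt G.act₂ τ0 h.sig2)
          = G.playProb δ σ ρ n h - (1/2) * G.playProb δ σ τ0 n h := by
      intro h _
      rw [playProb_eq_baseP_mul_Wt, playProb_eq_baseP_mul_Wt, hρ, Wt_mixStrat]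
      ring
    rw [Finset.sum_congr rfl h1, Finset.sum_sub_distrib, G.playProb_total, ← Finset.mul_sum,
      G.playProb_total]
    norm_num
  have h2 : G.massOf δ σ ρ n P = (1/2) * G.massOf δ σ τ0 n P
      + ∑ h : Hist K C D n, (if P h then
          G.baseP δ σ n h * (mixS G.act₂ τ0 𝓕 θ h.sig2 - (1/2) * Wt G.act₂ τ0 h.sig2) else 0) := by
    rw [massOf, massOf, Finset.mul_sum, ← Finset.sum_add_distrib]
    refine Finset.sum_congr rfl fun h _ => ?_
    by_cases hP : P h
    · rw [if_pos hP, if_pos hP, if_pos hP, playProb_eq_baseP_mul_Wt, playProb_eq_baseP_mul_Wt,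
        hρ, Wt_mixStrat]
      ring
    · rw [if_neg hP, if_neg hP, if_neg hP]
      ring
  rw [h2]
  have h3 : ∑ h : Hist K C D n, (if P h then
      G.baseP δ σ n h * (mixS G.act₂ τ0 𝓕 θ h.sig2 - (1/2) * Wt G.act₂ τ0 h.sig2) else 0)
      ≤ ∑ h : Hist K C D n,
        G.baseP δ σ n h * (mixS G.act₂ τ0 𝓕 θ h.sig2 - (1/2) * Wt G.act₂ τ0 h.sig2) := by
    refine Finset.sum_le_sum fun h _ => ?_
    by_cases hP : P h
    · rw [if_pos hP]
    · rw [if_neg hP]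
      exact mul_nonneg (G.baseP_nonneg δ σ n h) (hRge _)
  linarith

theorem shiftStrat2_compStrat (θL : Strategy2 J D) {t : ℕ} {ds0 : List D}
    (hlen : ds0.length = t) : shiftStrat2 (compStrat θL t) ds0 = θL := by
  have := compStrat_drop θL ds0
  rw [hlen] at this
  exact this

/-- The value of a component strategy is `< 1` when the support of the
conditional distribution at the switching time is exactly `L'`. -/
theorem comp_val_lt_one (δ : FDist K) (σ : Strategy1 I C) {t : ℕ} (θL : Strategy2 J D)
    {L' : Finset K} (hL'ne : L'.Nonempty)
    (hθ : ∀ σ', G.val (uniform L' hL'ne) σ' θL < 1)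
    (h₁ : List C)
    (hcoef : ∀ k ∈ L' \ G.T, 0 < G.coefW δ σ (compStrat θL t) t h₁ k)
    (hne : (L' \ G.T).Nonempty) :
    G.val δ σ (compStrat θL t) < 1 := by
  set ρ : Strategy2 J D := compStrat θL t with hρdef
  set σs : Strategy1 I C := shiftStrat1 σ h₁ with hσs
  set Γ : ℝ := G.val (uniform L' hL'ne) σs θL with hΓdef
  have hΓ : Γ < 1 := hθ σs
  set S : Finset K := L' \ G.T with hSdef
  set c : ℝ := S.inf' hne (fun k => G.coefW δ σ ρ t h₁ k) with hc
  have hcpos : 0 < c := by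
    rw [hc, Finset.lt_inf'_iff]
    exact fun k hk => hcoef k hk
  have hcle : ∀ k ∈ S, c ≤ G.coefW δ σ ρ t h₁ k := fun k hk => Finset.inf'_le _ hk
  have hcard : (0:ℝ) < L'.card := by exact_mod_cast Finset.card_pos.mpr hL'ne
  set ε : ℝ := c * (L'.card * (1 - Γ)) with hεdef
  have hεpos : 0 < ε := by
    have : 0 < 1 - Γ := by linarith
    positivity
  have key : ∀ s : ℕ, ε ≤ G.massOf δ σ ρ (t + s) (fun h => ¬ h.visits G.T) := by
    intro s
    rw [massOf_avoid_split]
    have step1 : ∑ k ∈ S, G.coefW δ σ ρ t h₁ k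
          * G.massOf (dirac k) σs θL s (fun h => ¬ h.visits G.T)
        ≤ ∑ w : Hist K C D t,
            (if ¬ w.visits G.T then
              G.playProb δ σ ρ t w *
                G.massOf (dirac w.last) (shiftStrat1 σ w.sig1) (shiftStrat2 ρ w.sig2) s
                  (fun h => ¬ h.visits G.T)
            else 0) := by
      have hexp : ∀ k ∈ S, G.coefW δ σ ρ t h₁ k
            * G.massOf (dirac k) σs θL s (fun h => ¬ h.visits G.T)
          = ∑ w : Hist K C D t,
              (if w.sig1 = h₁ ∧ (∀ i : Fin (t + 1), i.val < t → w.state i ∉ G.T) ∧ w.last = k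
              then G.playProb δ σ ρ t w
                * G.massOf (dirac k) σs θL s (fun h => ¬ h.visits G.T) else 0) := by
        intro k _
        rw [coefW, Finset.sum_mul]
        refine Finset.sum_congr rfl fun w _ => ?_
        by_cases hcond : w.sig1 = h₁ ∧ (∀ i : Fin (t + 1), i.val < t → w.state i ∉ G.T)
            ∧ w.last = k
        · rw [if_pos hcond, if_pos hcond]
        · rw [if_neg hcond, if_neg hcond, zero_mul]
      rw [Finset.sum_congr rfl hexp, Finset.sum_comm]
      refine Finset.sum_le_sum fun w _ => ?_
      by_cases hc1 : w.sig1 = h₁ ∧ (∀ i : Fin (t + 1), i.val < t → w.state i ∉ G.T)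
          ∧ w.last ∈ S
      · have hnv : ¬ w.visits G.T := by
          rintro ⟨m, hm⟩
          rcases Nat.lt_or_ge m.val t with hmt | hmt
          · exact hc1.2.1 m hmt hm
          · have hmeq : m = Fin.last t := Fin.ext (by
              have := m.isLt
              simp only [Fin.val_last]
              omega)
            rw [hmeq, Hist.state_last_eq] at hm
            have := Finset.mem_sdiff.mp hc1.2.2
            exact this.2 hm
        have hsum : ∑ k ∈ S, (if w.sig1 = h₁
              ∧ (∀ i : Fin (t + 1), i.val < t → w.state i ∉ G.T) ∧ w.last = k
            then G.playProb δ σ ρ t w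
              * G.massOf (dirac k) σs θL s (fun h => ¬ h.visits G.T) else 0)
            = G.playProb δ σ ρ t w
              * G.massOf (dirac w.last) σs θL s (fun h => ¬ h.visits G.T) := by
          rw [Finset.sum_eq_single w.last]
          · rw [if_pos ⟨hc1.1, hc1.2.1, rfl⟩]
          · intro k _ hk
            rw [if_neg]
            rintro ⟨-, -, hlast⟩
            exact hk hlast.symm
          · intro habs
            exact absurd hc1.2.2 habs
        rw [hsum, if_pos hnv, hc1.1, shiftStrat2_compStrat θL w.sig2_length]
      · have hz : ∀ k ∈ S, (if w.sig1 = h₁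
              ∧ (∀ i : Fin (t + 1), i.val < t → w.state i ∉ G.T) ∧ w.last = k
            then G.playProb δ σ ρ t w
              * G.massOf (dirac k) σs θL s (fun h => ¬ h.visits G.T) else 0) = 0 := by
          intro k hk
          rw [if_neg]
          rintro ⟨hs1, hs2, hs3⟩
          exact hc1 ⟨hs1, hs2, hs3 ▸ hk⟩
        rw [Finset.sum_congr rfl hz, Finset.sum_const, smul_zero]
        by_cases hv : ¬ w.visits G.T
        · rw [if_pos hv]
          exact mul_nonneg (G.playProb_nonneg δ σ ρ t w) (G.massOf_nonneg _ _ _ _ _)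
        · rw [if_neg hv]
    have step2 : ε ≤ ∑ k ∈ S, G.coefW δ σ ρ t h₁ k
        * G.massOf (dirac k) σs θL s (fun h => ¬ h.visits G.T) := by
      have hA : ∀ k, G.massOf (dirac k) σs θL s (fun h => ¬ h.visits G.T)
          = 1 - G.reachProb (dirac k) σs θL s := by
        intro k
        have := G.massOf_add_not (dirac k) σs θL s (fun h => h.visits G.T)
        rw [← reachProb_eq_massOf] at this
        linarith
      have hnn : ∀ k, 0 ≤ G.massOf (dirac k) σs θL s (fun h => ¬ h.visits G.T) :=
        fun k => G.massOf_nonneg _ _ _ _ _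
      have h4 : ∑ k ∈ S, c * G.massOf (dirac k) σs θL s (fun h => ¬ h.visits G.T)
          ≤ ∑ k ∈ S, G.coefW δ σ ρ t h₁ k
            * G.massOf (dirac k) σs θL s (fun h => ¬ h.visits G.T) :=
        Finset.sum_le_sum fun k hk => mul_le_mul_of_nonneg_right (hcle k hk) (hnn k)
      have h5 : ∑ k ∈ S, G.massOf (dirac k) σs θL s (fun h => ¬ h.visits G.T)
          = ∑ k ∈ L', (1 - G.reachProb (dirac k) σs θL s) := by
        rw [Finset.sum_congr rfl (fun k _ => hA k)]
        refine Finset.sum_subset (Finset.sdiff_subset) fun k hkL hkS => ?_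
        have hkT : k ∈ G.T := by
          by_contra hkT
          exact hkS (Finset.mem_sdiff.mpr ⟨hkL, hkT⟩)
        rw [G.reachProb_dirac_mem σs θL hkT]
        ring
      have h6 : ∑ k ∈ L', (1 - G.reachProb (dirac k) σs θL s)
          = L'.card * (1 - G.reachProb (uniform L' hL'ne) σs θL s) := by
        rw [Finset.sum_sub_distrib, Finset.sum_const, nsmul_eq_mul, mul_one]
        have h7 : G.reachProb (uniform L' hL'ne) σs θL s
            = ∑ k ∈ L', ((L'.card : ℝ))⁻¹ * G.reachProb (dirac k) σs θL s := by
          rw [G.reachProb_dirac_sum]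
          rw [← Finset.sum_subset (Finset.subset_univ L')]
          · refine Finset.sum_congr rfl fun k hk => ?_
            rw [uniform_f, if_pos hk]
          · intro k _ hk
            rw [uniform_f, if_neg hk, zero_mul]
        rw [h7, ← Finset.mul_sum]
        have hcne : (L'.card : ℝ) ≠ 0 := ne_of_gt hcard
        field_simp
      have h8 : L'.card * (1 - G.reachProb (uniform L' hL'ne) σs θL s)
          ≥ L'.card * (1 - Γ) := by
        have := G.reachProb_le_val (uniform L' hL'ne) σs θL s
        rw [← hΓdef] at this
        nlinarith
      calc ε = c * (L'.card * (1 - Γ)) := hεdef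
        _ ≤ c * (L'.card * (1 - G.reachProb (uniform L' hL'ne) σs θL s)) := by nlinarith
        _ = c * (∑ k ∈ L', (1 - G.reachProb (dirac k) σs θL s)) := by rw [h6]
        _ = c * (∑ k ∈ S, G.massOf (dirac k) σs θL s (fun h => ¬ h.visits G.T)) := by rw [h5]
        _ = ∑ k ∈ S, c * G.massOf (dirac k) σs θL s (fun h => ¬ h.visits G.T) := by
            rw [Finset.mul_sum]
        _ ≤ _ := h4
    exact le_trans step2 step1
  refine lt_of_le_of_lt (G.val_le_of_forall δ σ ρ (a := 1 - ε) fun n => ?_) (by linarith)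
  have hm := G.reachProb_mono_le δ σ ρ (Nat.le_add_left n t)
  have havoid := key n
  have := G.massOf_add_not δ σ ρ (t + n) (fun h => h.visits G.T)
  rw [← reachProb_eq_massOf] at this
  linarith

end Game


/-- if `𝓛` is upward-closed and every support in `𝓛` is positively
winning for player 2 in the original game, then every support positively winning
for player 2 in the `𝓛`-game is positively winning for player 2 in the original
game. -/
theorem Lgame_positive2_implies_positive2 (G : Game K I J C D) (𝓛 : Set (Finset K))
    (hup : ∀ L ∈ 𝓛, ∀ L' : Finset K, L ⊆ L' → L' ∈ 𝓛)
    (hpos : ∀ L ∈ 𝓛, ∀ hL : L.Nonempty, G.PositiveWin2 (uniform L hL)) :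
    ∀ (L : Finset K) (hL : L.Nonempty),
      (∃ τ, ∀ σ, G.Lval 𝓛 L (uniform L hL) σ τ < 1) →
      G.PositiveWin2 (uniform L hL) := by
  intro L hL hex
  obtain ⟨τ0, hτ⟩ := hex
  by_cases hempty : (∅ : Finset K) ∈ 𝓛
  · exact hpos L (hup ∅ hempty L (Finset.empty_subset L)) hL
  set δ : FDist K := uniform L hL with hδdef
  set 𝓕 : Finset (Finset K) := Finset.univ.filter (fun L' => L' ∈ 𝓛) with h𝓕
  have hmem𝓕 : ∀ L' : Finset K, L' ∈ 𝓕 ↔ L' ∈ 𝓛 := by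
    intro L'
    rw [h𝓕, Finset.mem_filter]
    simp
  by_cases hF : 𝓕.Nonempty
  swap
  · -- `𝓛` is empty and `τ0` works directly
    refine ⟨τ0, fun σ => ?_⟩
    have hsub : ∀ n, G.reachProb δ σ τ0 n ≤ G.massOf δ σ τ0 n (G.LWin 𝓛 L) := by
      intro n
      rw [Game.reachProb_eq_massOf]
      refine G.massOf_mono δ σ τ0 n _ _ fun h _ hv => ?_
      obtain ⟨m, hm⟩ := hv
      exact ⟨m, hm, fun r _ _ hcon => hF ⟨_, (hmem𝓕 _).mpr hcon⟩⟩
    have hLval : ∀ n, G.massOf δ σ τ0 n (G.LWin 𝓛 L) ≤ G.Lval 𝓛 L δ σ τ0 := fun n =>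
      le_ciSup (f := fun n => G.massOf δ σ τ0 n (G.LWin 𝓛 L))
        ⟨1, by rintro x ⟨m, rfl⟩; exact G.massOf_le_one δ σ τ0 m _⟩ n
    exact lt_of_le_of_lt
      (G.val_le_of_forall δ σ τ0 fun n => le_trans (hsub n) (hLval n)) (hτ σ)
  -- main case: `𝓕` nonempty
  have h𝓕ne : ∀ L' ∈ 𝓕, L'.Nonempty := by
    intro L' hL'
    rw [Finset.nonempty_iff_ne_empty]
    rintro rfl
    exact hempty ((hmem𝓕 ∅).mp hL')
  have hθex : ∀ L' : Finset K, ∃ θL : Strategy2 J D,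
      ∀ hL' : L' ∈ 𝓕, ∀ σ', G.val (uniform L' (h𝓕ne L' hL')) σ' θL < 1 := by
    intro L'
    by_cases hL' : L' ∈ 𝓕
    · obtain ⟨θL, hθL⟩ := hpos L' ((hmem𝓕 L').mp hL') (h𝓕ne L' hL')
      exact ⟨θL, fun _ σ' => hθL σ'⟩
    · exact ⟨fun _ => uniform Finset.univ Finset.univ_nonempty, fun hc => absurd hc hL'⟩
  choose θ hθ using hθex
  refine ⟨mixStrat G.act₂ τ0 θ hF, fun σ => ?_⟩
  set τstar : Strategy2 J D := mixStrat G.act₂ τ0 θ hF with hτstar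
  by_cases hcase : ∃ (t : ℕ) (w : Hist K C D t), 0 < G.playProb δ σ τstar t w
      ∧ (∀ i : Fin (t + 1), i.val < t → w.state i ∉ G.T)
      ∧ G.B1pseq L w.sig1 ∈ 𝓛
  · -- CASE 1: the pessimistic belief reaches `𝓛` with positive probability
    obtain ⟨t, w, hPpos, hnoT, hbel⟩ := hcase
    set L' : Finset K := G.B1pseq L w.sig1 with hL'def
    have hL'𝓕 : L' ∈ 𝓕 := (hmem𝓕 L').mpr hbel
    have hL'ne := h𝓕ne L' hL'𝓕
    set ρ : Strategy2 J D := compStrat (θ L') t with hρdef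
    have hbase : 0 < G.baseP δ σ t w := by
      rw [G.playProb_eq_baseP_mul_Wt δ σ τstar t w] at hPpos
      exact (pos_factors (G.baseP_nonneg δ σ t w) (Wt_nonneg _ _ _) hPpos).1
    have hPρ : 0 < G.playProb δ σ ρ t w := by
      rw [G.playProb_eq_baseP_mul_Wt, hρdef,
        Wt_compStrat_of_le G.act₂ (θ L') w.sig2 t (by rw [Hist.sig2_length])]
      have := uJ_pos (J := J)
      positivity
    have hδpos : ∀ k ∈ L, 0 < δ.f k := fun k hk => uniform_pos L hL hk
    have hρunif : ∀ ds : List D, ds.length < t → ∀ j : J, 0 < (ρ ds).f j := by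
      intro ds hds j
      rw [hρdef, compStrat_apply_lt (θ L') hds, unifJf]
      exact uJ_pos
    have hcoef := G.coef_pos δ σ ρ hδpos hρunif t le_rfl w hPρ hnoT
    have hSne : (L' \ G.T).Nonempty := by
      rw [Finset.sdiff_nonempty]
      intro hsub
      have hval := hθ L' hL'𝓕 σ
      have hreach : G.reachProb (uniform L' (h𝓕ne L' hL'𝓕)) σ (θ L') 0 = 1 := by
        have h0 : G.massOf (uniform L' (h𝓕ne L' hL'𝓕)) σ (θ L') 0
            (fun h => ¬ h.visits G.T) = 0 := by
          refine Finset.sum_eq_zero fun h _ => ?_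
          by_cases hv : h.visits G.T
          · rw [if_neg (not_not_intro hv)]
          · rw [if_pos hv, Game.playProb_zero]
            exact uniform_zero L' (h𝓕ne L' hL'𝓕)
              (fun hmem => hv (Hist.visits_of_first_mem h (hsub hmem)))
        have := G.massOf_add_not (uniform L' (h𝓕ne L' hL'𝓕)) σ (θ L') 0
          (fun h => h.visits G.T)
        rw [← Game.reachProb_eq_massOf] at this
        linarith
      have := G.reachProb_le_val (uniform L' (h𝓕ne L' hL'𝓕)) σ (θ L') 0
      rw [hreach] at this
      linarith
    have hcomp : G.val δ σ ρ < 1 := by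
      rw [hρdef]
      exact G.comp_val_lt_one δ σ (θ L') hL'ne (hθ L' hL'𝓕) w.sig1
        (fun k hk => hcoef k (Finset.mem_sdiff.mp hk).1) hSne
    set cρ : ℝ := (1/(2 * (𝓕.card : ℝ))) * ((1:ℝ)/2) ^ (t+1) with hcρ
    have hNpos : (0:ℝ) < 𝓕.card := by exact_mod_cast Finset.card_pos.mpr hF
    have hcρpos : 0 < cρ := by rw [hcρ]; positivity
    have hWcomp : ∀ ds : List D, cρ * Wt G.act₂ ρ ds ≤ Wt G.act₂ τstar ds := by
      intro ds
      rw [hτstar, Wt_mixStrat]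
      have hmg := mixS_ge_comp G.act₂ τ0 θ hF hL'𝓕 t ds
      calc cρ * Wt G.act₂ ρ ds
          = (1/(2 * (𝓕.card : ℝ))) * (((1:ℝ)/2) ^ (t+1) * Wt G.act₂ (compStrat (θ L') t) ds) := by
            rw [hcρ, hρdef]; ring
        _ ≤ _ := hmg
    have hfin : ∀ n, G.reachProb δ σ τstar n ≤ 1 - cρ * (1 - G.val δ σ ρ) := by
      intro n
      have h1 := G.massOf_scaled δ σ ρ τstar (le_of_lt hcρpos) hWcomp n
        (fun h => ¬ h.visits G.T)
      have h2 : 1 - G.val δ σ ρ ≤ G.massOf δ σ ρ n (fun h => ¬ h.visits G.T) := by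
        have ha := G.massOf_add_not δ σ ρ n (fun h => h.visits G.T)
        rw [← Game.reachProb_eq_massOf] at ha
        have hval := G.reachProb_le_val δ σ ρ n
        linarith
      have h3 := G.massOf_add_not δ σ τstar n (fun h => h.visits G.T)
      rw [← Game.reachProb_eq_massOf] at h3
      have h4 : cρ * (1 - G.val δ σ ρ) ≤ cρ * G.massOf δ σ ρ n (fun h => ¬ h.visits G.T) :=
        mul_le_mul_of_nonneg_left h2 (le_of_lt hcρpos)
      linarith
    have hend : 1 - cρ * (1 - G.val δ σ ρ) < 1 := by nlinarith
    exact lt_of_le_of_lt (G.val_le_of_forall δ σ τstar hfin) hend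
  · -- CASE 2: the belief almost surely never reaches `𝓛`
    push_neg at hcase
    have hkey : ∀ n, G.reachProb δ σ τstar n ≤ G.massOf δ σ τstar n (G.LWin 𝓛 L) := by
      intro n
      rw [Game.reachProb_eq_massOf]
      refine G.massOf_mono δ σ τstar n _ _ fun h hP hv => ?_
      have hex2 : ∃ i, ∃ hi : i < n + 1, h.state ⟨i, hi⟩ ∈ G.T := by
        obtain ⟨m, hm⟩ := hv
        refine ⟨m.val, m.isLt, ?_⟩
        have hme : (⟨m.val, m.isLt⟩ : Fin (n + 1)) = m := Fin.ext rfl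
        rwa [hme]
      obtain ⟨m₀, hm₀spec, hm₀min⟩ :
          ∃ m₀ : ℕ, (∃ hi : m₀ < n + 1, h.state ⟨m₀, hi⟩ ∈ G.T)
            ∧ ∀ j, j < m₀ → ¬ (∃ hj : j < n + 1, h.state ⟨j, hj⟩ ∈ G.T) :=
        ⟨Nat.find hex2, Nat.find_spec hex2, fun j hj => Nat.find_min hex2 hj⟩
      obtain ⟨hm₀lt, hm₀T⟩ := hm₀spec
      by_cases hbel : ∃ r, (1 ≤ r ∧ r ≤ m₀) ∧ G.B1pseq L (h.sig1.take r) ∈ 𝓛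
      · exfalso
        obtain ⟨t₀, ⟨ht₀1, ht₀m⟩, ht₀𝓛⟩ :
            ∃ t₀ : ℕ, (1 ≤ t₀ ∧ t₀ ≤ m₀) ∧ G.B1pseq L (h.sig1.take t₀) ∈ 𝓛 := hbel
        have ht₀n : t₀ ≤ n := by omega
        obtain ⟨s, rfl⟩ : ∃ s, n = t₀ + s := ⟨n - t₀, by omega⟩
        obtain ⟨w, v, hhw⟩ : ∃ (w : Hist K C D t₀) (v : Fin s → C × D × K),
            Hist.extendH w v = h :=
          ⟨((Hist.histExtendEquiv K C D t₀ s) h).1, ((Hist.histExtendEquiv K C D t₀ s) h).2,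
            (Hist.histExtendEquiv K C D t₀ s).left_inv h⟩
        have hsig1w : w.sig1 = h.sig1.take t₀ := by
          have hse := Hist.sig1_extendH w v
          rw [hhw] at hse
          have hlen := w.sig1_length
          rw [hse, List.take_left' hlen]
        have hPw : 0 < G.playProb δ σ τstar t₀ w := by
          rw [← hhw, G.playProb_extendH] at hP
          exact (pos_factors (G.playProb_nonneg δ σ τstar t₀ w)
            (G.playProb_nonneg _ _ _ s _) hP).1
        have hnoTw : ∀ i : Fin (t₀ + 1), i.val < t₀ → w.state i ∉ G.T := by
          intro i hi hiT
          have hstate : (Hist.extendH w v).state (Fin.castLE (by omega) i) = w.state i :=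
            Hist.state_extendH_le w i v
          rw [hhw] at hstate
          have hlt : i.val < m₀ := by omega
          refine hm₀min i.val hlt ⟨by omega, ?_⟩
          have hidx : (⟨i.val, by omega⟩ : Fin (t₀ + s + 1)) = Fin.castLE (by omega) i :=
            Fin.ext rfl
          rw [hidx, hstate]
          exact hiT
        exact (hcase t₀ w hPw hnoTw) (by rw [hsig1w]; exact ht₀𝓛)
      · push_neg at hbel
        refine ⟨⟨m₀, hm₀lt⟩, hm₀T, fun r hr1 hrm hin => ?_⟩
        exact hbel r ⟨hr1, hrm⟩ hin
    have hb : ∀ n, G.massOf δ σ τstar n (G.LWin 𝓛 L)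
        ≤ (1/2) * G.Lval 𝓛 L δ σ τ0 + 1/2 := by
      intro n
      refine le_trans (G.massOf_mixStrat_le δ σ τ0 θ hF n _) ?_
      have hLv : G.massOf δ σ τ0 n (G.LWin 𝓛 L) ≤ G.Lval 𝓛 L δ σ τ0 :=
        le_ciSup (f := fun n => G.massOf δ σ τ0 n (G.LWin 𝓛 L))
          ⟨1, by rintro x ⟨m, rfl⟩; exact G.massOf_le_one δ σ τ0 m _⟩ n
      linarith
    have hτlt := hτ σ
    refine lt_of_le_of_lt
      (G.val_le_of_forall δ σ τstar fun n => le_trans (hkey n) (hb n)) ?_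
    linarith
end
end

section
/- Let 𝓛 be an upward-closed collection of subsets of K (L ∈ 𝓛 and L ⊆ L' ⊆ K imply L' ∈ 𝓛) such that every support in 𝓛 is positively winning for player 2 in the original game. Suppose moreover that every support positively winning for player 2 in the 𝓛-game belongs to 𝓛. Then every support L ∉ 𝓛 is almost-surely winning for player 1 in the original game. -/
open scoped Classical

noncomputable section

namespace S17

open Finset

theorem FDist.exists_pos {X : Type*} [Fintype X] (δ : FDist X) : ∃ x, 0 < δ.f x := by
  by_contra h
  push_neg at h
  have h2 : (∑ x, δ.f x) ≤ 0 := Finset.sum_nonpos fun x _ => h x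
  rw [δ.sum_one] at h2; linarith

theorem uniform_f_pos {X : Type*} [Fintype X] {L : Finset X} (hL : L.Nonempty) {x : X}
    (hx : x ∈ L) : 0 < (uniform L hL).f x := by
  have hc : (0:ℝ) < (L.card : ℝ) := by exact_mod_cast Finset.card_pos.mpr hL
  simp only [uniform, if_pos hx]
  positivity

theorem uniform_f_pos_iff {X : Type*} [Fintype X] {L : Finset X} (hL : L.Nonempty) (x : X) :
    0 < (uniform L hL).f x ↔ x ∈ L := by
  refine ⟨fun h => ?_, fun h => uniform_f_pos hL h⟩
  by_contra hx
  simp only [uniform, if_neg hx] at h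
  exact lt_irrefl _ h

theorem uniformD_f_pos_iff {X : Type*} [Fintype X] [Nonempty X] {L : Finset X}
    (hL : L.Nonempty) (x : X) : 0 < (uniformD L).f x ↔ x ∈ L := by
  rw [uniformD, dif_pos hL]; exact uniform_f_pos_iff hL x

theorem dirac_f_pos_iff {X : Type*} [Fintype X] (k x : X) :
    0 < (dirac k).f x ↔ x = k := by
  simp only [dirac]
  by_cases h : x = k <;> simp [h]

theorem dirac_f_self {X : Type*} [Fintype X] (k : X) : (dirac k).f k = 1 := by simp [dirac]

variable {K C D : Type*}

namespace HistL

/-- append one step -/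
def snoc {n : ℕ} (h : Hist K C D n) (x : C × D × K) : Hist K C D (n+1) :=
  ⟨h.first, Fin.snoc h.steps x⟩

@[simp] theorem snoc_first {n : ℕ} (h : Hist K C D n) (x) : (snoc h x).first = h.first := rfl

theorem hist_ext {n : ℕ} {h g : Hist K C D n} (h1 : h.first = g.first)
    (h2 : h.steps = g.steps) : h = g := by
  cases h; cases g; cases h1; cases h2; rfl

@[simp] theorem init_snoc {n : ℕ} (h : Hist K C D n) (x) : (snoc h x).init = h := by
  refine hist_ext rfl (funext fun m => ?_)
  show (Fin.snoc h.steps x : Fin (n+1) → C × D × K) m.castSucc = h.steps m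
  simp

@[simp] theorem snoc_steps_last {n : ℕ} (h : Hist K C D n) (x) :
    (snoc h x).steps (Fin.last n) = x := by
  show (Fin.snoc h.steps x : Fin (n+1) → C × D × K) (Fin.last n) = x
  simp

theorem snoc_init_self {n : ℕ} (h : Hist K C D (n+1)) :
    snoc h.init (h.steps (Fin.last n)) = h := by
  refine hist_ext rfl ?_
  show (Fin.snoc (Fin.init h.steps) (h.steps (Fin.last n)) : Fin (n+1) → C × D × K) = h.steps
  exact Fin.snoc_init_self h.steps

@[simp] theorem last_snoc {n : ℕ} (h : Hist K C D n) (x) : (snoc h x).last = x.2.2 := by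
  show ((snoc h x).steps (Fin.last n)).2.2 = x.2.2
  rw [snoc_steps_last]

@[simp] theorem sig1_snoc {n : ℕ} (h : Hist K C D n) (x) :
    (snoc h x).sig1 = h.sig1 ++ [x.1] := by
  unfold Hist.sig1
  rw [List.ofFn_succ']
  simp only [snoc, Fin.snoc_castSucc, Fin.snoc_last, List.concat_eq_append]

@[simp] theorem sig2_snoc {n : ℕ} (h : Hist K C D n) (x) :
    (snoc h x).sig2 = h.sig2 ++ [x.2.1] := by
  unfold Hist.sig2
  rw [List.ofFn_succ']
  simp only [snoc, Fin.snoc_castSucc, Fin.snoc_last, List.concat_eq_append]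

@[simp] theorem sig1_length {n : ℕ} (h : Hist K C D n) : h.sig1.length = n := by
  simp [Hist.sig1]

@[simp] theorem sig2_length {n : ℕ} (h : Hist K C D n) : h.sig2.length = n := by
  simp [Hist.sig2]

@[simp] theorem sig1_hist0 (h : Hist K C D 0) : h.sig1 = [] := by simp [Hist.sig1]
@[simp] theorem sig2_hist0 (h : Hist K C D 0) : h.sig2 = [] := by simp [Hist.sig2]

theorem state_eq_first {n : ℕ} (h : Hist K C D n) (m : Fin (n+1)) (hm : (m : ℕ) = 0) :
    h.state m = h.first := by simp [Hist.state, hm]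

@[simp] theorem state_zero {n : ℕ} (h : Hist K C D n) :
    h.state ⟨0, Nat.succ_pos n⟩ = h.first := by simp [Hist.state]

theorem state_last {n : ℕ} (h : Hist K C D n) : h.state (Fin.last n) = h.last := by
  cases n with
  | zero => simp [Hist.state, Hist.last, Fin.last]
  | succ n =>
      show h.state (Fin.last (n+1)) = (h.steps (Fin.last n)).2.2
      rw [Hist.state, dif_neg (by simp [Fin.last])]
      congr 1

theorem state_snoc_castSucc {n : ℕ} (h : Hist K C D n) (x) (m : Fin (n+1)) :
    (snoc h x).state m.castSucc = h.state m := by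
  unfold Hist.state
  by_cases hm : (m : ℕ) = 0
  · rw [dif_pos (by simpa using hm), dif_pos hm]; rfl
  · rw [dif_neg (by simpa using hm), dif_neg hm]
    have hlt : (m : ℕ) - 1 < n := by have := m.isLt; omega
    have he : (⟨(m.castSucc : ℕ) - 1, by have := m.castSucc.isLt; omega⟩ : Fin (n+1)) =
        Fin.castSucc ⟨(m : ℕ) - 1, hlt⟩ := by ext; simp
    show ((snoc h x).steps _).2.2 = _
    rw [he]
    show ((Fin.snoc h.steps x : Fin (n+1) → C × D × K) (Fin.castSucc ⟨(m : ℕ) - 1, hlt⟩)).2.2 = _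
    rw [Fin.snoc_castSucc]

theorem state_snoc_last {n : ℕ} (h : Hist K C D n) (x) :
    (snoc h x).state (Fin.last (n+1)) = x.2.2 := by
  rw [state_last, last_snoc]

theorem visits_snoc {n : ℕ} (T : Finset K) (h : Hist K C D n) (x) :
    (snoc h x).visits T ↔ h.visits T ∨ x.2.2 ∈ T := by
  constructor
  · rintro ⟨m, hm⟩
    induction m using Fin.lastCases with
    | last => right; rwa [state_snoc_last] at hm
    | cast i => left; exact ⟨i, by rwa [state_snoc_castSucc] at hm⟩
  · rintro (⟨m, hm⟩ | hx)
    · exact ⟨m.castSucc, by rwa [state_snoc_castSucc]⟩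
    · exact ⟨Fin.last _, by rwa [state_snoc_last]⟩

end HistL

end S17
namespace S17

open Finset HistL

theorem exists_pos_of_sum_pos {α : Type*} {s : Finset α} {f : α → ℝ}
    (h : 0 < ∑ a ∈ s, f a) : ∃ a ∈ s, 0 < f a := by
  by_contra hc; push_neg at hc
  exact absurd (Finset.sum_nonpos hc) (by linarith)

theorem pos_factors {a b c : ℝ} (ha : 0 ≤ a) (hb : 0 ≤ b) (hc : 0 ≤ c) (h : 0 < a * b * c) :
    0 < a ∧ 0 < b ∧ 0 < c :=
  ⟨by nlinarith [mul_nonneg hb hc], by nlinarith [mul_nonneg ha hc],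
    by nlinarith [mul_nonneg ha hb]⟩

theorem pos_of_mul_pos {a b : ℝ} (ha : 0 ≤ a) (hb : 0 ≤ b) (h : 0 < a * b) :
    0 < a ∧ 0 < b := ⟨by nlinarith, by nlinarith⟩

variable {K I J C D : Type*} [Fintype K] [Fintype I] [Fintype J] [Fintype C] [Fintype D]

def snocEquiv (n : ℕ) : Hist K C D (n+1) ≃ Hist K C D n × (C × D × K) where
  toFun h := (h.init, h.steps (Fin.last n))
  invFun p := snoc p.1 p.2
  left_inv h := snoc_init_self h
  right_inv p := by cases p with | mk a b => simp [Prod.ext_iff]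

def histEquiv (n : ℕ) : Hist K C D n ≃ K × (Fin n → C × D × K) where
  toFun h := (h.first, h.steps)
  invFun p := ⟨p.1, p.2⟩
  left_inv h := rfl
  right_inv p := rfl

def fnSnocEquiv (n : ℕ) (α : Type*) : (Fin (n+1) → α) ≃ (Fin n → α) × α where
  toFun s := (Fin.init s, s (Fin.last n))
  invFun p := Fin.snoc p.1 p.2
  left_inv s := Fin.snoc_init_self s
  right_inv p := by cases p with | mk a b => simp [Prod.ext_iff, Fin.init_snoc]

theorem sum_hist_succ {α : Type*} [AddCommMonoid α] (n : ℕ) (F : Hist K C D (n+1) → α) :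
    ∑ h : Hist K C D (n+1), F h = ∑ h : Hist K C D n, ∑ x : C × D × K, F (snoc h x) :=
  calc ∑ h : Hist K C D (n+1), F h
      = ∑ p : Hist K C D n × (C × D × K), F (snoc p.1 p.2) :=
        Fintype.sum_equiv (snocEquiv n) _ _ fun h => by
          show F h = F (snoc h.init (h.steps (Fin.last n)))
          rw [snoc_init_self]
    _ = ∑ h : Hist K C D n, ∑ x : C × D × K, F (snoc h x) := Fintype.sum_prod_type _

theorem sum_hist {α : Type*} [AddCommMonoid α] (n : ℕ) (F : Hist K C D n → α) :
    ∑ h : Hist K C D n, F h = ∑ k : K, ∑ s : Fin n → C × D × K, F ⟨k, s⟩ :=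
  calc ∑ h : Hist K C D n, F h
      = ∑ p : K × (Fin n → C × D × K), F ⟨p.1, p.2⟩ :=
        Fintype.sum_equiv (histEquiv n) _ _ fun h => rfl
    _ = _ := Fintype.sum_prod_type _

theorem sum_fn_succ {α β : Type*} [Fintype β] [AddCommMonoid α] (n : ℕ)
    (F : (Fin (n+1) → β) → α) :
    ∑ s : Fin (n+1) → β, F s = ∑ s : Fin n → β, ∑ x : β, F (Fin.snoc s x) :=
  calc ∑ s : Fin (n+1) → β, F s
      = ∑ p : (Fin n → β) × β, F (Fin.snoc p.1 p.2) :=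
        Fintype.sum_equiv (fnSnocEquiv n β) _ _ fun s => by
          show F s = F (Fin.snoc (Fin.init s) (s (Fin.last n)))
          rw [Fin.snoc_init_self]
    _ = _ := Fintype.sum_prod_type _

variable (G : Game K I J C D)

/-- one-step transition factor appearing in `playProb`. -/
def step (σ : Strategy1 I C) (τ : Strategy2 J D) {n : ℕ} (h : Hist K C D n)
    (x : C × D × K) : ℝ :=
  ∑ i : I, ∑ j : J, (σ h.sig1).f i * (τ h.sig2).f j * G.p h.last i j x

variable {X : Type*}

theorem playProb_zero (δ : FDist K) (σ : Strategy1 I C) (τ : Strategy2 J D)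
    (h : Hist K C D 0) : G.playProb δ σ τ 0 h = δ.f h.first := rfl

theorem playProb_succ (δ : FDist K) (σ : Strategy1 I C) (τ : Strategy2 J D) {n : ℕ}
    (h : Hist K C D (n+1)) :
    G.playProb δ σ τ (n+1) h =
      G.playProb δ σ τ n h.init * step G σ τ h.init (h.steps (Fin.last n)) := rfl

theorem playProb_snoc (δ : FDist K) (σ : Strategy1 I C) (τ : Strategy2 J D) {n : ℕ}
    (h : Hist K C D n) (x) :
    G.playProb δ σ τ (n+1) (snoc h x) = G.playProb δ σ τ n h * step G σ τ h x := by
  rw [playProb_succ, init_snoc, snoc_steps_last]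

theorem step_nonneg (σ : Strategy1 I C) (τ : Strategy2 J D) {n : ℕ} (h : Hist K C D n) (x) :
    0 ≤ step G σ τ h x :=
  Finset.sum_nonneg fun i _ => Finset.sum_nonneg fun j _ =>
    mul_nonneg (mul_nonneg ((σ h.sig1).nonneg i) ((τ h.sig2).nonneg j)) (G.p_nonneg _ _ _ _)

theorem playProb_nonneg (δ : FDist K) (σ : Strategy1 I C) (τ : Strategy2 J D) :
    ∀ (n : ℕ) (h : Hist K C D n), 0 ≤ G.playProb δ σ τ n h
  | 0, h => δ.nonneg _
  | n+1, h => by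
      rw [playProb_succ]
      exact mul_nonneg (playProb_nonneg δ σ τ n h.init) (step_nonneg G σ τ _ _)

theorem step_sum (σ : Strategy1 I C) (τ : Strategy2 J D) {n : ℕ} (h : Hist K C D n) :
    ∑ x : C × D × K, step G σ τ h x = 1 := by
  unfold step
  rw [Finset.sum_comm]
  have key : ∀ i : I, (∑ x : C × D × K, ∑ j : J,
      (σ h.sig1).f i * (τ h.sig2).f j * G.p h.last i j x) = (σ h.sig1).f i := by
    intro i
    rw [Finset.sum_comm]
    have key2 : ∀ j : J, (∑ x : C × D × K,
        (σ h.sig1).f i * (τ h.sig2).f j * G.p h.last i j x)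
        = (σ h.sig1).f i * (τ h.sig2).f j := by
      intro j
      rw [← Finset.mul_sum, G.p_sum, mul_one]
    rw [Finset.sum_congr rfl fun j _ => key2 j, ← Finset.mul_sum, (τ h.sig2).sum_one, mul_one]
  rw [Finset.sum_congr rfl fun i _ => key i, (σ h.sig1).sum_one]

theorem step_pos_elim {σ : Strategy1 I C} {τ : Strategy2 J D} {n : ℕ} {h : Hist K C D n}
    {c : C} {d : D} {l : K} (hp : 0 < step G σ τ h (c, d, l)) :
    0 < (σ h.sig1).f (G.act₁ c) ∧ 0 < (τ h.sig2).f (G.act₂ d) ∧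
      0 < G.p h.last (G.act₁ c) (G.act₂ d) (c, d, l) := by
  obtain ⟨i, -, hi⟩ := exists_pos_of_sum_pos hp
  obtain ⟨j, -, hj⟩ := exists_pos_of_sum_pos hi
  obtain ⟨h1, h2, h3⟩ := pos_factors ((σ h.sig1).nonneg i) ((τ h.sig2).nonneg j)
    (G.p_nonneg _ _ _ _) hj
  obtain ⟨rfl, rfl⟩ := G.act_compat _ _ _ _ _ _ h3
  exact ⟨h1, h2, h3⟩

theorem step_pos_of {σ : Strategy1 I C} {τ : Strategy2 J D} {n : ℕ} {h : Hist K C D n}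
    {x : C × D × K} (i : I) (j : J) (h1 : 0 < (σ h.sig1).f i) (h2 : 0 < (τ h.sig2).f j)
    (h3 : 0 < G.p h.last i j x) : 0 < step G σ τ h x := by
  refine Finset.sum_pos' (fun i' _ => Finset.sum_nonneg fun j' _ => ?_)
    ⟨i, Finset.mem_univ i, Finset.sum_pos' (fun j' _ => ?_) ⟨j, Finset.mem_univ j, ?_⟩⟩
  · exact mul_nonneg (mul_nonneg ((σ h.sig1).nonneg i') ((τ h.sig2).nonneg j'))
      (G.p_nonneg _ _ _ _)
  · exact mul_nonneg (mul_nonneg ((σ h.sig1).nonneg i) ((τ h.sig2).nonneg j'))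
      (G.p_nonneg _ _ _ _)
  · positivity

theorem playProb_snoc_pos_parts {δ : FDist K} {σ : Strategy1 I C} {τ : Strategy2 J D} {n : ℕ}
    {h : Hist K C D n} {x} (hp : 0 < G.playProb δ σ τ (n+1) (snoc h x)) :
    0 < G.playProb δ σ τ n h ∧ 0 < step G σ τ h x := by
  rw [playProb_snoc] at hp
  exact pos_of_mul_pos (playProb_nonneg G δ σ τ n h) (step_nonneg G σ τ h x) hp

theorem sum_steps_playProb (δ : FDist K) (σ : Strategy1 I C) (τ : Strategy2 J D) :
    ∀ (n : ℕ) (k : K), ∑ s : Fin n → C × D × K, G.playProb δ σ τ n ⟨k, s⟩ = δ.f k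
  | 0, k => by
      have key : ∀ s : Fin 0 → C × D × K, G.playProb δ σ τ 0 ⟨k, s⟩ = δ.f k := fun _ => rfl
      rw [Finset.sum_congr rfl fun s _ => key s, Finset.sum_const, Finset.card_univ]
      have hc : Fintype.card (Fin 0 → C × D × K) = 1 := by simp
      rw [hc, one_smul]
  | n+1, k => by
      rw [sum_fn_succ]
      have key : ∀ s' : Fin n → C × D × K, (∑ x : C × D × K,
          G.playProb δ σ τ (n+1) ⟨k, Fin.snoc s' x⟩) = G.playProb δ σ τ n ⟨k, s'⟩ := by
        intro s'
        have he : ∀ x, (⟨k, Fin.snoc s' x⟩ : Hist K C D (n+1)) = snoc ⟨k, s'⟩ x := fun _ => rfl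
        calc (∑ x : C × D × K, G.playProb δ σ τ (n+1) ⟨k, Fin.snoc s' x⟩)
            = ∑ x : C × D × K, G.playProb δ σ τ n ⟨k, s'⟩ * step G σ τ ⟨k, s'⟩ x := by
              refine Finset.sum_congr rfl fun x _ => ?_
              rw [he x, playProb_snoc]
          _ = G.playProb δ σ τ n ⟨k, s'⟩ := by
              rw [← Finset.mul_sum, step_sum, mul_one]
      rw [Finset.sum_congr rfl fun s' _ => key s']
      exact sum_steps_playProb δ σ τ n k

theorem playProb_mass (δ : FDist K) (σ : Strategy1 I C) (τ : Strategy2 J D) (n : ℕ) :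
    ∑ h : Hist K C D n, G.playProb δ σ τ n h = 1 := by
  rw [sum_hist]
  rw [Finset.sum_congr rfl fun k _ => sum_steps_playProb G δ σ τ n k]
  exact δ.sum_one

theorem playProb_eq_first_mul (δ : FDist K) (σ : Strategy1 I C) (τ : Strategy2 J D) :
    ∀ (n : ℕ) (h : Hist K C D n),
      G.playProb δ σ τ n h = δ.f h.first * G.playProb (dirac h.first) σ τ n h
  | 0, h => by rw [playProb_zero, playProb_zero, dirac_f_self, mul_one]
  | n+1, h => by
      rw [playProb_succ, playProb_succ, playProb_eq_first_mul δ σ τ n h.init]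
      have he : h.init.first = h.first := rfl
      rw [he, mul_assoc]

end S17
namespace S17

open Finset HistL

variable {K I J C D : Type*} [Fintype K] [Fintype I] [Fintype J] [Fintype C] [Fintype D]
variable (G : Game K I J C D)

/-- probability of never visiting `T` within horizon `n`. -/
def noVisitProb (δ : FDist K) (σ : Strategy1 I C) (τ : Strategy2 J D) (n : ℕ) : ℝ :=
  ∑ h : Hist K C D n, if h.visits G.T then 0 else G.playProb δ σ τ n h

/-- finite-horizon payoff of the `𝓛`-game. -/
def LWP (𝓛 : Set (Finset K)) (L : Finset K) (δ : FDist K) (σ : Strategy1 I C)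
    (τ : Strategy2 J D) (n : ℕ) : ℝ :=
  ∑ h : Hist K C D n, if G.LWin 𝓛 L h then G.playProb δ σ τ n h else 0

theorem Lval_eq (𝓛 L δ σ τ) : G.Lval 𝓛 L δ σ τ = ⨆ n, LWP G 𝓛 L δ σ τ n := rfl

theorem reachProb_nonneg (δ σ τ) (n : ℕ) : 0 ≤ G.reachProb δ σ τ n :=
  Finset.sum_nonneg fun h _ => by
    by_cases hv : h.visits G.T
    · rw [if_pos hv]; exact playProb_nonneg G δ σ τ n h
    · rw [if_neg hv]

theorem noVisitProb_nonneg (δ σ τ) (n : ℕ) : 0 ≤ noVisitProb G δ σ τ n :=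
  Finset.sum_nonneg fun h _ => by
    by_cases hv : h.visits G.T
    · rw [if_pos hv]
    · rw [if_neg hv]; exact playProb_nonneg G δ σ τ n h

theorem LWP_nonneg (𝓛 L δ σ τ) (n : ℕ) : 0 ≤ LWP G 𝓛 L δ σ τ n :=
  Finset.sum_nonneg fun h _ => by
    by_cases hv : G.LWin 𝓛 L h
    · rw [if_pos hv]; exact playProb_nonneg G δ σ τ n h
    · rw [if_neg hv]

theorem reach_add_noVisit (δ σ τ) (n : ℕ) :
    G.reachProb δ σ τ n + noVisitProb G δ σ τ n = 1 := by
  unfold Game.reachProb noVisitProb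
  rw [← Finset.sum_add_distrib, ← playProb_mass G δ σ τ n]
  refine Finset.sum_congr rfl fun h _ => ?_
  by_cases hv : h.visits G.T <;> simp [hv]

theorem reachProb_le_one (δ σ τ) (n : ℕ) : G.reachProb δ σ τ n ≤ 1 := by
  have h := reach_add_noVisit G δ σ τ n
  have h2 := noVisitProb_nonneg G δ σ τ n
  linarith

theorem LWP_le_one (𝓛 L δ σ τ) (n : ℕ) : LWP G 𝓛 L δ σ τ n ≤ 1 := by
  rw [← playProb_mass G δ σ τ n]
  refine Finset.sum_le_sum fun h _ => ?_
  by_cases hv : G.LWin 𝓛 L h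
  · rw [if_pos hv]
  · rw [if_neg hv]; exact playProb_nonneg G δ σ τ n h

theorem visits_of_LWin {𝓛 L} {n : ℕ} {h : Hist K C D n} (hw : G.LWin 𝓛 L h) :
    h.visits G.T := ⟨hw.choose, hw.choose_spec.1⟩

theorem LWin_snoc {𝓛 : Set (Finset K)} {L : Finset K} {n : ℕ} {h : Hist K C D n} (x)
    (hw : G.LWin 𝓛 L h) : G.LWin 𝓛 L (snoc h x) := by
  obtain ⟨m, hmT, hmB⟩ := hw
  refine ⟨m.castSucc, by rwa [state_snoc_castSucc], fun r h1 h2 => ?_⟩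
  have hr : r ≤ n := le_trans (by simpa using h2) (Nat.lt_succ_iff.mp m.isLt)
  rw [sig1_snoc, List.take_append_of_le_length (by rwa [sig1_length])]
  exact hmB r h1 (by simpa using h2)

theorem reachProb_succ_le (δ σ τ) (n : ℕ) :
    G.reachProb δ σ τ n ≤ G.reachProb δ σ τ (n+1) := by
  unfold Game.reachProb
  rw [sum_hist_succ]
  refine Finset.sum_le_sum fun h _ => ?_
  by_cases hv : h.visits G.T
  · rw [if_pos hv]
    have key : ∀ x, (if (snoc h x).visits G.T then G.playProb δ σ τ (n+1) (snoc h x) else 0)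
        = G.playProb δ σ τ (n+1) (snoc h x) := fun x =>
      if_pos ((visits_snoc _ _ _).2 (Or.inl hv))
    rw [Finset.sum_congr rfl fun x _ => key x]
    have : (∑ x : C × D × K, G.playProb δ σ τ (n+1) (snoc h x)) = G.playProb δ σ τ n h := by
      have := fun x : C × D × K => playProb_snoc G δ σ τ h x
      rw [Finset.sum_congr rfl fun x _ => this x, ← Finset.mul_sum, step_sum, mul_one]
    rw [this]
  · rw [if_neg hv]
    refine Finset.sum_nonneg fun x _ => ?_
    by_cases hv2 : (snoc h x).visits G.T
    · rw [if_pos hv2]; exact playProb_nonneg G δ σ τ _ _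
    · rw [if_neg hv2]

theorem reachProb_mono (δ σ τ) {n m : ℕ} (hnm : n ≤ m) :
    G.reachProb δ σ τ n ≤ G.reachProb δ σ τ m := by
  induction m with
  | zero => cases Nat.le_zero.mp hnm; rfl
  | succ m ih =>
      rcases Nat.lt_or_ge n (m+1) with h | h
      · exact le_trans (ih (Nat.lt_succ_iff.mp h)) (reachProb_succ_le G δ σ τ m)
      · cases le_antisymm hnm h; rfl

theorem LWP_succ_le (𝓛 L δ σ τ) (n : ℕ) :
    LWP G 𝓛 L δ σ τ n ≤ LWP G 𝓛 L δ σ τ (n+1) := by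
  unfold LWP
  rw [sum_hist_succ]
  refine Finset.sum_le_sum fun h _ => ?_
  by_cases hv : G.LWin 𝓛 L h
  · rw [if_pos hv]
    have key : ∀ x, (if G.LWin 𝓛 L (snoc h x) then G.playProb δ σ τ (n+1) (snoc h x) else 0)
        = G.playProb δ σ τ (n+1) (snoc h x) := fun x => if_pos (LWin_snoc G x hv)
    rw [Finset.sum_congr rfl fun x _ => key x]
    have key2 := fun x : C × D × K => playProb_snoc G δ σ τ h x
    rw [Finset.sum_congr rfl fun x _ => key2 x, ← Finset.mul_sum, step_sum, mul_one]
  · rw [if_neg hv]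
    refine Finset.sum_nonneg fun x _ => ?_
    by_cases hv2 : G.LWin 𝓛 L (snoc h x)
    · rw [if_pos hv2]; exact playProb_nonneg G δ σ τ _ _
    · rw [if_neg hv2]

theorem LWP_mono (𝓛 L δ σ τ) {n m : ℕ} (hnm : n ≤ m) :
    LWP G 𝓛 L δ σ τ n ≤ LWP G 𝓛 L δ σ τ m := by
  induction m with
  | zero => cases Nat.le_zero.mp hnm; rfl
  | succ m ih =>
      rcases Nat.lt_or_ge n (m+1) with h | h
      · exact le_trans (ih (Nat.lt_succ_iff.mp h)) (LWP_succ_le G 𝓛 L δ σ τ m)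
      · cases le_antisymm hnm h; rfl

theorem val_le_one (δ σ τ) : G.val δ σ τ ≤ 1 :=
  Real.iSup_le (fun n => reachProb_le_one G δ σ τ n) zero_le_one

theorem reach_le_val (δ σ τ) (n : ℕ) : G.reachProb δ σ τ n ≤ G.val δ σ τ :=
  le_ciSup ⟨1, by rintro x ⟨n, rfl⟩; exact reachProb_le_one G δ σ τ n⟩ n

theorem Lval_le (𝓛 L δ σ τ) {c : ℝ} (hc : 0 ≤ c) (hn : ∀ n, LWP G 𝓛 L δ σ τ n ≤ c) :
    G.Lval 𝓛 L δ σ τ ≤ c := by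
  rw [Lval_eq]; exact Real.iSup_le hn hc

end S17
namespace S17

open Finset HistL

variable {K I J C D : Type*} [Fintype K] [Fintype I] [Fintype J] [Fintype C] [Fintype D]
  [Nonempty J] [Nonempty D]
variable (G : Game K I J C D)

/-- weight of a sequence of player-2 signals under strategy `τ`. -/
def wgt (τ : Strategy2 J D) (ds : List D) : ℝ :=
  ∏ r ∈ Finset.range ds.length, (τ (ds.take r)).f (G.act₂ (ds.getD r (Classical.arbitrary D)))

@[simp] theorem wgt_nil (τ : Strategy2 J D) : wgt G τ [] = 1 := by simp [wgt]

theorem wgt_append (τ : Strategy2 J D) (ds : List D) (d : D) :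
    wgt G τ (ds ++ [d]) = wgt G τ ds * (τ ds).f (G.act₂ d) := by
  unfold wgt
  rw [List.length_append, List.length_singleton, Finset.prod_range_succ]
  congr 1
  · refine Finset.prod_congr rfl fun r hr => ?_
    have hr' : r < ds.length := Finset.mem_range.mp hr
    rw [List.take_append_of_le_length hr'.le, List.getD_append ds [d] _ r hr']
  · rw [List.take_append_of_le_length (le_refl _), List.take_length]
    have hg : (ds ++ [d]).getD ds.length (Classical.arbitrary D) = d := by
      rw [List.getD_append_right]
      · simp
      · exact le_refl _
    rw [hg]

theorem wgt_nonneg (τ : Strategy2 J D) (ds : List D) : 0 ≤ wgt G τ ds :=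
  Finset.prod_nonneg fun r _ => (τ _).nonneg _

/-- `playProb` with the player-2 strategy factor removed. -/
def pbase (δ : FDist K) (σ : Strategy1 I C) : ∀ n : ℕ, Hist K C D n → ℝ
  | 0, h => δ.f h.first
  | n+1, h => pbase δ σ n h.init *
      ∑ i : I, (σ h.init.sig1).f i *
        G.p h.init.last i (G.act₂ (h.steps (Fin.last n)).2.1) (h.steps (Fin.last n))

theorem pbase_snoc (δ σ) {n : ℕ} (h : Hist K C D n) (x) :
    pbase G δ σ (n+1) (snoc h x) = pbase G δ σ n h *
      ∑ i : I, (σ h.sig1).f i * G.p h.last i (G.act₂ x.2.1) x := by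
  show pbase G δ σ n (snoc h x).init * _ = _
  rw [init_snoc, snoc_steps_last]

theorem step_collapse (σ : Strategy1 I C) (τ : Strategy2 J D) {n : ℕ} (h : Hist K C D n)
    (x : C × D × K) :
    step G σ τ h x = (τ h.sig2).f (G.act₂ x.2.1) *
      ∑ i : I, (σ h.sig1).f i * G.p h.last i (G.act₂ x.2.1) x := by
  obtain ⟨c, d, l⟩ := x
  unfold step
  rw [Finset.mul_sum]
  refine Finset.sum_congr rfl fun i _ => ?_
  rw [Finset.sum_eq_single (G.act₂ d)]
  · ring
  · intro j _ hj
    have hz : G.p h.last i j (c, d, l) = 0 := by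
      by_contra hp
      have hpos : 0 < G.p h.last i j (c, d, l) :=
        lt_of_le_of_ne (G.p_nonneg _ _ _ _) (Ne.symm hp)
      exact hj (G.act_compat _ _ _ _ _ _ hpos).2
    rw [hz, mul_zero]
  · intro hmem; exact absurd (Finset.mem_univ _) hmem

theorem playProb_eq_wgt (δ : FDist K) (σ : Strategy1 I C) (τ : Strategy2 J D) :
    ∀ (n : ℕ) (h : Hist K C D n),
      G.playProb δ σ τ n h = wgt G τ h.sig2 * pbase G δ σ n h
  | 0, h => by
      rw [playProb_zero, sig2_hist0, wgt_nil, one_mul]; rfl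
  | n+1, h => by
      conv_lhs => rw [← snoc_init_self h]
      rw [playProb_snoc, playProb_eq_wgt δ σ τ n h.init, step_collapse]
      conv_rhs => rw [← snoc_init_self h]
      rw [sig2_snoc, wgt_append, pbase_snoc]
      ring

/-- behavioral implementation of the half/half mixture of two
player-2 strategies. -/
def mixStrat (τ₁ τ₂ : Strategy2 J D) : Strategy2 J D := fun ds =>
  if hpos : 0 < wgt G τ₁ ds + wgt G τ₂ ds then
    { f := fun j => (wgt G τ₁ ds * (τ₁ ds).f j + wgt G τ₂ ds * (τ₂ ds).f j) /
        (wgt G τ₁ ds + wgt G τ₂ ds)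
      nonneg := fun j => div_nonneg
        (add_nonneg (mul_nonneg (wgt_nonneg G τ₁ ds) ((τ₁ ds).nonneg j))
          (mul_nonneg (wgt_nonneg G τ₂ ds) ((τ₂ ds).nonneg j))) hpos.le
      sum_one := by
        rw [← Finset.sum_div, Finset.sum_add_distrib, ← Finset.mul_sum, ← Finset.mul_sum,
          (τ₁ ds).sum_one, (τ₂ ds).sum_one, mul_one, mul_one, div_self hpos.ne'] }
  else uniform Finset.univ Finset.univ_nonempty

theorem wgt_mixStrat (τ₁ τ₂ : Strategy2 J D) (ds : List D) :
    wgt G (mixStrat G τ₁ τ₂) ds = (wgt G τ₁ ds + wgt G τ₂ ds) / 2 := by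
  induction ds using List.reverseRecOn with
  | nil => simp
  | append_singleton ds d ih =>
      rw [wgt_append, wgt_append, wgt_append, ih]
      by_cases hpos : 0 < wgt G τ₁ ds + wgt G τ₂ ds
      · rw [mixStrat, dif_pos hpos]
        show (wgt G τ₁ ds + wgt G τ₂ ds) / 2 *
          ((wgt G τ₁ ds * (τ₁ ds).f (G.act₂ d) + wgt G τ₂ ds * (τ₂ ds).f (G.act₂ d)) /
            (wgt G τ₁ ds + wgt G τ₂ ds)) = _
        field_simp
      · have h1 : wgt G τ₁ ds = 0 ∧ wgt G τ₂ ds = 0 := by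
          constructor <;>
            nlinarith [wgt_nonneg G τ₁ ds, wgt_nonneg G τ₂ ds]
        rw [h1.1, h1.2]
        ring

theorem playProb_mixStrat (δ : FDist K) (σ : Strategy1 I C) (τ₁ τ₂ : Strategy2 J D)
    (n : ℕ) (h : Hist K C D n) :
    G.playProb δ σ (mixStrat G τ₁ τ₂) n h =
      (G.playProb δ σ τ₁ n h + G.playProb δ σ τ₂ n h) / 2 := by
  rw [playProb_eq_wgt, playProb_eq_wgt, playProb_eq_wgt, wgt_mixStrat]
  ring

theorem LWP_mixStrat (𝓛 L δ σ) (τ₁ τ₂ : Strategy2 J D) (n : ℕ) :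
    LWP G 𝓛 L δ σ (mixStrat G τ₁ τ₂) n =
      (LWP G 𝓛 L δ σ τ₁ n + LWP G 𝓛 L δ σ τ₂ n) / 2 := by
  unfold LWP
  have key : ∀ h, (if G.LWin 𝓛 L h then G.playProb δ σ (mixStrat G τ₁ τ₂) n h else 0) =
      ((if G.LWin 𝓛 L h then G.playProb δ σ τ₁ n h else 0) +
        (if G.LWin 𝓛 L h then G.playProb δ σ τ₂ n h else 0)) / 2 := by
    intro h
    by_cases hv : G.LWin 𝓛 L h
    · rw [if_pos hv, if_pos hv, if_pos hv, playProb_mixStrat]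
    · rw [if_neg hv, if_neg hv, if_neg hv]; norm_num
  rw [Finset.sum_congr rfl fun h _ => key h, ← Finset.sum_div, Finset.sum_add_distrib]

/-- the uniformly random strategy of player 2. -/
def tauR : Strategy2 J D := fun _ => uniform Finset.univ Finset.univ_nonempty

theorem tauR_pos (ds : List D) (j : J) : 0 < (tauR (J := J) (D := D) ds).f j :=
  uniform_f_pos _ (Finset.mem_univ j)

end S17
namespace S17

open Finset HistL

theorem getD_concat_length {α : Type*} (l : List α) (a d : α) :
    (l ++ [a]).getD l.length d = a := by
  rw [List.getD_append_right]
  · simp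
  · exact le_refl _

variable {K I J C D : Type*} [Fintype K] [Fintype I] [Fintype J] [Fintype C] [Fintype D]
  [Nonempty I] [Nonempty C]
variable (G : Game K I J C D)

theorem B1pseq_nil (L : Finset K) : G.B1pseq L [] = L := rfl

theorem B1pseq_append (L : Finset K) (cs ds : List C) :
    G.B1pseq L (cs ++ ds) = G.B1pseq (G.B1pseq L cs) ds := by
  unfold Game.B1pseq
  rw [List.foldl_append]

theorem B1pseq_concat (L : Finset K) (cs : List C) (c : C) :
    G.B1pseq L (cs ++ [c]) = G.B1p (G.B1pseq L cs) c := by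
  rw [B1pseq_append]; rfl

theorem mem_B1 {L : Finset K} {c : C} {k : K} :
    k ∈ G.B1 L c ↔ ∃ l ∈ L, ∃ d : D, 0 < G.p l (G.act₁ c) (G.act₂ d) (c, d, k) := by
  unfold Game.B1
  rw [Finset.mem_filter]
  exact ⟨fun h => h.2, fun h => ⟨Finset.mem_univ _, h⟩⟩

theorem mem_B1p {L : Finset K} {c : C} {k : K} :
    k ∈ G.B1p L c ↔ ∃ l, l ∈ L ∧ l ∉ G.T ∧ ∃ d : D,
      0 < G.p l (G.act₁ c) (G.act₂ d) (c, d, k) := by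
  unfold Game.B1p
  rw [mem_B1]
  constructor
  · rintro ⟨l, hl, d, hd⟩
    rw [Finset.mem_sdiff] at hl
    exact ⟨l, hl.1, hl.2, d, hd⟩
  · rintro ⟨l, h1, h2, d, hd⟩
    exact ⟨l, Finset.mem_sdiff.mpr ⟨h1, h2⟩, d, hd⟩

/-- consistency of a signal sequence with a player-1 strategy. -/
def sCons (σ : Strategy1 I C) (cs : List C) : Prop :=
  ∀ r, r < cs.length → 0 < (σ (cs.take r)).f (G.act₁ (cs.getD r (Classical.arbitrary C)))

theorem sCons_nil (σ : Strategy1 I C) : sCons G σ [] := fun r hr => by simp at hr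

theorem sCons_concat (σ : Strategy1 I C) (cs : List C) (c : C) :
    sCons G σ (cs ++ [c]) ↔ sCons G σ cs ∧ 0 < (σ cs).f (G.act₁ c) := by
  unfold sCons
  constructor
  · intro hc
    refine ⟨fun r hr => ?_, ?_⟩
    · have := hc r (by rw [List.length_append, List.length_singleton]; omega)
      rwa [List.take_append_of_le_length hr.le, List.getD_append _ _ _ _ hr] at this
    · have := hc cs.length (by rw [List.length_append, List.length_singleton]; omega)
      rwa [List.take_append_of_le_length (le_refl _), List.take_length,
        getD_concat_length] at this
  · rintro ⟨h1, h2⟩ r hr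
    rw [List.length_append, List.length_singleton] at hr
    rcases Nat.lt_or_ge r cs.length with h | h
    · rw [List.take_append_of_le_length h.le, List.getD_append _ _ _ _ h]
      exact h1 r h
    · have hre : r = cs.length := by omega
      subst hre
      rwa [List.take_append_of_le_length (le_refl _), List.take_length, getD_concat_length]

theorem step_pos_elim' {σ : Strategy1 I C} {τ : Strategy2 J D} {n : ℕ} {h : Hist K C D n}
    {x : C × D × K} (hp : 0 < step G σ τ h x) :
    0 < (σ h.sig1).f (G.act₁ x.1) ∧ 0 < (τ h.sig2).f (G.act₂ x.2.1) ∧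
      0 < G.p h.last (G.act₁ x.1) (G.act₂ x.2.1) x := by
  obtain ⟨c, d, l⟩ := x
  exact step_pos_elim G hp

theorem playProb_sCons (δ : FDist K) (σ : Strategy1 I C) (τ : Strategy2 J D) :
    ∀ (n : ℕ) (h : Hist K C D n), 0 < G.playProb δ σ τ n h → sCons G σ h.sig1 := by
  intro n
  induction n with
  | zero => intro h _; rw [sig1_hist0]; exact sCons_nil G σ
  | succ n ih =>
      intro h hp
      obtain ⟨h', x, rfl⟩ : ∃ h' x, h = snoc h' x :=
        ⟨h.init, h.steps (Fin.last n), (snoc_init_self h).symm⟩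
      obtain ⟨h1, h2⟩ := playProb_snoc_pos_parts G hp
      rw [sig1_snoc, sCons_concat]
      exact ⟨ih h' h1, (step_pos_elim' G h2).1⟩

theorem last_mem_belief (δ : FDist K) (σ : Strategy1 I C) (τ : Strategy2 J D)
    {M : Finset K} (hδ : ∀ k, 0 < δ.f k → k ∈ M) :
    ∀ (n : ℕ) (h : Hist K C D n), 0 < G.playProb δ σ τ n h →
      (∀ m : Fin (n+1), (m : ℕ) < n → h.state m ∉ G.T) →
      h.last ∈ G.B1pseq M h.sig1 := by
  intro n
  induction n with
  | zero =>
      intro h hp _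
      rw [sig1_hist0, B1pseq_nil]
      exact hδ _ hp
  | succ n ih =>
      intro h hp hT
      obtain ⟨h', x, rfl⟩ : ∃ h' x, h = snoc h' x :=
        ⟨h.init, h.steps (Fin.last n), (snoc_init_self h).symm⟩
      obtain ⟨h1, h2⟩ := playProb_snoc_pos_parts G hp
      have hT' : ∀ m : Fin (n+1), (m : ℕ) < n → h'.state m ∉ G.T := by
        intro m hm
        have := hT m.castSucc (by simpa using hm.trans n.lt_succ_self)
        rwa [state_snoc_castSucc] at this
      have hmem := ih h' h1 hT'
      have hlastT : h'.last ∉ G.T := by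
        have := hT (Fin.last n).castSucc (by simp)
        rwa [state_snoc_castSucc, state_last] at this
      obtain ⟨hσ, hτ, hP⟩ := step_pos_elim' G h2
      rw [sig1_snoc, B1pseq_concat, last_snoc]
      rw [mem_B1p]
      exact ⟨h'.last, hmem, hlastT, x.2.1, hP⟩

variable (𝓡 : Set (Finset K))

/-- the set of safe actions at pessimistic belief `M`. -/
def SafeSet (M : Finset K) : Finset I :=
  Finset.univ.filter fun i => ∀ c, G.act₁ c = i → G.B1p M c ∈ 𝓡 → G.B1p M c = ∅

theorem mem_SafeSet {M : Finset K} {i : I} :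
    i ∈ SafeSet G 𝓡 M ↔ ∀ c, G.act₁ c = i → G.B1p M c ∈ 𝓡 → G.B1p M c = ∅ := by
  unfold SafeSet
  rw [Finset.mem_filter]
  exact ⟨fun h => h.2, fun h => ⟨Finset.mem_univ _, h⟩⟩

theorem not_mem_SafeSet {M : Finset K} {i : I} (h : i ∉ SafeSet G 𝓡 M) :
    ∃ c, G.act₁ c = i ∧ G.B1p M c ∈ 𝓡 ∧ (G.B1p M c).Nonempty := by
  rw [mem_SafeSet] at h
  push_neg at h
  obtain ⟨c, h1, h2, h3⟩ := h
  exact ⟨c, h1, h2, h3⟩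

/-- the belief strategy of player 1: play uniformly among safe actions. -/
def sigStar (L₀ : Finset K) : Strategy1 I C := fun cs =>
  uniformD (SafeSet G 𝓡 (G.B1pseq L₀ cs))

theorem sigStar_shift (L₀ : Finset K) (cs : List C) :
    (fun ys => sigStar G 𝓡 L₀ (cs ++ ys)) = sigStar G 𝓡 (G.B1pseq L₀ cs) := by
  funext ys
  unfold sigStar
  rw [B1pseq_append]

theorem sigStar_pos_of_mem {L₀ : Finset K} {cs : List C} {i : I}
    (hi : i ∈ SafeSet G 𝓡 (G.B1pseq L₀ cs)) : 0 < (sigStar G 𝓡 L₀ cs).f i := by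
  unfold sigStar
  exact (uniformD_f_pos_iff ⟨i, hi⟩ i).mpr hi

theorem sigStar_mem_of_pos {L₀ : Finset K} {cs : List C} {i : I}
    (hne : (SafeSet G 𝓡 (G.B1pseq L₀ cs)).Nonempty)
    (hi : 0 < (sigStar G 𝓡 L₀ cs).f i) : i ∈ SafeSet G 𝓡 (G.B1pseq L₀ cs) := by
  unfold sigStar at hi
  exact (uniformD_f_pos_iff hne i).mp hi

/-- safety: under the belief strategy, pessimistic beliefs stay outside `𝓡`
as long as the target has not been visited. -/
theorem sigStar_safety (hSafeNE : ∀ M' : Finset K, M'.Nonempty → M' ∉ 𝓡 →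
      (SafeSet G 𝓡 M').Nonempty)
    {L₀ : Finset K} (hL₀ : L₀ ∉ 𝓡) (δ : FDist K) (hδ : ∀ k, 0 < δ.f k → k ∈ L₀)
    (τ : Strategy2 J D) :
    ∀ (n : ℕ) (h : Hist K C D n), 0 < G.playProb δ (sigStar G 𝓡 L₀) τ n h →
      (∀ m : Fin (n+1), (m : ℕ) < n → h.state m ∉ G.T) →
      G.B1pseq L₀ h.sig1 ∉ 𝓡 := by
  intro n
  induction n with
  | zero => intro h _ _; rw [sig1_hist0, B1pseq_nil]; exact hL₀
  | succ n ih =>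
      intro h hp hT
      obtain ⟨h', x, rfl⟩ : ∃ h' x, h = snoc h' x :=
        ⟨h.init, h.steps (Fin.last n), (snoc_init_self h).symm⟩
      obtain ⟨h1, h2⟩ := playProb_snoc_pos_parts G hp
      have hT' : ∀ m : Fin (n+1), (m : ℕ) < n → h'.state m ∉ G.T := by
        intro m hm
        have := hT m.castSucc (by simpa using hm.trans n.lt_succ_self)
        rwa [state_snoc_castSucc] at this
      have hb' : G.B1pseq L₀ h'.sig1 ∉ 𝓡 := ih h' h1 hT'
      have hmem' : h'.last ∈ G.B1pseq L₀ h'.sig1 :=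
        last_mem_belief G δ _ τ hδ n h' h1 hT'
      have hsafe := hSafeNE _ ⟨_, hmem'⟩ hb'
      obtain ⟨hσ, hτ, hP⟩ := step_pos_elim' G h2
      have hactsafe : G.act₁ x.1 ∈ SafeSet G 𝓡 (G.B1pseq L₀ h'.sig1) :=
        sigStar_mem_of_pos G 𝓡 hsafe hσ
      have hnew_mem : (snoc h' x).last ∈ G.B1pseq L₀ (snoc h' x).sig1 :=
        last_mem_belief G δ _ τ hδ (n+1) (snoc h' x) hp hT
      rw [sig1_snoc, B1pseq_concat]
      intro hin
      have hemp := (mem_SafeSet G 𝓡).mp hactsafe x.1 rfl hin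
      rw [sig1_snoc, B1pseq_concat] at hnew_mem
      rw [hemp] at hnew_mem
      exact absurd hnew_mem (Finset.notMem_empty _)

/-- if `σ` only plays safe actions, positive histories under `σ` are positive
under the belief strategy. -/
theorem transfer {σ : Strategy1 I C} {M : Finset K}
    (hB : ∀ cs, sCons G σ cs → ∀ i, 0 < (σ cs).f i → i ∈ SafeSet G 𝓡 (G.B1pseq M cs))
    (δ : FDist K) (τ' : Strategy2 J D) :
    ∀ (n : ℕ) (h : Hist K C D n), 0 < G.playProb δ σ τ' n h →
      0 < G.playProb δ (sigStar G 𝓡 M) τ' n h := by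
  intro n
  induction n with
  | zero => intro h hp; exact hp
  | succ n ih =>
      intro h hp
      obtain ⟨h', x, rfl⟩ : ∃ h' x, h = snoc h' x :=
        ⟨h.init, h.steps (Fin.last n), (snoc_init_self h).symm⟩
      obtain ⟨h1, h2⟩ := playProb_snoc_pos_parts G hp
      obtain ⟨hσ, hτ, hP⟩ := step_pos_elim' G h2
      have hcons := playProb_sCons G δ σ τ' n h' h1
      have hmem := hB h'.sig1 hcons _ hσ
      rw [playProb_snoc]
      exact mul_pos (ih h' h1)
        (step_pos_of G _ _ (sigStar_pos_of_mem G 𝓡 hmem) hτ hP)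

/-- positivity of each step along a history. -/
def stepsPos {n : ℕ} (h : Hist K C D n) : Prop :=
  ∀ r : Fin n, 0 < G.p (h.state r.castSucc) (G.act₁ (h.steps r).1)
    (G.act₂ (h.steps r).2.1) (h.steps r)

theorem snoc_steps_castSucc {n : ℕ} (h : Hist K C D n) (x) (r : Fin n) :
    (snoc h x).steps r.castSucc = h.steps r := by
  show (Fin.snoc h.steps x : Fin (n+1) → C × D × K) r.castSucc = h.steps r
  simp

theorem stepsPos_snoc {n : ℕ} {h : Hist K C D n} {x}
    (h1 : stepsPos G h) (h2 : 0 < G.p h.last (G.act₁ x.1) (G.act₂ x.2.1) x) :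
    stepsPos G (snoc h x) := by
  intro r
  induction r using Fin.lastCases with
  | last =>
      have e1 : (snoc h x).steps (Fin.last n) = x := snoc_steps_last h x
      have e2 : (snoc h x).state (Fin.last n).castSucc = h.last := by
        rw [state_snoc_castSucc, state_last]
      rw [e1, e2]
      exact h2
  | cast r =>
      have e1 : (snoc h x).steps r.castSucc = h.steps r := snoc_steps_castSucc h x r
      have e2 : (snoc h x).state r.castSucc.castSucc = h.state r.castSucc :=
        state_snoc_castSucc h x r.castSucc
      rw [e1, e2]
      exact h1 r

theorem playProb_pos_of_run (δ : FDist K) (σ : Strategy1 I C) (τ : Strategy2 J D)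
    (hτ : ∀ ds j, 0 < (τ ds).f j) :
    ∀ (n : ℕ) (h : Hist K C D n), 0 < δ.f h.first → stepsPos G h → sCons G σ h.sig1 →
      0 < G.playProb δ σ τ n h := by
  intro n
  induction n with
  | zero => intro h hδ2 _ _; exact hδ2
  | succ n ih =>
      intro h hδ2 hsp hsc
      obtain ⟨h', x, rfl⟩ : ∃ h' x, h = snoc h' x :=
        ⟨h.init, h.steps (Fin.last n), (snoc_init_self h).symm⟩
      rw [sig1_snoc, sCons_concat] at hsc
      have hsp' : stepsPos G h' := by
        intro r
        have := hsp r.castSucc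
        rwa [snoc_steps_castSucc, state_snoc_castSucc] at this
      have hlaststep : 0 < G.p h'.last (G.act₁ x.1) (G.act₂ x.2.1) x := by
        have := hsp (Fin.last n)
        rwa [snoc_steps_last, state_snoc_castSucc, state_last] at this
      rw [playProb_snoc]
      exact mul_pos (ih h' hδ2 hsp' hsc.1)
        (step_pos_of G _ _ hsc.2 (hτ _ _) hlaststep)

/-- every member of the pessimistic belief is the endpoint of a possible
pessimistic run. -/
theorem run_of_mem_belief (M : Finset K) (cs : List C) :
    ∀ l : K, l ∈ G.B1pseq M cs →
      ∃ (n : ℕ) (h : Hist K C D n), h.sig1 = cs ∧ h.first ∈ M ∧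
        (∀ m : Fin (n+1), (m : ℕ) ≤ n → h.state m ∉ G.T ∨ ((m : ℕ) = n ∧ h.last = l)) ∧
        h.last = l ∧ stepsPos G h := by
  induction cs using List.reverseRecOn with
  | nil =>
      intro l hl
      refine ⟨0, ⟨l, fun r => r.elim0⟩, by simp, hl, ?_, rfl, fun r => r.elim0⟩
      intro m hm
      right
      have : (m : ℕ) = 0 := Nat.le_zero.mp hm
      exact ⟨this, rfl⟩
  | append_singleton cs c ih =>
      intro l hl
      rw [B1pseq_concat, mem_B1p] at hl
      obtain ⟨l', hl'mem, hl'T, d, hd⟩ := hl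
      obtain ⟨n, h, hsig, hfirst, hstates, hlast, hsp⟩ := ih l' hl'mem
      refine ⟨n+1, snoc h (c, d, l), ?_, hfirst, ?_, ?_, ?_⟩
      · rw [sig1_snoc, hsig]
      · intro m hm
        induction m using Fin.lastCases with
        | last => right; exact ⟨rfl, by rw [last_snoc]⟩
        | cast r =>
            have hr : (r : ℕ) ≤ n := by
              have := r.isLt; omega
            rcases hstates r hr with hT | ⟨hrn, hrl⟩
            · left; rwa [state_snoc_castSucc]
            · left
              rw [state_snoc_castSucc]
              have : h.state r = h.last := by
                have : r = Fin.last n := by ext; simpa using hrn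
                rw [this, state_last]
              rw [this, hlast]
              exact hl'T
      · rw [last_snoc]
      · refine stepsPos_snoc G hsp ?_
        rw [hlast]
        exact hd

end S17
namespace S17

open Finset HistL

section Split

variable {K C D : Type*}

def htake : ∀ {a N : ℕ}, Hist K C D (a + N) → Hist K C D a
  | _, 0, h => h
  | _, N+1, h => htake h.init

def hsuffix : ∀ {a N : ℕ}, Hist K C D (a + N) → Hist K C D N
  | _, 0, h => ⟨h.last, fun r => r.elim0⟩
  | _, N+1, h => snoc (hsuffix h.init) (h.steps (Fin.last _))

def hjoin : ∀ {a N : ℕ}, Hist K C D a → (Fin N → C × D × K) → Hist K C D (a + N)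
  | _, 0, h, _ => h
  | _, N+1, h, s => snoc (hjoin h (Fin.init s)) (s (Fin.last N))

variable {a : ℕ}

theorem htake_zero (h : Hist K C D (a + 0)) : htake h = h := rfl
theorem htake_succ {N : ℕ} (h : Hist K C D (a + (N+1))) : htake h = htake h.init := rfl
theorem hsuffix_succ {N : ℕ} (h : Hist K C D (a + (N+1))) :
    hsuffix h = snoc (hsuffix h.init) (h.steps (Fin.last _)) := rfl

theorem hjoin_succ {N : ℕ} (h : Hist K C D a) (s : Fin (N+1) → C × D × K) :
    hjoin h s = snoc (hjoin h (Fin.init s)) (s (Fin.last N)) := rfl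

theorem steps_snoc {n : ℕ} (h : Hist K C D n) (x) :
    (snoc h x).steps = Fin.snoc h.steps x := rfl

theorem htake_snoc {N : ℕ} (h : Hist K C D (a + N)) (x) :
    htake (a := a) (N := N+1) (snoc h x) = htake h := by
  rw [htake_succ, init_snoc]

theorem hsuffix_snoc {N : ℕ} (h : Hist K C D (a + N)) (x) :
    hsuffix (a := a) (N := N+1) (snoc h x) = snoc (hsuffix h) x := by
  rw [hsuffix_succ, init_snoc, snoc_steps_last]

theorem htake_first : ∀ {N : ℕ} (h : Hist K C D (a + N)), (htake h).first = h.first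
  | 0, h => rfl
  | N+1, h => by rw [htake_succ]; exact htake_first h.init

theorem hsuffix_last : ∀ {N : ℕ} (h : Hist K C D (a + N)), (hsuffix h).last = h.last
  | 0, h => rfl
  | N+1, h => by
      rw [hsuffix_succ]
      rw [last_snoc]
      rfl

theorem sig1_split : ∀ {N : ℕ} (h : Hist K C D (a + N)),
    h.sig1 = (htake h).sig1 ++ (hsuffix h).sig1
  | 0, h => by
      rw [htake_zero]
      simp
  | N+1, h => by
      conv_lhs => rw [← snoc_init_self h]
      rw [sig1_snoc, sig1_split h.init, htake_succ, hsuffix_succ, sig1_snoc,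
        List.append_assoc]

theorem sig2_split : ∀ {N : ℕ} (h : Hist K C D (a + N)),
    h.sig2 = (htake h).sig2 ++ (hsuffix h).sig2
  | 0, h => by
      rw [htake_zero]
      simp
  | N+1, h => by
      conv_lhs => rw [← snoc_init_self h]
      rw [sig2_snoc, sig2_split h.init, htake_succ, hsuffix_succ, sig2_snoc,
        List.append_assoc]

theorem state_init {n : ℕ} (h : Hist K C D (n+1)) (m : Fin (n+1)) :
    h.init.state m = h.state m.castSucc := by
  conv_rhs => rw [← snoc_init_self h]
  rw [state_snoc_castSucc]

theorem state_htake : ∀ {N : ℕ} (h : Hist K C D (a + N)) (m : Fin (a+1)),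
    (htake h).state m = h.state (Fin.castLE (by omega) m)
  | 0, h, m => by
      rw [htake_zero]
      congr 1
  | N+1, h, m => by
      rw [htake_succ, state_htake h.init m, state_init]
      congr 1

theorem visits_hist0 (T : Finset K) (h : Hist K C D 0) : h.visits T ↔ h.first ∈ T := by
  constructor
  · rintro ⟨m, hm⟩
    rwa [state_eq_first h m (by omega)] at hm
  · intro hf
    exact ⟨⟨0, by omega⟩, by rwa [state_eq_first _ _ rfl]⟩

theorem visits_split (T : Finset K) : ∀ {N : ℕ} (h : Hist K C D (a + N)),
    (h.visits T ↔ (htake h).visits T ∨ (hsuffix h).visits T)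
  | 0, h => by
      rw [htake_zero, visits_hist0 T (hsuffix h)]
      have hf : (hsuffix (a := a) (N := 0) h).first = h.last := rfl
      rw [hf]
      constructor
      · exact fun hv => Or.inl hv
      · rintro (hv | hv)
        · exact hv
        · refine ⟨Fin.last (a + 0), ?_⟩
          rw [state_last h]
          exact hv
  | N+1, h => by
      conv_lhs => rw [← snoc_init_self h]
      rw [visits_snoc, visits_split T h.init, htake_succ, hsuffix_succ, visits_snoc]
      tauto

theorem htake_hjoin : ∀ {N : ℕ} (h : Hist K C D a) (s : Fin N → C × D × K),
    htake (hjoin h s) = h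
  | 0, h, s => rfl
  | N+1, h, s => by
      rw [hjoin_succ, htake_snoc]
      exact htake_hjoin h (Fin.init s)

theorem hsuffix_hjoin : ∀ {N : ℕ} (h : Hist K C D a) (s : Fin N → C × D × K),
    hsuffix (hjoin h s) = ⟨h.last, s⟩
  | 0, h, s => by
      refine hist_ext rfl (funext fun r => r.elim0)
  | N+1, h, s => by
      rw [hjoin_succ, hsuffix_snoc, hsuffix_hjoin h (Fin.init s)]
      refine hist_ext rfl ?_
      show (Fin.snoc (Fin.init s) (s (Fin.last N)) : Fin (N+1) → C × D × K) = s
      exact Fin.snoc_init_self s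

theorem hjoin_split : ∀ {N : ℕ} (h : Hist K C D (a + N)),
    hjoin (htake h) (hsuffix h).steps = h
  | 0, h => rfl
  | N+1, h => by
      rw [hjoin_succ, hsuffix_succ, steps_snoc, Fin.init_snoc, Fin.snoc_last, htake_succ,
        hjoin_split h.init]
      exact snoc_init_self h

end Split

section SplitSums

variable {K I J C D : Type*} [Fintype K] [Fintype I] [Fintype J] [Fintype C] [Fintype D]
variable {a : ℕ}

def splitEquiv (a N : ℕ) : Hist K C D (a + N) ≃ Hist K C D a × (Fin N → C × D × K) where
  toFun h := (htake h, (hsuffix h).steps)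
  invFun p := hjoin p.1 p.2
  left_inv h := hjoin_split h
  right_inv p := by
    cases p with
    | mk h s =>
        have h1 := htake_hjoin (N := N) h s
        have h2 := hsuffix_hjoin (N := N) h s
        simp only [Prod.ext_iff]
        exact ⟨h1, by rw [h2]⟩

theorem sum_hist_split {α : Type*} [AddCommMonoid α] (a N : ℕ)
    (F : Hist K C D (a + N) → α) :
    ∑ h : Hist K C D (a + N), F h
      = ∑ h₁ : Hist K C D a, ∑ s : Fin N → C × D × K, F (hjoin h₁ s) :=
  calc ∑ h : Hist K C D (a + N), F h
      = ∑ p : Hist K C D a × (Fin N → C × D × K), F (hjoin p.1 p.2) :=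
        Fintype.sum_equiv (splitEquiv a N) _ _ fun h => by
          show F h = F (hjoin (htake h) (hsuffix h).steps)
          rw [hjoin_split]
    _ = _ := Fintype.sum_prod_type _

variable (G : Game K I J C D)

/-- strategy shifted by a prefix of signals. -/
def shift1 (σ : Strategy1 I C) (cs : List C) : Strategy1 I C := fun ys => σ (cs ++ ys)
def shift2 (τ : Strategy2 J D) (ds : List D) : Strategy2 J D := fun ys => τ (ds ++ ys)

theorem step_shift (σ : Strategy1 I C) (τ : Strategy2 J D) {N : ℕ}
    (h' : Hist K C D (a + N)) (x) :
    step G (shift1 σ (htake h').sig1) (shift2 τ (htake h').sig2) (hsuffix h') x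
      = step G σ τ h' x := by
  unfold step shift1 shift2
  rw [hsuffix_last, ← sig1_split, ← sig2_split]

theorem playProb_split (δ : FDist K) (σ : Strategy1 I C) (τ : Strategy2 J D) :
    ∀ (N : ℕ) (h : Hist K C D (a + N)),
      G.playProb δ σ τ (a + N) h = G.playProb δ σ τ a (htake h) *
        G.playProb (dirac (htake h).last) (shift1 σ (htake h).sig1)
          (shift2 τ (htake h).sig2) N (hsuffix h) := by
  intro N
  induction N with
  | zero =>
      intro h
      rw [htake_zero]
      have he : G.playProb (dirac h.last) (shift1 σ h.sig1) (shift2 τ h.sig2) 0 (hsuffix h)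
          = 1 := by
        rw [playProb_zero]
        show (dirac h.last).f h.last = 1
        exact dirac_f_self h.last
      rw [he, mul_one]
      rfl
  | succ N ih =>
      intro h
      obtain ⟨h', x, rfl⟩ : ∃ h' : Hist K C D (a + N), ∃ x, h = snoc h' x :=
        ⟨h.init, h.steps (Fin.last _), (snoc_init_self h).symm⟩
      rw [htake_snoc, hsuffix_snoc]
      have e1 : G.playProb δ σ τ (a + (N+1)) (snoc h' x)
          = G.playProb δ σ τ (a+N) h' * step G σ τ h' x := playProb_snoc G δ σ τ h' x
      rw [e1, ih h', playProb_snoc, step_shift]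
      ring

theorem sum_extensions (δ : FDist K) (σ : Strategy1 I C) (τ : Strategy2 J D)
    (N : ℕ) (h₁ : Hist K C D a) :
    ∑ s : Fin N → C × D × K, G.playProb δ σ τ (a + N) (hjoin h₁ s)
      = G.playProb δ σ τ a h₁ := by
  have key : ∀ s : Fin N → C × D × K, G.playProb δ σ τ (a + N) (hjoin h₁ s)
      = G.playProb δ σ τ a h₁ *
        G.playProb (dirac h₁.last) (shift1 σ h₁.sig1) (shift2 τ h₁.sig2) N ⟨h₁.last, s⟩ := by
    intro s
    rw [playProb_split, htake_hjoin, hsuffix_hjoin]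
  rw [Finset.sum_congr rfl fun s _ => key s, ← Finset.mul_sum,
    sum_steps_playProb, dirac_f_self, mul_one]

end SplitSums

end S17
namespace S17

open Finset HistL

variable {K I J C D : Type*} [Fintype K] [Fintype I] [Fintype J] [Fintype C] [Fintype D]
  [Nonempty I] [Nonempty J] [Nonempty C] [Nonempty D]
variable (G : Game K I J C D)

theorem uniform_f_mem {L : Finset K} (hL : L.Nonempty) {x : K} (hx : x ∈ L) :
    (uniform L hL).f x = (L.card : ℝ)⁻¹ := by
  simp only [uniform, if_pos hx]

theorem mass_by_first (δ : FDist K) (σ : Strategy1 I C) (τ : Strategy2 J D) (n : ℕ) (k : K) :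
    ∑ h : Hist K C D n, (if h.first = k then G.playProb δ σ τ n h else 0) = δ.f k := by
  rw [sum_hist]
  have key : ∀ k' : K, (∑ s : Fin n → C × D × K,
      if (⟨k', s⟩ : Hist K C D n).first = k then G.playProb δ σ τ n ⟨k', s⟩ else 0)
      = if k' = k then δ.f k' else 0 := by
    intro k'
    by_cases hk' : k' = k
    · rw [if_pos hk']
      have : ∀ s : Fin n → C × D × K,
          (if (⟨k', s⟩ : Hist K C D n).first = k then G.playProb δ σ τ n ⟨k', s⟩ else 0)
          = G.playProb δ σ τ n ⟨k', s⟩ := fun s => if_pos hk'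
      rw [Finset.sum_congr rfl fun s _ => this s]
      exact sum_steps_playProb G δ σ τ n k'
    · rw [if_neg hk']
      refine Finset.sum_eq_zero fun s _ => if_neg hk'
  rw [Finset.sum_congr rfl fun k' _ => key k']
  rw [Finset.sum_ite_eq' Finset.univ k (fun k' => δ.f k')]
  rw [if_pos (Finset.mem_univ k)]

theorem cylinder_mass (δ : FDist K) (σ : Strategy1 I C) (τ : Strategy2 J D) {a : ℕ} (N : ℕ)
    (g : Hist K C D a) :
    ∑ h : Hist K C D (a + N), (if htake h = g then G.playProb δ σ τ (a + N) h else 0)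
      = G.playProb δ σ τ a g := by
  rw [sum_hist_split]
  have key : ∀ h₁ : Hist K C D a, (∑ s : Fin N → C × D × K,
      if htake (hjoin h₁ s) = g then G.playProb δ σ τ (a + N) (hjoin h₁ s) else 0)
      = if h₁ = g then G.playProb δ σ τ a h₁ else 0 := by
    intro h₁
    by_cases h1g : h₁ = g
    · have : ∀ s : Fin N → C × D × K,
          (if htake (hjoin h₁ s) = g then G.playProb δ σ τ (a + N) (hjoin h₁ s) else 0)
          = G.playProb δ σ τ (a + N) (hjoin h₁ s) := fun s =>
        if_pos (by rw [htake_hjoin]; exact h1g)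
      rw [Finset.sum_congr rfl fun s _ => this s, sum_extensions, if_pos h1g]
    · have : ∀ s : Fin N → C × D × K,
          (if htake (hjoin h₁ s) = g then G.playProb δ σ τ (a + N) (hjoin h₁ s) else 0)
          = 0 := fun s => if_neg (by rw [htake_hjoin]; exact h1g)
      rw [Finset.sum_congr rfl fun s _ => this s, Finset.sum_const, smul_zero, if_neg h1g]
  rw [Finset.sum_congr rfl fun h₁ _ => key h₁]
  rw [Finset.sum_ite_eq' Finset.univ g (fun h₁ => G.playProb δ σ τ a h₁)]
  rw [if_pos (Finset.mem_univ g)]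

theorem reach_pos_of_hist {δ : FDist K} {σ : Strategy1 I C} {τ : Strategy2 J D} {n : ℕ}
    {h : Hist K C D n} (hv : h.visits G.T) (hp : 0 < G.playProb δ σ τ n h) :
    0 < G.reachProb δ σ τ n := by
  have hle : G.playProb δ σ τ n h ≤ G.reachProb δ σ τ n := by
    have : G.playProb δ σ τ n h = if h.visits G.T then G.playProb δ σ τ n h else 0 :=
      (if_pos hv).symm
    rw [this]
    refine Finset.single_le_sum (f := fun h' =>
      if h'.visits G.T then G.playProb δ σ τ n h' else 0) (fun h' _ => ?_) (Finset.mem_univ h)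
    by_cases hv' : h'.visits G.T <;>
      simp [hv', playProb_nonneg G δ σ τ n h']
  linarith

theorem not_LWin_of_bad (𝓡 : Set (Finset K)) (L : Finset K) {n r : ℕ} (h : Hist K C D n)
    (hT : ∀ m : Fin (n+1), (m : ℕ) < r → h.state m ∉ G.T)
    (hB : G.B1pseq L (h.sig1.take r) ∈ 𝓡) (hr1 : 1 ≤ r) :
    ¬ G.LWin 𝓡 L h := by
  rintro ⟨m, hmT, hmB⟩
  have hmr : r ≤ (m : ℕ) := by
    by_contra hlt
    exact hT m (by omega) hmT
  exact hmB r hr1 hmr hB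

variable (𝓡 : Set (Finset K))

/-- punishment: if `σ` plays an unsafe action at a consistent history, the
fully random strategy of player 2 bounds the `𝓛`-game payoff away from `1`. -/
theorem punish (M : Finset K) (hM : M.Nonempty) (σ : Strategy1 I C)
    {cs : List C} (hcons : sCons G σ cs) {i₀ : I} (hσ : 0 < (σ cs).f i₀)
    (hunsafe : i₀ ∉ SafeSet G 𝓡 (G.B1pseq M cs)) :
    ∃ q, 0 < q ∧ ∀ n, LWP G 𝓡 M (uniform M hM) σ tauR n ≤ 1 - q := by
  obtain ⟨c₀, hact, hin, hne⟩ := not_mem_SafeSet G 𝓡 hunsafe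
  obtain ⟨k₀, hk₀⟩ := hne
  rw [mem_B1p] at hk₀
  obtain ⟨l₀, hl₀mem, hl₀T, d₀, hp₀⟩ := hk₀
  obtain ⟨n₀, g, hsig, hfirst, hstates, hlast, hsp⟩ := run_of_mem_belief G M cs l₀ hl₀mem
  have hlen : cs.length = n₀ := by rw [← hsig, sig1_length]
  set gp : Hist K C D (n₀ + 1) := snoc g (c₀, d₀, k₀) with hgp
  have hstatesT : ∀ m : Fin (n₀ + 1), g.state m ∉ G.T := by
    intro m
    rcases hstates m (Nat.lt_succ_iff.mp m.isLt) with hT | ⟨hmn, _⟩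
    · exact hT
    · have : m = Fin.last n₀ := Fin.ext hmn
      rw [this, state_last, hlast]
      exact hl₀T
  have hq : 0 < G.playProb (uniform M hM) σ tauR (n₀ + 1) gp := by
    refine playProb_pos_of_run G _ σ tauR (fun ds j => tauR_pos ds j) (n₀+1) gp ?_ ?_ ?_
    · show 0 < (uniform M hM).f gp.first
      have : gp.first = g.first := rfl
      rw [this]
      exact uniform_f_pos hM hfirst
    · refine stepsPos_snoc G hsp ?_
      rw [hlast]
      show 0 < G.p l₀ (G.act₁ c₀) (G.act₂ d₀) (c₀, d₀, k₀)
      exact hp₀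
    · have : gp.sig1 = cs ++ [c₀] := by rw [hgp, sig1_snoc, hsig]
      rw [this, sCons_concat]
      refine ⟨hcons, ?_⟩
      rw [hact]
      exact hσ
  refine ⟨G.playProb (uniform M hM) σ tauR (n₀ + 1) gp, hq, ?_⟩
  have main : ∀ m : ℕ, LWP G 𝓡 M (uniform M hM) σ tauR ((n₀ + 1) + m)
      ≤ 1 - G.playProb (uniform M hM) σ tauR (n₀ + 1) gp := by
    intro m
    have hnot : ∀ h : Hist K C D ((n₀ + 1) + m), htake h = gp → ¬ G.LWin 𝓡 M h := by
      intro h hht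
      refine not_LWin_of_bad G 𝓡 M h (r := n₀ + 1) ?_ ?_ (by omega)
      · intro mm hmm
        have hmm2 : (mm : ℕ) < n₀ + 1 + 1 := by omega
        have : h.state mm = (htake h).state ⟨(mm : ℕ), hmm2⟩ := by
          rw [state_htake]
          congr 1
        rw [this, hht]
        -- state of gp at index < n₀+1 is a state of g
        have hlt : (mm : ℕ) < n₀ + 1 := hmm
        have : gp.state ⟨(mm : ℕ), hmm2⟩ =
            g.state ⟨(mm : ℕ), hlt⟩ := by
          have he : (⟨(mm : ℕ), hmm2⟩ : Fin (n₀ + 2)) =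
              (⟨(mm : ℕ), hlt⟩ : Fin (n₀ + 1)).castSucc := Fin.ext rfl
          rw [hgp, he, state_snoc_castSucc]
        rw [this]
        exact hstatesT _
      · have h1 : h.sig1.take (n₀ + 1) = (htake h).sig1 := by
          rw [sig1_split (h := h)]
          exact List.take_left' (sig1_length _)
        rw [h1, hht]
        have h2 : gp.sig1 = cs ++ [c₀] := by rw [hgp, sig1_snoc, hsig]
        rw [h2, B1pseq_concat]
        exact hin
    -- sum bound
    have hpt : ∀ h : Hist K C D ((n₀ + 1) + m),
        (if G.LWin 𝓡 M h then G.playProb (uniform M hM) σ tauR _ h else 0)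
        ≤ G.playProb (uniform M hM) σ tauR _ h -
          (if htake h = gp then G.playProb (uniform M hM) σ tauR _ h else 0) := by
      intro h
      by_cases hw : G.LWin 𝓡 M h
      · rw [if_pos hw, if_neg (fun hht => hnot h hht hw)]
        simp
      · rw [if_neg hw]
        by_cases hht : htake h = gp
        · rw [if_pos hht]; simp
        · rw [if_neg hht]
          have := playProb_nonneg G (uniform M hM) σ tauR ((n₀+1)+m) h
          linarith
    have hsum := Finset.sum_le_sum fun h (_ : h ∈ Finset.univ) => hpt h
    rw [Finset.sum_sub_distrib, playProb_mass, cylinder_mass] at hsum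
    exact hsum
  intro n
  obtain ⟨m, hm⟩ : ∃ m, max n (n₀ + 1) = (n₀ + 1) + m :=
    ⟨max n (n₀ + 1) - (n₀ + 1), by omega⟩
  calc LWP G 𝓡 M (uniform M hM) σ tauR n
      ≤ LWP G 𝓡 M (uniform M hM) σ tauR ((n₀ + 1) + m) := by
        rw [← hm]; exact LWP_mono G 𝓡 M _ σ tauR (le_max_left _ _)
    _ ≤ _ := main m

/-- the set of safe actions at a belief outside `𝓡` is nonempty. -/
theorem safe_nonempty
    (hcl : ∀ (L : Finset K) (hL : L.Nonempty),
      (∃ τ, ∀ σ, G.Lval 𝓡 L (uniform L hL) σ τ < 1) → L ∈ 𝓡)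
    {M : Finset K} (hM : M.Nonempty) (hM𝓡 : M ∉ 𝓡) :
    (SafeSet G 𝓡 M).Nonempty := by
  by_contra hemp
  rw [Finset.not_nonempty_iff_eq_empty] at hemp
  apply hM𝓡
  apply hcl M hM
  refine ⟨tauR, fun σ => ?_⟩
  obtain ⟨i₀, hi₀⟩ := FDist.exists_pos (σ [])
  have hunsafe : i₀ ∉ SafeSet G 𝓡 (G.B1pseq M []) := by
    rw [B1pseq_nil, hemp]
    exact Finset.notMem_empty i₀
  obtain ⟨q, hq, hbound⟩ := punish G 𝓡 M hM σ (sCons_nil G σ) hi₀ hunsafe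
  have h0 : (0:ℝ) ≤ 1 - q := le_trans (LWP_nonneg G 𝓡 M (uniform M hM) σ tauR 0) (hbound 0)
  have := Lval_le G 𝓡 M (uniform M hM) σ tauR h0 hbound
  linarith

/-- core positivity: from any belief outside `𝓡`, from any state of the
belief, the belief strategy reaches the target with positive probability
against any strategy of player 2. -/
theorem spoil
    (hcl : ∀ (L : Finset K) (hL : L.Nonempty),
      (∃ τ, ∀ σ, G.Lval 𝓡 L (uniform L hL) σ τ < 1) → L ∈ 𝓡)
    {M : Finset K} (hM : M.Nonempty) (hM𝓡 : M ∉ 𝓡) {k : K} (hk : k ∈ M)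
    (τ' : Strategy2 J D) : ∃ n, 0 < G.reachProb (dirac k) (sigStar G 𝓡 M) τ' n := by
  by_contra hno
  push_neg at hno
  have hzero : ∀ n h, h.visits G.T → G.playProb (dirac k) (sigStar G 𝓡 M) τ' n h = 0 := by
    intro n h hv
    by_contra hpp
    have hpos : 0 < G.playProb (dirac k) (sigStar G 𝓡 M) τ' n h :=
      lt_of_le_of_ne (playProb_nonneg G _ _ _ n h) (Ne.symm hpp)
    exact absurd (reach_pos_of_hist G hv hpos) (not_lt.mpr (hno n))
  apply hM𝓡
  apply hcl M hM
  refine ⟨mixStrat G τ' tauR, fun σ => ?_⟩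
  by_cases hA : ∃ cs, sCons G σ cs ∧ ∃ i₀, 0 < (σ cs).f i₀ ∧
      i₀ ∉ SafeSet G 𝓡 (G.B1pseq M cs)
  · obtain ⟨cs, hcons, i₀, hσ, huns⟩ := hA
    obtain ⟨q, hq, hbound⟩ := punish G 𝓡 M hM σ hcons hσ huns
    have hb2 : ∀ n, LWP G 𝓡 M (uniform M hM) σ (mixStrat G τ' tauR) n ≤ 1 - q / 2 := by
      intro n
      rw [LWP_mixStrat]
      have h1 := LWP_le_one G 𝓡 M (uniform M hM) σ τ' n
      have h2 := hbound n
      linarith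
    have h0 : (0:ℝ) ≤ 1 - q / 2 :=
      le_trans (LWP_nonneg G 𝓡 M (uniform M hM) σ (mixStrat G τ' tauR) 0) (hb2 0)
    have := Lval_le G 𝓡 M (uniform M hM) σ (mixStrat G τ' tauR) h0 hb2
    have hq2 : 0 < q / 2 := by linarith
    linarith
  · push_neg at hA
    have hB : ∀ cs, sCons G σ cs → ∀ i, 0 < (σ cs).f i →
        i ∈ SafeSet G 𝓡 (G.B1pseq M cs) := hA
    have hcard : (0:ℝ) < (M.card : ℝ)⁻¹ := by
      have : (0:ℝ) < (M.card : ℝ) := by exact_mod_cast Finset.card_pos.mpr hM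
      positivity
    have h1 : ∀ n, LWP G 𝓡 M (uniform M hM) σ τ' n ≤ 1 - (M.card : ℝ)⁻¹ := by
      intro n
      have hpt : ∀ h : Hist K C D n,
          (if G.LWin 𝓡 M h then G.playProb (uniform M hM) σ τ' n h else 0)
          ≤ G.playProb (uniform M hM) σ τ' n h -
            (if h.first = k then G.playProb (uniform M hM) σ τ' n h else 0) := by
        intro h
        by_cases hw : G.LWin 𝓡 M h
        · rw [if_pos hw]
          by_cases hfk : h.first = k
          · rw [if_pos hfk]
            have hz : G.playProb (uniform M hM) σ τ' n h = 0 := by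
              rw [playProb_eq_first_mul]
              have hz2 : G.playProb (dirac h.first) σ τ' n h = 0 := by
                by_contra hpp
                have hpos : 0 < G.playProb (dirac h.first) σ τ' n h :=
                  lt_of_le_of_ne (playProb_nonneg G _ _ _ n h) (Ne.symm hpp)
                rw [hfk] at hpos
                have htr := transfer G 𝓡 hB (dirac k) τ' n h hpos
                exact absurd (hzero n h (visits_of_LWin G hw)) (ne_of_gt htr)
              rw [hz2, mul_zero]
            rw [hz]
            simp
          · rw [if_neg hfk]
            simp
        · rw [if_neg hw]
          by_cases hfk : h.first = k
          · rw [if_pos hfk]; simp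
          · rw [if_neg hfk]
            have := playProb_nonneg G (uniform M hM) σ τ' n h
            linarith
      have hsum := Finset.sum_le_sum fun h (_ : h ∈ Finset.univ) => hpt h
      rw [Finset.sum_sub_distrib, playProb_mass, mass_by_first, uniform_f_mem hM hk] at hsum
      exact hsum
    have hb2 : ∀ n, LWP G 𝓡 M (uniform M hM) σ (mixStrat G τ' tauR) n
        ≤ 1 - (M.card : ℝ)⁻¹ / 2 := by
      intro n
      rw [LWP_mixStrat]
      have h2 := LWP_le_one G 𝓡 M (uniform M hM) σ tauR n
      have h3 := h1 n
      linarith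
    have h0 : (0:ℝ) ≤ 1 - (M.card : ℝ)⁻¹ / 2 :=
      le_trans (LWP_nonneg G 𝓡 M (uniform M hM) σ (mixStrat G τ' tauR) 0) (hb2 0)
    have := Lval_le G 𝓡 M (uniform M hM) σ (mixStrat G τ' tauR) h0 hb2
    linarith

end S17
namespace S17

open Finset HistL Topology

instance FDist.instTop (X : Type*) [Fintype X] : TopologicalSpace (FDist X) :=
  TopologicalSpace.induced FDist.f inferInstance

theorem FDist.injective_f {X : Type*} [Fintype X] :
    Function.Injective (FDist.f : FDist X → X → ℝ) := by
  rintro ⟨f1, h1, h2⟩ ⟨f2, h3, h4⟩ h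
  simpa using h

theorem FDist.isEmbedding_f {X : Type*} [Fintype X] :
    IsEmbedding (FDist.f : FDist X → X → ℝ) := ⟨⟨rfl⟩, FDist.injective_f⟩

theorem FDist.range_f (X : Type*) [Fintype X] :
    Set.range (FDist.f : FDist X → X → ℝ) = stdSimplex ℝ X := by
  ext g
  constructor
  · rintro ⟨δ, rfl⟩
    exact ⟨δ.nonneg, δ.sum_one⟩
  · rintro ⟨hg1, hg2⟩
    exact ⟨⟨g, hg1, hg2⟩, rfl⟩

instance FDist.instCompact (X : Type*) [Fintype X] : CompactSpace (FDist X) := by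
  refine ⟨?_⟩
  rw [FDist.isEmbedding_f.isCompact_iff, Set.image_univ, FDist.range_f]
  exact isCompact_stdSimplex ℝ X

instance FDist.instNonempty (X : Type*) [Fintype X] [Nonempty X] : Nonempty (FDist X) :=
  ⟨uniform Finset.univ Finset.univ_nonempty⟩

theorem FDist.continuous_eval {X : Type*} [Fintype X] (x : X) :
    Continuous (fun δ : FDist X => δ.f x) :=
  (continuous_apply x).comp continuous_induced_dom

variable {K I J C D : Type*} [Fintype K] [Fintype I] [Fintype J] [Fintype C] [Fintype D]
  [Nonempty K] [Nonempty I] [Nonempty J] [Nonempty C] [Nonempty D]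
variable (G : Game K I J C D)

theorem continuous_playProb (δ : FDist K) (σ : Strategy1 I C) :
    ∀ (n : ℕ) (h : Hist K C D n),
      Continuous fun τ : Strategy2 J D => G.playProb δ σ τ n h := by
  intro n
  induction n with
  | zero => intro h; exact continuous_const
  | succ n ih =>
      intro h
      show Continuous fun τ : Strategy2 J D =>
        G.playProb δ σ τ n h.init * step G σ τ h.init (h.steps (Fin.last n))
      refine (ih h.init).mul ?_
      refine continuous_finset_sum _ fun i _ => continuous_finset_sum _ fun j _ => ?_
      have hc : Continuous fun τ : Strategy2 J D => (τ h.init.sig2).f j :=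
        (FDist.continuous_eval j).comp (continuous_apply h.init.sig2)
      exact (continuous_const.mul hc).mul continuous_const

theorem continuous_reachProb (δ : FDist K) (σ : Strategy1 I C) (n : ℕ) :
    Continuous fun τ : Strategy2 J D => G.reachProb δ σ τ n := by
  unfold Game.reachProb
  refine continuous_finset_sum _ fun h _ => ?_
  by_cases hv : h.visits G.T
  · simp only [if_pos hv]
    exact continuous_playProb G δ σ n h
  · simp only [if_neg hv]
    exact continuous_const

variable (𝓡 : Set (Finset K))

theorem uniform_reach
    (hcl : ∀ (L : Finset K) (hL : L.Nonempty),
      (∃ τ, ∀ σ, G.Lval 𝓡 L (uniform L hL) σ τ < 1) → L ∈ 𝓡)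
    {M : Finset K} (hM𝓡 : M ∉ 𝓡) {k : K} (hk : k ∈ M) :
    ∃ N ρ, 0 < ρ ∧ ∀ τ' : Strategy2 J D,
      ρ ≤ G.reachProb (dirac k) (sigStar G 𝓡 M) τ' N := by
  have hM : M.Nonempty := ⟨k, hk⟩
  have hopen : ∀ n : ℕ, IsOpen {τ' : Strategy2 J D |
      0 < G.reachProb (dirac k) (sigStar G 𝓡 M) τ' n} := fun n =>
    isOpen_lt continuous_const (continuous_reachProb G (dirac k) (sigStar G 𝓡 M) n)
  have hcover : (Set.univ : Set (Strategy2 J D)) ⊆ ⋃ n : ℕ,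
      {τ' | 0 < G.reachProb (dirac k) (sigStar G 𝓡 M) τ' n} := by
    intro τ' _
    obtain ⟨n, hn⟩ := spoil G 𝓡 hcl hM hM𝓡 hk τ'
    exact Set.mem_iUnion.mpr ⟨n, hn⟩
  obtain ⟨t, ht⟩ := IsCompact.elim_finite_subcover isCompact_univ _ hopen hcover
  set N := t.sup id with hN
  have hposN : ∀ τ' : Strategy2 J D, 0 < G.reachProb (dirac k) (sigStar G 𝓡 M) τ' N := by
    intro τ'
    have hmem := ht (Set.mem_univ τ')
    rw [Set.mem_iUnion₂] at hmem
    obtain ⟨n, hnt, hn⟩ := hmem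
    exact lt_of_lt_of_le hn
      (reachProb_mono G _ _ _ (Finset.le_sup (f := id) hnt))
  obtain ⟨τ₀, -, hτ₀⟩ := IsCompact.exists_isMinOn isCompact_univ Set.univ_nonempty
    (continuous_reachProb G (dirac k) (sigStar G 𝓡 M) N).continuousOn
  refine ⟨N, G.reachProb (dirac k) (sigStar G 𝓡 M) τ₀ N, hposN τ₀, fun τ' => ?_⟩
  exact hτ₀ (Set.mem_univ τ')

/-- uniform positive reachability over all pairs (belief, state). -/
theorem uniform_reach_all
    (hcl : ∀ (L : Finset K) (hL : L.Nonempty),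
      (∃ τ, ∀ σ, G.Lval 𝓡 L (uniform L hL) σ τ < 1) → L ∈ 𝓡) :
    ∃ N ρ, 0 < ρ ∧ ∀ (M : Finset K) (k : K), k ∈ M → M ∉ 𝓡 →
      ∀ τ' : Strategy2 J D, ρ ≤ G.reachProb (dirac k) (sigStar G 𝓡 M) τ' N := by
  have hch : ∀ p : Finset K × K, ∃ N ρ, 0 < ρ ∧ (p.2 ∈ p.1 → p.1 ∉ 𝓡 →
      ∀ τ' : Strategy2 J D, ρ ≤ G.reachProb (dirac p.2) (sigStar G 𝓡 p.1) τ' N) := by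
    intro p
    by_cases hp : p.2 ∈ p.1 ∧ p.1 ∉ 𝓡
    · obtain ⟨N, ρ, h1, h2⟩ := uniform_reach G 𝓡 hcl hp.2 hp.1
      exact ⟨N, ρ, h1, fun _ _ => h2⟩
    · exact ⟨0, 1, one_pos, fun h1 h2 => absurd ⟨h1, h2⟩ hp⟩
  choose Nf ρf hρpos hbound using hch
  refine ⟨Finset.univ.sup Nf, Finset.univ.inf' Finset.univ_nonempty ρf, ?_, ?_⟩
  · rw [Finset.lt_inf'_iff]
    exact fun p _ => hρpos p
  · intro M k hkM hM𝓡 τ'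
    calc Finset.univ.inf' Finset.univ_nonempty ρf ≤ ρf (M, k) :=
          Finset.inf'_le _ (Finset.mem_univ _)
      _ ≤ G.reachProb (dirac k) (sigStar G 𝓡 M) τ' (Nf (M, k)) :=
          hbound (M, k) hkM hM𝓡 τ'
      _ ≤ _ := reachProb_mono G _ _ _ (Finset.le_sup (Finset.mem_univ _))

end S17
namespace S17

open Finset HistL

variable {K I J C D : Type*} [Fintype K] [Fintype I] [Fintype J] [Fintype C] [Fintype D]
  [Nonempty K] [Nonempty I] [Nonempty J] [Nonempty C] [Nonempty D]
variable (G : Game K I J C D) (𝓡 : Set (Finset K))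

theorem reach_dirac_eq (k : K) (σ : Strategy1 I C) (τ : Strategy2 J D) (N : ℕ) :
    G.reachProb (dirac k) σ τ N = ∑ s : Fin N → C × D × K,
      (if (⟨k, s⟩ : Hist K C D N).visits G.T
        then G.playProb (dirac k) σ τ N ⟨k, s⟩ else 0) := by
  unfold Game.reachProb
  rw [sum_hist]
  refine Finset.sum_eq_single k (fun k' _ hk' => ?_) (fun hk => absurd (Finset.mem_univ k) hk)
  refine Finset.sum_eq_zero fun s _ => ?_
  have hz : G.playProb (dirac k) σ τ N ⟨k', s⟩ = 0 := by
    rw [playProb_eq_first_mul]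
    have hd : (dirac k).f (⟨k', s⟩ : Hist K C D N).first = 0 := by
      show (dirac k).f k' = 0
      simp [dirac, hk']
    rw [hd, zero_mul]
  rw [hz, ite_self]

theorem noVisit_dirac_eq (k : K) (σ : Strategy1 I C) (τ : Strategy2 J D) (N : ℕ) :
    ∑ s : Fin N → C × D × K, (if (⟨k, s⟩ : Hist K C D N).visits G.T
        then 0 else G.playProb (dirac k) σ τ N ⟨k, s⟩)
      = 1 - G.reachProb (dirac k) σ τ N := by
  rw [reach_dirac_eq]
  have hmass : ∑ s : Fin N → C × D × K, G.playProb (dirac k) σ τ N ⟨k, s⟩ = 1 := by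
    rw [sum_steps_playProb, dirac_f_self]
  rw [eq_sub_iff_add_eq, ← Finset.sum_add_distrib, ← hmass]
  refine Finset.sum_congr rfl fun s _ => ?_
  by_cases hv : (⟨k, s⟩ : Hist K C D N).visits G.T <;> simp [hv]

theorem noVisit_le_one (δ : FDist K) (σ : Strategy1 I C) (τ : Strategy2 J D) (n : ℕ) :
    noVisitProb G δ σ τ n ≤ 1 := by
  have h := reach_add_noVisit G δ σ τ n
  have h2 := reachProb_nonneg G δ σ τ n
  linarith

theorem renewal_block
    (hcl : ∀ (L : Finset K) (hL : L.Nonempty),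
      (∃ τ, ∀ σ, G.Lval 𝓡 L (uniform L hL) σ τ < 1) → L ∈ 𝓡)
    {L : Finset K} (hL : L.Nonempty) (hL𝓡 : L ∉ 𝓡) (τ : Strategy2 J D) {N : ℕ} {ρ : ℝ}
    (hρ1 : ρ ≤ 1)
    (hU : ∀ (M : Finset K) (k : K), k ∈ M → M ∉ 𝓡 →
      ∀ τ' : Strategy2 J D, ρ ≤ G.reachProb (dirac k) (sigStar G 𝓡 M) τ' N)
    (a : ℕ) :
    noVisitProb G (uniform L hL) (sigStar G 𝓡 L) τ (a + N)
      ≤ (1 - ρ) * noVisitProb G (uniform L hL) (sigStar G 𝓡 L) τ a := by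
  unfold noVisitProb
  rw [sum_hist_split, Finset.mul_sum]
  refine Finset.sum_le_sum fun h₁ _ => ?_
  by_cases hv₁ : h₁.visits G.T
  · have hzz : ∀ s : Fin N → C × D × K,
        (if (hjoin h₁ s).visits G.T then 0
          else G.playProb (uniform L hL) (sigStar G 𝓡 L) τ (a + N) (hjoin h₁ s)) = 0 :=
      fun s => if_pos ((visits_split G.T _).2 (Or.inl (by rwa [htake_hjoin])))
    rw [Finset.sum_congr rfl fun s _ => hzz s, Finset.sum_const, smul_zero, if_pos hv₁,
      mul_zero]
  · rw [if_neg hv₁]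
    have hsplit : ∀ s : Fin N → C × D × K,
        G.playProb (uniform L hL) (sigStar G 𝓡 L) τ (a + N) (hjoin h₁ s)
          = G.playProb (uniform L hL) (sigStar G 𝓡 L) τ a h₁ *
            G.playProb (dirac h₁.last) (shift1 (sigStar G 𝓡 L) h₁.sig1)
              (shift2 τ h₁.sig2) N ⟨h₁.last, s⟩ := by
      intro s
      rw [playProb_split, htake_hjoin, hsuffix_hjoin]
    have hvis : ∀ s : Fin N → C × D × K,
        ((hjoin h₁ s).visits G.T ↔ (⟨h₁.last, s⟩ : Hist K C D N).visits G.T) := by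
      intro s
      rw [visits_split G.T (hjoin h₁ s), htake_hjoin, hsuffix_hjoin]
      exact ⟨fun h => h.resolve_left hv₁, fun h => Or.inr h⟩
    rcases eq_or_lt_of_le (playProb_nonneg G (uniform L hL) (sigStar G 𝓡 L) τ a h₁)
      with hpp | hpp
    · -- zero mass
      have hzz : ∀ s : Fin N → C × D × K,
          (if (hjoin h₁ s).visits G.T then 0
            else G.playProb (uniform L hL) (sigStar G 𝓡 L) τ (a + N) (hjoin h₁ s)) = 0 := by
        intro s
        rw [hsplit s, ← hpp, zero_mul, ite_self]
      rw [Finset.sum_congr rfl fun s _ => hzz s, Finset.sum_const, smul_zero, ← hpp,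
        mul_zero]
    · -- positive mass: use safety, membership, and the uniform bound
      have hnoT : ∀ m : Fin (a+1), (m : ℕ) < a → h₁.state m ∉ G.T :=
        fun m _ hT => hv₁ ⟨m, hT⟩
      have hδsupp : ∀ k', 0 < (uniform L hL).f k' → k' ∈ L :=
        fun k' hk' => (uniform_f_pos_iff hL k').mp hk'
      have hmemM : h₁.last ∈ G.B1pseq L h₁.sig1 :=
        last_mem_belief G (uniform L hL) (sigStar G 𝓡 L) τ hδsupp a h₁ hpp hnoT
      have hMnot : G.B1pseq L h₁.sig1 ∉ 𝓡 :=
        sigStar_safety G 𝓡 (fun M' hM'ne hM'n => safe_nonempty G 𝓡 hcl hM'ne hM'n)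
          hL𝓡 (uniform L hL) hδsupp τ a h₁ hpp hnoT
      have hshift : shift1 (sigStar G 𝓡 L) h₁.sig1 = sigStar G 𝓡 (G.B1pseq L h₁.sig1) := by
        unfold shift1
        exact sigStar_shift G 𝓡 L h₁.sig1
      have hreach : ρ ≤ G.reachProb (dirac h₁.last)
          (shift1 (sigStar G 𝓡 L) h₁.sig1) (shift2 τ h₁.sig2) N := by
        rw [hshift]
        exact hU _ _ hmemM hMnot _
      have hkey : ∑ s : Fin N → C × D × K,
          (if (hjoin h₁ s).visits G.T then 0
            else G.playProb (uniform L hL) (sigStar G 𝓡 L) τ (a + N) (hjoin h₁ s))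
          = G.playProb (uniform L hL) (sigStar G 𝓡 L) τ a h₁ *
            (1 - G.reachProb (dirac h₁.last) (shift1 (sigStar G 𝓡 L) h₁.sig1)
              (shift2 τ h₁.sig2) N) := by
        rw [← noVisit_dirac_eq, Finset.mul_sum]
        refine Finset.sum_congr rfl fun s _ => ?_
        by_cases hv : (⟨h₁.last, s⟩ : Hist K C D N).visits G.T
        · rw [if_pos ((hvis s).mpr hv), if_pos hv, mul_zero]
        · rw [if_neg (fun hh => hv ((hvis s).mp hh)), if_neg hv, hsplit s]
      rw [hkey]
      rw [mul_comm (1 - ρ) _]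
      refine mul_le_mul_of_nonneg_left ?_ hpp.le
      linarith

theorem renewal_iter
    (hcl : ∀ (L : Finset K) (hL : L.Nonempty),
      (∃ τ, ∀ σ, G.Lval 𝓡 L (uniform L hL) σ τ < 1) → L ∈ 𝓡)
    {L : Finset K} (hL : L.Nonempty) (hL𝓡 : L ∉ 𝓡) (τ : Strategy2 J D) {N : ℕ} {ρ : ℝ}
    (hρ0 : 0 ≤ ρ) (hρ1 : ρ ≤ 1)
    (hU : ∀ (M : Finset K) (k : K), k ∈ M → M ∉ 𝓡 →
      ∀ τ' : Strategy2 J D, ρ ≤ G.reachProb (dirac k) (sigStar G 𝓡 M) τ' N) :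
    ∀ m : ℕ, noVisitProb G (uniform L hL) (sigStar G 𝓡 L) τ (m * N) ≤ (1 - ρ) ^ m := by
  intro m
  induction m with
  | zero =>
      rw [pow_zero, Nat.zero_mul]
      exact noVisit_le_one G _ _ _ 0
  | succ m ih =>
      have he : (m + 1) * N = m * N + N := Nat.succ_mul m N
      rw [he, pow_succ, mul_comm ((1-ρ)^m) (1-ρ)]
      calc noVisitProb G (uniform L hL) (sigStar G 𝓡 L) τ (m * N + N)
          ≤ (1 - ρ) * noVisitProb G (uniform L hL) (sigStar G 𝓡 L) τ (m * N) :=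
            renewal_block G 𝓡 hcl hL hL𝓡 τ hρ1 hU (m * N)
        _ ≤ (1 - ρ) * (1 - ρ) ^ m := by
            refine mul_le_mul_of_nonneg_left ih (by linarith)

/-- main result in packaged form. -/
theorem main
    (hcl : ∀ (L : Finset K) (hL : L.Nonempty),
      (∃ τ, ∀ σ, G.Lval 𝓡 L (uniform L hL) σ τ < 1) → L ∈ 𝓡)
    {L : Finset K} (hL : L.Nonempty) (hL𝓡 : L ∉ 𝓡) (τ : Strategy2 J D) :
    G.val (uniform L hL) (sigStar G 𝓡 L) τ = 1 := by
  obtain ⟨N, ρ, hρ, hU⟩ := uniform_reach_all G 𝓡 hcl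
  have hk' := hL
  obtain ⟨k, hk⟩ := hk'
  have hρ1 : ρ ≤ 1 := le_trans (hU L k hk hL𝓡 tauR) (reachProb_le_one G _ _ _ N)
  have hiter := renewal_iter G 𝓡 hcl hL hL𝓡 τ hρ.le hρ1 hU
  refine le_antisymm (val_le_one G _ _ _) ?_
  have hbound : ∀ m : ℕ, 1 - (1 - ρ) ^ m ≤ G.val (uniform L hL) (sigStar G 𝓡 L) τ := by
    intro m
    have h1 := reach_add_noVisit G (uniform L hL) (sigStar G 𝓡 L) τ (m * N)
    have h2 := hiter m
    have h3 := reach_le_val G (uniform L hL) (sigStar G 𝓡 L) τ (m * N)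
    linarith
  have htend : Filter.Tendsto (fun m : ℕ => 1 - (1 - ρ) ^ m) Filter.atTop (nhds 1) := by
    have h0 : Filter.Tendsto (fun m : ℕ => (1 - ρ) ^ m) Filter.atTop (nhds 0) :=
      tendsto_pow_atTop_nhds_zero_of_lt_one (by linarith) (by linarith)
    have h1 := Filter.Tendsto.sub (tendsto_const_nhds (x := (1:ℝ))) h0
    simpa using h1
  exact le_of_tendsto' htend hbound

end S17
variable {K I J C D : Type*} [Fintype K] [Fintype I] [Fintype J] [Fintype C] [Fintype D]
  [Nonempty K] [Nonempty I] [Nonempty J] [Nonempty C] [Nonempty D]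

/-- if `𝓛` is upward-closed, every support in `𝓛` is positively
winning for player 2 in the original game, and every support positively winning
for player 2 in the `𝓛`-game already belongs to `𝓛`, then every support outside
`𝓛` is almost-surely winning for player 1 in the original game. -/
theorem Lgame_no_new_positive2_implies_almostsure1 (G : Game K I J C D)
    (𝓛 : Set (Finset K))
    (hup : ∀ L ∈ 𝓛, ∀ L' : Finset K, L ⊆ L' → L' ∈ 𝓛)
    (hpos : ∀ L ∈ 𝓛, ∀ hL : L.Nonempty, G.PositiveWin2 (uniform L hL))
    (hclosed : ∀ (L : Finset K) (hL : L.Nonempty),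
      (∃ τ, ∀ σ, G.Lval 𝓛 L (uniform L hL) σ τ < 1) → L ∈ 𝓛) :
    ∀ (L : Finset K) (hL : L.Nonempty), L ∉ 𝓛 →
      G.AlmostSureWin1 (uniform L hL) := by
  intro L hL hLmem
  exact ⟨S17.sigStar G 𝓛 L, fun τ => S17.main G 𝓛 hclosed hL hLmem τ⟩
end
end
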